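/- arXiv:2001.04411 — 4 statements merged into one kernel-verified Lean document; each statement's English description precedes it below -/
import Mathlib

section
/- With the setup of ≤_O: a coset representative w ∈ W(I,J,K) has a unique minimal-length element in its coset w W_K W_{I,J} (i.e. |Min(w)| = 1) if and only if w ∈ W^{I∪J∪K}. -/
open List CoxeterSystem

namespace SEAux

private lemma zmod2_add_self : ∀ a : ZMod 2, a + a = 0 := by decide

private lemma zmod2_cases : ∀ a : ZMod 2, a = 0 ∨ a = 1 := by decide

private lemma sum_range_add' (g : ℕ → ZMod 2) (m n : ℕ) :
    ∑ l ∈ Finset.range (m + n), g l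
      = (∑ l ∈ Finset.range m, g l) + ∑ l ∈ Finset.range n, g (m + l) := by
  induction n with
  | zero => simp
  | succ n ih => rw [← Nat.add_assoc, Finset.sum_range_succ, ih, Finset.sum_range_succ]; ring

variable {B : Type*} {W : Type*} [Group W] {M : CoxeterMatrix B} (cs : CoxeterSystem M W)

local prefix:100 "s" => cs.simple
local prefix:100 "π" => cs.wordProd
local prefix:100 "ℓ" => cs.length
local prefix:100 "ris" => cs.rightInvSeq

noncomputable def chi (t r : W) : ZMod 2 := by classical exact if t = r then 1 else 0

omit [Group W] in
lemma chi_congr {t r t' r' : W} (h : (t = r) ↔ (t' = r')) : chi t r = chi t' r' := by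
  unfold chi
  split_ifs with h1 h2 h2 <;> tauto

omit [Group W] in
lemma chi_congr' {t r r' : W} (h : r = r') : chi t r = chi t r' := by rw [h]

lemma conj_eq_iff (a b t r : W) : a * t * b = r ↔ t = a⁻¹ * r * b⁻¹ := by
  constructor
  · intro h; rw [← h]; group
  · intro h; rw [h]; group

lemma chi_conj (a b t r : W) : chi (a * t * b) r = chi t (a⁻¹ * r * b⁻¹) :=
  chi_congr (conj_eq_iff a b t r)

noncomputable def sePerm (i : B) : Equiv.Perm (W × ZMod 2) :=
  Function.Involutive.toPerm
    (fun p => (s i * p.1 * s i, p.2 + chi p.1 (s i)))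
    (by
      intro p
      have h1 : s i * (s i * p.1 * s i) * s i = p.1 := by
        simp [← mul_assoc, cs.simple_mul_simple_self]
      refine Prod.ext h1 ?_
      have h2 : chi (s i * p.1 * s i) (s i) = chi p.1 (s i) := by
        rw [chi_conj]
        apply chi_congr'
        rw [cs.inv_simple]
        simp [← mul_assoc, cs.simple_mul_simple_self]
      simp only [h2]
      show p.2 + chi p.1 (s i) + chi p.1 (s i) = p.2
      rw [add_assoc, zmod2_add_self, add_zero])

lemma sePerm_apply (i : B) (p : W × ZMod 2) :
    sePerm cs i p = (s i * p.1 * s i, p.2 + chi p.1 (s i)) := rfl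

lemma inv_pow_mul_simple (i i' : B) (k : ℕ) :
    ((s i * s i') ^ k)⁻¹ * s i' = s i' * (s i * s i') ^ k := by
  induction k with
  | zero => simp
  | succ k ih =>
    rw [pow_succ, mul_inv_rev, mul_assoc, ih]
    have h1 : (s i * s i')⁻¹ * s i' = s i' * (s i * s i') := by
      rw [mul_inv_rev, cs.inv_simple, cs.inv_simple]; group
    rw [← mul_assoc, h1, mul_assoc]
    congr 1
    rw [← pow_succ, ← pow_succ']

lemma sePerm_pow (i i' : B) (k : ℕ) (t : W) (c : ZMod 2) :
    ((sePerm cs i * sePerm cs i') ^ k) (t, c)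
      = ((s i * s i') ^ k * t * ((s i * s i') ^ k)⁻¹,
          c + ∑ l ∈ Finset.range (2 * k), chi t (s i' * (s i * s i') ^ l)) := by
  induction k generalizing t c with
  | zero => simp
  | succ k ih =>
    rw [pow_succ', Equiv.Perm.mul_apply, ih]
    rw [Equiv.Perm.mul_apply, sePerm_apply, sePerm_apply]
    dsimp only
    rw [Prod.mk.injEq]
    have e1 : chi ((s i * s i') ^ k * t * ((s i * s i') ^ k)⁻¹) (s i')
        = chi t (s i' * (s i * s i') ^ (2 * k)) := by
      rw [chi_conj]
      apply chi_congr'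
      rw [inv_inv, inv_pow_mul_simple, mul_assoc, ← pow_add, ← two_mul]
    have e2 : chi (s i' * ((s i * s i') ^ k * t * ((s i * s i') ^ k)⁻¹) * s i') (s i)
        = chi t (s i' * (s i * s i') ^ (2 * k + 1)) := by
      have hre : s i' * ((s i * s i') ^ k * t * ((s i * s i') ^ k)⁻¹) * s i'
          = (s i' * (s i * s i') ^ k) * t * (((s i * s i') ^ k)⁻¹ * s i') := by
        group
      rw [hre, chi_conj]
      apply chi_congr'
      have h2 : (s i' * (s i * s i') ^ k)⁻¹ * s i * (((s i * s i') ^ k)⁻¹ * s i')⁻¹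
          = (((s i * s i') ^ k)⁻¹ * s i') * ((s i * s i') * (s i * s i') ^ k) := by
        simp only [mul_inv_rev, inv_inv, cs.inv_simple]
        simp only [mul_assoc]
      rw [h2, inv_pow_mul_simple, ← pow_succ', mul_assoc, ← pow_add]
      congr 2
      omega
    refine ⟨?_, ?_⟩
    · have h3 : s i * (s i' * ((s i * s i') ^ k * t * ((s i * s i') ^ k)⁻¹) * s i') * s i
          = ((s i * s i') * (s i * s i') ^ k) * t * ((s i * s i') * (s i * s i') ^ k)⁻¹ := by
        simp only [mul_inv_rev, inv_inv, cs.inv_simple]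
        simp only [mul_assoc]
      rw [h3, ← pow_succ']
    · rw [e1, e2]
      rw [(by ring : 2 * (k + 1) = (2 * k + 1) + 1), Finset.sum_range_succ, Finset.sum_range_succ]
      rw [add_assoc, add_assoc, add_assoc]

lemma seLiftable : M.IsLiftable (fun i => (sePerm cs i : Equiv.Perm (W × ZMod 2))) := by
  intro i i'
  refine Equiv.ext fun p => ?_
  obtain ⟨t, c⟩ := p
  show (((sePerm cs i) * (sePerm cs i')) ^ M i i') (t, c) = (t, c)
  rw [sePerm_pow]
  have hsum : ∑ l ∈ Finset.range (2 * M i i'), chi t (s i' * (s i * s i') ^ l) = 0 := by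
    rw [two_mul, sum_range_add']
    have hper : ∀ l, chi t (s i' * (s i * s i') ^ (M i i' + l))
        = chi t (s i' * (s i * s i') ^ l) := by
      intro l
      apply chi_congr'
      rw [Nat.add_comm, pow_add, cs.simple_mul_simple_pow, mul_one]
    simp only [hper]
    exact zmod2_add_self _
  rw [hsum, add_zero, cs.simple_mul_simple_pow]
  simp

noncomputable def sePsi : W →* Equiv.Perm (W × ZMod 2) :=
  cs.lift ⟨fun i => sePerm cs i, seLiftable cs⟩

lemma sePsi_simple (i : B) : sePsi cs (s i) = sePerm cs i :=
  cs.lift_apply_simple (seLiftable cs) i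

lemma chi_simple_conj (i : B) (t : W) : chi (s i * t * s i) (s i) = chi t (s i) := by
  rw [chi_conj]
  apply chi_congr'
  rw [cs.inv_simple]
  simp [← mul_assoc, cs.simple_mul_simple_self]

lemma sePsi_wordProd (ω : List B) (t : W) (c : ZMod 2) :
    sePsi cs (π ω) (t, c)
      = (π ω * t * (π ω)⁻¹, c + ((ris ω).map (fun r => chi t r)).sum) := by
  induction ω generalizing t c with
  | nil => simp
  | cons i ω ih =>
    rw [cs.wordProd_cons, map_mul, Equiv.Perm.mul_apply, ih, sePsi_simple, sePerm_apply]
    dsimp only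
    rw [Prod.mk.injEq]
    constructor
    · simp only [mul_inv_rev, cs.inv_simple]
      simp only [mul_assoc]
    · have hris : ris (i :: ω) = ((π ω)⁻¹ * s i * π ω) :: ris ω := rfl
      rw [hris, List.map_cons, List.sum_cons]
      have hchi : chi (π ω * t * (π ω)⁻¹) (s i) = chi t ((π ω)⁻¹ * s i * π ω) := by
        rw [chi_conj, inv_inv]
      rw [hchi]
      ring

noncomputable def nn (w t : W) : ZMod 2 := (sePsi cs w (t, 0)).2

lemma sePsi_apply (w t : W) (c : ZMod 2) :
    sePsi cs w (t, c) = (w * t * w⁻¹, c + nn cs w t) := by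
  obtain ⟨ω, hω⟩ := cs.wordProd_surjective w
  subst hω
  rw [sePsi_wordProd]
  unfold nn
  rw [sePsi_wordProd, zero_add]

lemma nn_mul (w₁ w₂ t : W) :
    nn cs (w₁ * w₂) t = nn cs w₂ t + nn cs w₁ (w₂ * t * w₂⁻¹) := by
  unfold nn
  rw [map_mul, Equiv.Perm.mul_apply, sePsi_apply, sePsi_apply, zero_add]
  dsimp only
  rw [sePsi_apply, zero_add]

lemma nn_simple (i : B) (t : W) : nn cs (s i) t = chi t (s i) := by
  unfold nn
  rw [sePsi_simple, sePerm_apply, zero_add]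

lemma nn_wordProd (ω : List B) (t : W) :
    nn cs (π ω) t = ((ris ω).map (fun r => chi t r)).sum := by
  unfold nn
  rw [sePsi_wordProd, zero_add]

omit [Group W] in
lemma chi_sum_zero_of_not_mem {t : W} {l : List W} (h : t ∉ l) :
    (l.map (fun r => chi t r)).sum = 0 := by
  induction l with
  | nil => simp
  | cons r l ih =>
    rw [List.map_cons, List.sum_cons, ih (fun hm => h (List.mem_cons_of_mem r hm))]
    have : chi t r = 0 := by
      unfold chi
      rw [if_neg]
      intro he
      exact h (he ▸ List.mem_cons_self)
    rw [this, add_zero]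

lemma mem_rightInvSeq_of_nn_one {w t : W} {ω : List B} (hω : π ω = w)
    (h1 : nn cs w t = 1) : t ∈ ris ω := by
  by_contra hmem
  rw [← hω, nn_wordProd, chi_sum_zero_of_not_mem hmem] at h1
  exact absurd h1 (by decide)

lemma nn_reflection_self_aux (ρ : List B) (i : B) :
    nn cs (π ρ * s i * (π ρ)⁻¹) (π ρ * s i * (π ρ)⁻¹) = 1 := by
  induction ρ with
  | nil =>
    simp only [cs.wordProd_nil, one_mul, inv_one, mul_one]
    rw [nn_simple]
    unfold chi
    simp
  | cons c ρ ih =>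
    set t' := π ρ * s i * (π ρ)⁻¹ with ht'
    have hexp : π (c :: ρ) * s i * (π (c :: ρ))⁻¹ = s c * (t' * s c) := by
      rw [cs.wordProd_cons, ht']
      simp only [mul_inv_rev, cs.inv_simple]
      simp only [mul_assoc]
    rw [hexp, nn_mul, nn_mul]
    have e1 : s c * (s c * (t' * s c)) * (s c)⁻¹ = t' := by
      rw [cs.inv_simple]
      simp only [mul_assoc, cs.simple_mul_simple_cancel_left, cs.simple_mul_simple_self, mul_one]
    have e2 : (t' * s c) * (s c * (t' * s c)) * (t' * s c)⁻¹ = t' := by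
      simp only [mul_inv_rev, cs.inv_simple]
      simp only [mul_assoc, cs.simple_mul_simple_cancel_left]
      simp only [mul_inv_cancel, mul_one]
    rw [e1, e2, ih, nn_simple, nn_simple]
    have e3 : chi (s c * (t' * s c)) (s c) = chi t' (s c) := by
      rw [← mul_assoc, chi_simple_conj]
    rw [e3, add_comm (chi t' (s c)) 1, add_assoc, zmod2_add_self, add_zero]

lemma nn_reflection_self {t : W} (ht : cs.IsReflection t) : nn cs t t = 1 := by
  obtain ⟨w, i, rfl⟩ := ht
  obtain ⟨ρ, rfl⟩ := cs.wordProd_surjective w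
  exact nn_reflection_self_aux cs ρ i

lemma inversion_of_nn_one {w t : W} (ht : cs.IsReflection t) (h1 : nn cs w t = 1) :
    ℓ (w * t) < ℓ w := by
  obtain ⟨ω, hred, hω⟩ := cs.exists_reduced_word' w
  have hmem : t ∈ ris ω := mem_rightInvSeq_of_nn_one cs hω.symm h1
  have := cs.isRightInversion_of_mem_rightInvSeq hred hmem
  rw [← hω] at this
  exact this.2

lemma nn_one_of_inversion {w t : W} (ht : cs.IsReflection t) (hlt : ℓ (w * t) < ℓ w) :
    nn cs w t = 1 := by
  rcases zmod2_cases (nn cs w t) with h0 | h1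
  · exfalso
    have hmt : nn cs (w * t) t = 1 := by
      rw [nn_mul]
      have : t * t * t⁻¹ = t := by rw [ht.mul_self, one_mul, ht.inv]
      rw [this, h0, nn_reflection_self cs ht, add_zero]
    have := inversion_of_nn_one cs ht hmt
    rw [mul_assoc, ht.mul_self, mul_one] at this
    omega
  · exact h1

/-- The strong exchange property. -/
lemma strongExchange (ω : List B) {t : W} (ht : cs.IsReflection t)
    (hlt : ℓ (π ω * t) < ℓ (π ω)) :
    ∃ j < ω.length, π (ω.eraseIdx j) = π ω * t := by
  have h1 : nn cs (π ω) t = 1 := nn_one_of_inversion cs ht hlt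
  have hmem : t ∈ ris ω := mem_rightInvSeq_of_nn_one cs rfl h1
  obtain ⟨j, hj, hget⟩ := List.getElem_of_mem hmem
  rw [cs.length_rightInvSeq] at hj
  refine ⟨j, hj, ?_⟩
  rw [← cs.wordProd_mul_getD_rightInvSeq ω j]
  congr 1
  rw [List.getD_eq_getElem _ _ (by rw [cs.length_rightInvSeq]; exact hj), hget]


/-- The standard parabolic subgroup `W_L`. -/
def parab' (L : Set B) : Subgroup W := Subgroup.closure (cs.simple '' L)

lemma wordProd_mem_parab {L : Set B} {ω : List B} (h : ∀ b ∈ ω, b ∈ L) :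
    π ω ∈ parab' cs L := by
  induction ω with
  | nil => rw [cs.wordProd_nil]; exact one_mem _
  | cons i ω ih =>
    rw [cs.wordProd_cons]
    exact mul_mem (Subgroup.subset_closure ⟨i, h i (List.mem_cons_self), rfl⟩)
      (ih fun b hb => h b (List.mem_cons_of_mem i hb))

lemma exists_word_subset {L : Set B} {v : W} (hv : v ∈ parab' cs L) :
    ∃ ω : List B, (∀ b ∈ ω, b ∈ L) ∧ π ω = v := by
  induction hv using Subgroup.closure_induction with
  | mem x hx =>
    obtain ⟨i, hi, rfl⟩ := hx
    exact ⟨[i], by simpa using hi, cs.wordProd_singleton i⟩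
  | one => exact ⟨[], by simp, cs.wordProd_nil⟩
  | mul x y hx hy ihx ihy =>
    obtain ⟨ω₁, h₁, rfl⟩ := ihx
    obtain ⟨ω₂, h₂, rfl⟩ := ihy
    exact ⟨ω₁ ++ ω₂, fun b hb => (List.mem_append.mp hb).elim (h₁ b) (h₂ b),
      cs.wordProd_append ω₁ ω₂⟩
  | inv x hx ihx =>
    obtain ⟨ω, h, rfl⟩ := ihx
    exact ⟨ω.reverse, fun b hb => h b (List.mem_reverse.mp hb), cs.wordProd_reverse ω⟩

lemma exists_reduced_word_aux : ∀ n (ω : List B), ω.length = n →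
    ∃ ω' : List B, cs.IsReduced ω' ∧ π ω' = π ω ∧ ∀ b ∈ ω', b ∈ ω := by
  intro n
  induction n using Nat.strong_induction_on with
  | _ n ih =>
    intro ω hlen
    by_cases hred : cs.IsReduced ω
    · exact ⟨ω, hred, rfl, fun b hb => hb⟩
    · have hlt : ℓ (π ω) < n := by
        rcases Nat.lt_or_ge (ℓ (π ω)) n with h | h
        · exact h
        · refine absurd ?_ hred
          have := cs.length_wordProd_le ω
          show ℓ (π ω) = ω.length
          omega
      -- find a descent position
      have hstep : ∀ j (hj : j < n), π (ω.take (j+1)) = π (ω.take j) * s (ω.get ⟨j, by omega⟩) := by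
        intro j hj
        have : ω.take (j+1) = ω.take j ++ [ω.get ⟨j, by omega⟩] := by
          rw [List.take_succ]
          congr 1
          rw [List.getElem?_eq_getElem (by omega)]
          rfl
        rw [this, cs.wordProd_append, cs.wordProd_singleton]
      have hdesc : ∃ j, ∃ hj : j < n,
          ℓ (π (ω.take (j+1))) < ℓ (π (ω.take j)) := by
        by_contra hno
        push_neg at hno
        have key : ∀ j, j ≤ n → j ≤ ℓ (π (ω.take j)) := by
          intro j
          induction j with
          | zero => simp
          | succ j ihj =>
            intro hj
            have h1 := ihj (by omega)
            have h2 := hno j (by omega)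
            have h3 := cs.length_mul_simple (π (ω.take j)) (ω.get ⟨j, by omega⟩)
            rw [hstep j (by omega)] at h2 ⊢
            omega
        have := key n le_rfl
        rw [← hlen, List.take_length] at this
        omega
      obtain ⟨j, hj, hdesc⟩ := hdesc
      rw [hstep j hj] at hdesc
      obtain ⟨k, hk, heq⟩ := strongExchange cs (ω.take j)
        (cs.isReflection_simple (ω.get ⟨j, by omega⟩)) hdesc
      set ω'' := (ω.take j).eraseIdx k ++ ω.drop (j+1) with hω''
      have hπ : π ω'' = π ω := by
        rw [hω'', cs.wordProd_append, heq, ← hstep j hj, ← cs.wordProd_append,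
          List.take_append_drop]
      have hlen'' : ω''.length < n := by
        rw [hω'', List.length_append]
        have h1 : ((ω.take j).eraseIdx k).length + 1 = (ω.take j).length :=
          List.length_eraseIdx_add_one hk
        have h2 : (ω.take j).length = j := by
          rw [List.length_take]
          omega
        have h3 : (ω.drop (j+1)).length = ω.length - (j+1) := List.length_drop
        omega
      obtain ⟨ω', hred', hπ', hsub'⟩ := ih ω''.length hlen'' ω'' rfl
      refine ⟨ω', hred', by rw [hπ', hπ], fun b hb => ?_⟩
      have hb'' := hsub' b hb
      rw [hω''] at hb''
      rcases List.mem_append.mp hb'' with h | h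
      · exact (ω.take_sublist j).mem ((List.eraseIdx_sublist _ k).mem h)
      · exact (ω.drop_sublist (j+1)).mem h

lemma exists_reduced_word_subset {L : Set B} {v : W} (hv : v ∈ parab' cs L) :
    ∃ ω : List B, cs.IsReduced ω ∧ (∀ b ∈ ω, b ∈ L) ∧ π ω = v := by
  obtain ⟨ω, hω, rfl⟩ := exists_word_subset cs hv
  obtain ⟨ω', hred, hπ, hsub⟩ := exists_reduced_word_aux cs ω.length ω rfl
  exact ⟨ω', hred, fun b hb => hω b (hsub b hb), hπ⟩


lemma exists_rightDescent_parab {L : Set B} {v : W} (hv : v ∈ parab' cs L) (hv1 : v ≠ 1) :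
    ∃ i ∈ L, ℓ (v * s i) < ℓ v := by
  obtain ⟨ω, hred, hsub, rfl⟩ := exists_reduced_word_subset cs hv
  have hne : ω ≠ [] := by
    rintro rfl
    exact hv1 (cs.wordProd_nil)
  refine ⟨ω.getLast hne, hsub _ (List.getLast_mem hne), ?_⟩
  have hsplit : ω.dropLast ++ [ω.getLast hne] = ω := List.dropLast_append_getLast hne
  have happ := cs.wordProd_append ω.dropLast [ω.getLast hne]
  rw [hsplit] at happ
  have hv' : π ω * s (ω.getLast hne) = π ω.dropLast := by
    rw [happ, cs.wordProd_singleton, cs.simple_mul_simple_cancel_right]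
  rw [hv', hred]
  calc ℓ (π ω.dropLast) ≤ ω.dropLast.length := cs.length_wordProd_le _
    _ < ω.length := by
        rw [List.length_dropLast]
        have : 0 < ω.length := List.length_pos_of_ne_nil hne
        omega

/-- Additivity of length over a coset whose representative has minimal length. -/
lemma length_mul_eq_of_min {L : Set B} {u : W}
    (hu : ∀ z ∈ parab' cs L, ℓ u ≤ ℓ (u * z)) :
    ∀ v ∈ parab' cs L, ℓ (u * v) = ℓ u + ℓ v := by
  suffices h : ∀ n, ∀ v ∈ parab' cs L, ℓ v = n → ℓ (u * v) = ℓ u + n by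
    intro v hv
    exact h (ℓ v) v hv rfl
  intro n
  induction n using Nat.strong_induction_on with
  | _ n ih =>
    intro v hv hn
    rcases Nat.eq_zero_or_pos n with h0 | hpos
    · subst h0
      rw [cs.length_eq_zero_iff.mp hn, mul_one, add_zero]
    · obtain ⟨ω, hred, hsub, rfl⟩ := exists_reduced_word_subset cs hv
      have hne : ω ≠ [] := by
        rintro rfl
        rw [cs.wordProd_nil, cs.length_one] at hn
        omega
      set i := ω.getLast hne with hi
      set ω' := ω.dropLast with hω'
      have hsplit : ω' ++ [i] = ω := List.dropLast_append_getLast hne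
      have hv'eq : π ω = π ω' * s i := by
        have happ := cs.wordProd_append ω' [i]
        rw [hsplit] at happ
        rw [happ, cs.wordProd_singleton]
      have hlenω : ω.length = n := by rw [← hred, hn]
      have hred' : cs.IsReduced ω' := by
        have : ω' = ω.take (ω.length - 1) := by rw [hω', List.dropLast_eq_take]
        rw [this]
        exact hred.take _
      have hlv' : ℓ (π ω') = n - 1 := by
        rw [hred', hω', List.length_dropLast, hlenω]
      have hv'mem : π ω' ∈ parab' cs L :=
        wordProd_mem_parab cs (fun b hb => hsub b ((List.dropLast_sublist ω).mem hb))
      have hihv' : ℓ (u * π ω') = ℓ u + (n - 1) :=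
        ih (n-1) (by omega) (π ω') hv'mem hlv'
      have hsi : s i ∈ parab' cs L :=
        Subgroup.subset_closure ⟨i, hsub i (hsplit ▸ List.mem_append_right _ (by simp)), rfl⟩
      rcases cs.length_mul_simple (u * π ω') i with hpl | hmi
      · rw [hv'eq, ← mul_assoc, hpl, hihv']
        omega
      · exfalso
        have hne' := cs.length_mul_simple_ne (u * π ω') i
        have hlt : ℓ ((u * π ω') * s i) < ℓ (u * π ω') := by omega
        obtain ⟨ρ, hρred, hρ⟩ := cs.exists_reduced_word' u
        have hπcomb : π (ρ ++ ω') = u * π ω' := by rw [cs.wordProd_append, ← hρ]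
        rw [← hπcomb] at hlt
        obtain ⟨j, hj, heq⟩ := strongExchange cs (ρ ++ ω') (cs.isReflection_simple i) hlt
        rw [hπcomb] at heq
        rw [List.length_append] at hj
        rcases Nat.lt_or_ge j ρ.length with hjρ | hjρ
        · -- erased from the u-part: contradicts minimality of u
          rw [List.eraseIdx_append_of_lt_length hjρ, cs.wordProd_append] at heq
          set z := π ω' * s i * (π ω')⁻¹ with hz
          have hzmem : z ∈ parab' cs L := mul_mem (mul_mem hv'mem hsi) (inv_mem hv'mem)
          have huz : u * z = π (ρ.eraseIdx j) := by
            rw [hz, ← mul_assoc, ← mul_assoc, ← heq, mul_assoc, mul_inv_cancel, mul_one]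
          have h1 := hu z hzmem
          rw [huz] at h1
          have h2 : ℓ (π (ρ.eraseIdx j)) ≤ (ρ.eraseIdx j).length := cs.length_wordProd_le _
          have h3 : (ρ.eraseIdx j).length + 1 = ρ.length := List.length_eraseIdx_add_one hjρ
          have h4 : ρ.length = ℓ u := by rw [← hρred, ← hρ]
          omega
        · -- erased from the v-part: contradicts reducedness of ω
          rw [List.eraseIdx_append_of_length_le hjρ, cs.wordProd_append, ← hρ,
            mul_assoc] at heq
          have h5 : π (ω'.eraseIdx (j - ρ.length)) = π ω' * s i := mul_left_cancel heq
          have h6 : ℓ (π ω) ≤ (ω'.eraseIdx (j - ρ.length)).length := by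
            rw [hv'eq, ← h5]
            exact cs.length_wordProd_le _
          have hredeq : ℓ (π ω) = ω.length := hred
          have h8 : ω'.length = ω.length - 1 := by rw [hω', List.length_dropLast]
          have hjj : j - ρ.length < ω'.length := by omega
          have h7 : (ω'.eraseIdx (j - ρ.length)).length + 1 = ω'.length :=
            List.length_eraseIdx_add_one hjj
          omega

/-- An element of `minReps` has minimal length in its coset. -/
lemma minReps_min {L : Set B} {w : W} (hw : ∀ i ∈ L, ℓ w < ℓ (w * cs.simple i)) :
    ∀ z ∈ parab' cs L, ℓ w ≤ ℓ (w * z) := by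
  have hSne : ∃ m, ∃ z ∈ parab' cs L, ℓ (w * z) = m := ⟨ℓ (w * 1), 1, one_mem _, rfl⟩
  set S : Set ℕ := {m | ∃ z ∈ parab' cs L, ℓ (w * z) = m} with hS
  obtain ⟨z₀, hz₀, hn₀⟩ := Nat.sInf_mem hSne
  have hmin : ∀ z ∈ parab' cs L, ℓ (w * z₀) ≤ ℓ ((w * z₀) * z) := by
    intro z hz
    rw [hn₀, mul_assoc]
    exact Nat.sInf_le ⟨z₀ * z, mul_mem hz₀ hz, rfl⟩
  have hadd := length_mul_eq_of_min cs hmin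
  have hz₀inv : z₀⁻¹ ∈ parab' cs L := inv_mem hz₀
  have hz₀1 : z₀ = 1 := by
    by_contra hne
    have hne' : z₀⁻¹ ≠ 1 := fun h => hne (by rwa [inv_eq_one] at h)
    obtain ⟨i, hiL, hdesc⟩ := exists_rightDescent_parab cs hz₀inv hne'
    have h1 : ℓ (w * s i) = ℓ (w * z₀) + ℓ (z₀⁻¹ * s i) := by
      have : w * s i = (w * z₀) * (z₀⁻¹ * s i) := by group
      rw [this]
      exact hadd _ (mul_mem hz₀inv (Subgroup.subset_closure ⟨i, hiL, rfl⟩))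
    have h2 : ℓ w = ℓ (w * z₀) + ℓ z₀⁻¹ := by
      have : w = (w * z₀) * z₀⁻¹ := by group
      conv_lhs => rw [this]
      exact hadd _ hz₀inv
    have h3 := hw i hiL
    omega
  intro z hz
  have := hmin z hz
  rwa [hz₀1, mul_one] at this

/-- Length additivity for minimal coset representatives. -/
lemma minReps_length_add {L : Set B} {w : W} (hw : ∀ i ∈ L, ℓ w < ℓ (w * cs.simple i)) :
    ∀ v ∈ parab' cs L, ℓ (w * v) = ℓ w + ℓ v :=
  length_mul_eq_of_min cs (minReps_min cs hw)

lemma minReps_eq_of_length_eq {L : Set B} {w v : W}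
    (hw : ∀ i ∈ L, ℓ w < ℓ (w * cs.simple i))
    (hv : v ∈ parab' cs L) (hl : ℓ (w * v) = ℓ w) : v = 1 := by
  have := minReps_length_add cs hw v hv
  rw [hl] at this
  have : ℓ v = 0 := by omega
  exact cs.length_eq_zero_iff.mp this

end SEAux

section Glue

open SEAux

variable {B : Type*} {W : Type*} [Group W] {M : CoxeterMatrix B}

lemma commute_parab (cs : CoxeterSystem M W) {S T : Set B}
    (hc : ∀ a ∈ S, ∀ b ∈ T, Commute (cs.simple a) (cs.simple b)) {x y : W}
    (hx : x ∈ Subgroup.closure (cs.simple '' S)) (hy : y ∈ Subgroup.closure (cs.simple '' T)) :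
    Commute x y := by
  induction hx using Subgroup.closure_induction with
  | mem a ha =>
    induction hy using Subgroup.closure_induction with
    | mem b hb =>
      obtain ⟨i, hi, rfl⟩ := ha
      obtain ⟨j, hj, rfl⟩ := hb
      exact hc i hi j hj
    | one => exact Commute.one_right _
    | mul y z _ _ ihy ihz => exact ihy.mul_right ihz
    | inv y _ ihy => exact ihy.inv_right
  | one => exact Commute.one_left _
  | mul x z _ _ ihx ihz => exact ihx.mul_left ihz
  | inv x _ ihx => exact ihx.inv_left

end Glue


section BruhatSetup

variable {B : Type*} {W : Type*} [Group W] {M : CoxeterMatrix B}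

/-- Strong Bruhat order: `u ≤ v` iff every reduced word for `v` has a sublist
that is a reduced word for `u`. -/
def BruhatLE (cs : CoxeterSystem M W) (u v : W) : Prop :=
  ∀ ω : List B, cs.IsReduced ω → cs.wordProd ω = v →
    ∃ ω' : List B, List.Sublist ω' ω ∧ cs.IsReduced ω' ∧ cs.wordProd ω' = u

/-- Strict strong Bruhat order. -/
def BruhatLT (cs : CoxeterSystem M W) (u v : W) : Prop :=
  BruhatLE cs u v ∧ u ≠ v

/-- The standard parabolic subgroup `W_L` generated by the simple reflections in `L`. -/
def parab (cs : CoxeterSystem M W) (L : Set B) : Subgroup W :=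
  Subgroup.closure (cs.simple '' L)

/-- The set `W^L` of minimal length coset representatives for `W / W_L`. -/
def minReps (cs : CoxeterSystem M W) (L : Set B) : Set W :=
  {w : W | ∀ i ∈ L, cs.length w < cs.length (w * cs.simple i)}

/-- Right weak order: `v ≤_R w` iff `ℓ(w) = ℓ(w v⁻¹) + ℓ(v)`. -/
def leR (cs : CoxeterSystem M W) (v w : W) : Prop :=
  cs.length w = cs.length (w * v⁻¹) + cs.length v

/-- The setup of the order `≤_O`: `I`, `J`, `K` are pairwise disjoint and pairwise
disconnected subsets of the simple system (so that `W_{I∪J∪K} = W_I × W_J × W_K`),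
and `σ : x ↦ x*` restricts to an isomorphism of Coxeter groups `W_I → W_J`
(a bijective group homomorphism sending simple reflections to simple reflections). -/
structure GoodSetup (cs : CoxeterSystem M W) (I J K : Set B) (σ : W → W) : Prop where
  disjIJ : Disjoint I J
  disjIK : Disjoint I K
  disjJK : Disjoint J K
  commIJ : ∀ i ∈ I, ∀ j ∈ J, Commute (cs.simple i) (cs.simple j)
  commIK : ∀ i ∈ I, ∀ k ∈ K, Commute (cs.simple i) (cs.simple k)
  commJK : ∀ j ∈ J, ∀ k ∈ K, Commute (cs.simple j) (cs.simple k)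
  directProd : ∀ x ∈ parab cs I, ∀ y ∈ parab cs J, ∀ z ∈ parab cs K,
    x * y * z = 1 → x = 1 ∧ y = 1 ∧ z = 1
  mulSigma : ∀ x ∈ parab cs I, ∀ y ∈ parab cs I, σ (x * y) = σ x * σ y
  bijSigma : Set.BijOn σ (parab cs I : Set W) (parab cs J : Set W)
  simpleSigma : ∀ i ∈ I, ∃ j ∈ J, σ (cs.simple i) = cs.simple j

/-- Membership in the coset `[w] = w · W_K · W_{I,J}` where `W_{I,J} = {x x* : x ∈ W_I}`. -/
def inCoset (cs : CoxeterSystem M W) (I K : Set B) (σ : W → W) (w u : W) : Prop :=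
  ∃ a ∈ parab cs K, ∃ x ∈ parab cs I, u = w * a * (x * σ x)

/-- The relation `≤_O`: `w' ≤_O w` iff some `u ∈ [w']` satisfies `u ≤ w` in Bruhat order. -/
def leO (cs : CoxeterSystem M W) (I K : Set B) (σ : W → W) (w' w : W) : Prop :=
  ∃ u, inCoset cs I K σ w' u ∧ BruhatLE cs u w

/-- The strict relation associated to `≤_O`. -/
def ltO (cs : CoxeterSystem M W) (I K : Set B) (σ : W → W) (w' w : W) : Prop :=
  leO cs I K σ w' w ∧ w' ≠ w

/-- `Min(w)`: the elements of the coset `[w]` of length `ℓ(w)`. -/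
def MinC (cs : CoxeterSystem M W) (I K : Set B) (σ : W → W) (w : W) : Set W :=
  {u : W | inCoset cs I K σ w u ∧ cs.length u = cs.length w}

/-- The set `M` of all elements having minimal length in their coset mod `W_K W_{I,J}`. -/
def Mset (cs : CoxeterSystem M W) (I J K : Set B) (σ : W → W) : Set W :=
  {u : W | ∃ w ∈ minReps cs (J ∪ K), u ∈ MinC cs I K σ w}

theorem statement_7 (cs : CoxeterSystem M W) (I J K : Set B) (σ : W → W)
    (h : GoodSetup cs I J K σ) (w : W) (hw : w ∈ minReps cs (J ∪ K)) :
    (∃! u, u ∈ MinC cs I K σ w) ↔ w ∈ minReps cs (I ∪ J ∪ K) := by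
  classical
  have hσ1 : σ 1 = 1 := by
    have h1 := h.mulSigma 1 (one_mem _) 1 (one_mem _)
    rw [mul_one] at h1
    exact left_eq_mul.mp h1
  have hwMinC : w ∈ MinC cs I K σ w := by
    refine ⟨⟨1, one_mem _, 1, one_mem _, ?_⟩, rfl⟩
    rw [hσ1]
    simp
  constructor
  · -- uniqueness implies minimality in the big coset
    rintro ⟨u₀, _, huniq⟩
    intro i hiL
    by_contra hnot
    have hlt : cs.length (w * cs.simple i) < cs.length w :=
      lt_of_le_of_ne (not_lt.mp hnot) (cs.length_mul_simple_ne w i)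
    have hiI : i ∈ I := by
      rcases hiL with hIJ | hK
      · rcases hIJ with hI | hJ
        · exact hI
        · exact absurd (hw i (Set.mem_union_left K hJ)) (by omega)
      · exact absurd (hw i (Set.mem_union_right J hK)) (by omega)
    obtain ⟨j, hjJ, hσi⟩ := h.simpleSigma i hiI
    have hsiI : cs.simple i ∈ parab cs I := Subgroup.subset_closure ⟨i, hiI, rfl⟩
    have hsjJ : cs.simple j ∈ parab cs J := Subgroup.subset_closure ⟨j, hjJ, rfl⟩
    have hcom : Commute (cs.simple i) (cs.simple j) := h.commIJ i hiI j hjJ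
    have hu_in : inCoset cs I K σ w (w * cs.simple i * cs.simple j) := by
      refine ⟨1, one_mem _, cs.simple i, hsiI, ?_⟩
      rw [hσi, mul_one, ← mul_assoc]
    have hlen_u : cs.length (w * cs.simple i * cs.simple j) = cs.length w := by
      rcases cs.length_mul_simple w i with hp' | hm'
      · omega
      · rcases cs.length_mul_simple (w * cs.simple i) j with hp | hm
        · omega
        · exfalso
          have husi : (w * cs.simple i * cs.simple j) * cs.simple i = w * cs.simple j := by
            rw [mul_assoc (w * cs.simple i), ← hcom.eq, ← mul_assoc,
              cs.simple_mul_simple_cancel_right]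
          have h1 : cs.length (w * cs.simple j)
              ≤ cs.length (w * cs.simple i * cs.simple j) + 1 := by
            rw [← husi]
            have := cs.length_mul_le (w * cs.simple i * cs.simple j) (cs.simple i)
            rw [cs.length_simple] at this
            exact this
          have hwj := hw j (Set.mem_union_left K hjJ)
          omega
    have h1 := huniq (w * cs.simple i * cs.simple j) ⟨hu_in, hlen_u⟩
    have h2 := huniq w hwMinC
    have h3 : w * (cs.simple i * cs.simple j) = w * 1 := by
      rw [mul_one, ← mul_assoc, h1, h2]
    have h4 : cs.simple i * cs.simple j * 1 = 1 := by
      rw [mul_one]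
      exact mul_left_cancel h3
    have h5 := h.directProd (cs.simple i) hsiI (cs.simple j) hsjJ 1 (one_mem _) h4
    have h6 := cs.length_simple i
    rw [h5.1, cs.length_one] at h6
    omega
  · -- minimality implies uniqueness
    intro hmin
    refine ⟨w, hwMinC, ?_⟩
    rintro u ⟨⟨a, ha, x, hx, rfl⟩, hlen⟩
    have hσx : σ x ∈ parab cs J := h.bijSigma.mapsTo hx
    have hIle : parab cs I ≤ parab cs (I ∪ J ∪ K) :=
      Subgroup.closure_mono (Set.image_mono
        (fun b hb => Set.mem_union_left _ (Set.mem_union_left _ hb)))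
    have hJle : parab cs J ≤ parab cs (I ∪ J ∪ K) :=
      Subgroup.closure_mono (Set.image_mono
        (fun b hb => Set.mem_union_left _ (Set.mem_union_right _ hb)))
    have hKle : parab cs K ≤ parab cs (I ∪ J ∪ K) :=
      Subgroup.closure_mono (Set.image_mono (fun b hb => Set.mem_union_right _ hb))
    have hvmem : a * (x * σ x) ∈ parab cs (I ∪ J ∪ K) :=
      mul_mem (hKle ha) (mul_mem (hIle hx) (hJle hσx))
    have hlen' : cs.length (w * (a * (x * σ x))) = cs.length w := by
      rw [← mul_assoc]
      exact hlen
    have hv1 : a * (x * σ x) = 1 :=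
      SEAux.minReps_eq_of_length_eq cs (fun i hi => hmin i hi) hvmem hlen'
    have hcxa : Commute a x :=
      commute_parab cs (fun k hk i hi => (h.commIK i hi k hk).symm) ha hx
    have hcaσ : Commute a (σ x) :=
      commute_parab cs (fun k hk j hj => (h.commJK j hj k hk).symm) ha hσx
    have hca : Commute a (x * σ x) := hcxa.mul_right hcaσ
    have hv2 : x * σ x * a = 1 := by
      rw [← hca.eq]
      exact hv1
    have h5 := h.directProd x hx (σ x) hσx a ha hv2
    rw [h5.2.1, h5.1, h5.2.2]
    simp


end BruhatSetup
end

section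
/- With the setup of ≤_O: for every w ∈ W(I,J,K) and every v in the coset w W_K W_{I,J}, there exists u ∈ Min(w) such that u ≤ v in Bruhat order. Consequently Min(w) is exactly the set of Bruhat-minimal elements of the coset. -/
section Cocycle

open CoxeterSystem List Classical

variable {B : Type*} {W : Type*} [Group W] {M : CoxeterMatrix B}

local prefix:100 "ℓ" => CoxeterSystem.length

/-- Indicator function of `{r}` with values in `Multiplicative (ZMod 2)`. -/
noncomputable def chi (r : W) : W → Multiplicative (ZMod 2) :=
  fun x => if x = r then Multiplicative.ofAdd 1 else 1

omit [Group W] in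
lemma funsq (f : W → Multiplicative (ZMod 2)) : f * f = 1 := by
  funext x
  show f x * f x = 1
  have h : ∀ a : ZMod 2, a + a = 0 := by decide
  have := h (Multiplicative.toAdd (f x))
  exact Multiplicative.toAdd.injective (by simpa using this)

/-- Conjugation action of `W` on functions `W → Multiplicative (ZMod 2)`. -/
def conjAut : W →* MulAut (W → Multiplicative (ZMod 2)) where
  toFun u :=
    { toFun := fun f x => f (u⁻¹ * x * u)
      invFun := fun f x => f (u * x * u⁻¹)
      left_inv := fun f => by funext x; group
      right_inv := fun f => by funext x; group
      map_mul' := fun f g => rfl }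
  map_one' := by ext f x; simp
  map_mul' u v := by ext f x; simp [mul_assoc]

lemma conjAut_apply (u : W) (f : W → Multiplicative (ZMod 2)) (x : W) :
    conjAut u f x = f (u⁻¹ * x * u) := rfl

lemma conjAut_chi (u r : W) : conjAut u (chi r) = chi (u * r * u⁻¹) := by
  funext x
  show (if u⁻¹ * x * u = r then _ else _) = (if x = u * r * u⁻¹ then _ else _)
  congr 1
  simp only [eq_iff_iff]
  constructor
  · intro h; rw [← h]; group
  · intro h; rw [h]; group

end Cocycle

section Phi

open CoxeterSystem List

variable {B : Type*} {W : Type*} [Group W] {M : CoxeterMatrix B} (cs : CoxeterSystem M W)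

local prefix:100 "ℓ" => cs.length
local prefix:100 "π" => cs.wordProd
local prefix:100 "σ" => cs.simple

/-- Generators for the sign representation. -/
noncomputable def sgnGen (i : B) : (W → Multiplicative (ZMod 2)) ⋊[conjAut] W :=
  ⟨chi (cs.simple i), cs.simple i⟩

lemma sdp_pow (a : W → Multiplicative (ZMod 2)) (u : W) (m : ℕ) :
    (⟨a, u⟩ : (W → Multiplicative (ZMod 2)) ⋊[conjAut] W) ^ m =
      ⟨(Finset.range m).prod (fun k => conjAut (u ^ k) a), u ^ m⟩ := by
  induction m with
  | zero => rw [pow_zero]; exact SemidirectProduct.ext (by simp) (by simp)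
  | succ m ih =>
      rw [pow_succ, ih, SemidirectProduct.mul_def]
      exact SemidirectProduct.ext (by simp [Finset.prod_range_succ]) (by simp [pow_succ])

lemma grp_flip {G : Type*} [Group G] {t u : G} (h : t * u = u⁻¹ * t) (k : ℕ) :
    t * u ^ k = (u ^ k)⁻¹ * t := by
  induction k with
  | zero => simp
  | succ k ih =>
      calc t * u ^ (k + 1) = (t * u ^ k) * u := by rw [pow_succ, mul_assoc]
        _ = (u ^ k)⁻¹ * (t * u) := by rw [ih, mul_assoc]
        _ = (u ^ k)⁻¹ * (u⁻¹ * t) := by rw [h]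
        _ = (u ^ (k + 1))⁻¹ * t := by rw [pow_succ', mul_inv_rev, mul_assoc]

lemma grp_flip' {G : Type*} [Group G] {t u : G} (h : t * u = u⁻¹ * t) (k : ℕ) :
    u ^ k * t = t * (u ^ k)⁻¹ := by
  have h2 := grp_flip h k
  calc u ^ k * t = u ^ k * (t * u ^ k) * (u ^ k)⁻¹ := by group
    _ = u ^ k * ((u ^ k)⁻¹ * t) * (u ^ k)⁻¹ := by rw [h2]
    _ = t * (u ^ k)⁻¹ := by group

lemma simple_flip (i j : B) :
    cs.simple i * (cs.simple i * cs.simple j) = (cs.simple i * cs.simple j)⁻¹ * cs.simple i := by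
  rw [← mul_assoc, cs.simple_mul_simple_self i, one_mul, mul_inv_rev, inv_simple, inv_simple,
    mul_assoc, cs.simple_mul_simple_self i, mul_one]

lemma sgn_liftable : M.IsLiftable (sgnGen cs) := by
  intro i j
  set u := cs.simple i * cs.simple j with hu
  have hflip : ∀ k : ℕ, cs.simple i * (u ^ k)⁻¹ = u ^ k * cs.simple i :=
    fun k => (grp_flip' (simple_flip cs i j) k).symm
  have huM : u ^ M.M i j = 1 := cs.simple_mul_simple_pow i j
  have key : ∀ m : ℕ, (sgnGen cs i * sgnGen cs j) ^ m =
      ⟨(Finset.range (2 * m)).prod (fun n => chi (u ^ n * cs.simple i)), u ^ m⟩ := by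
    intro m
    have hprod : sgnGen cs i * sgnGen cs j =
        (⟨chi (cs.simple i) * conjAut (cs.simple i) (chi (cs.simple j)), u⟩ :
          (W → Multiplicative (ZMod 2)) ⋊[conjAut] W) := rfl
    rw [hprod, sdp_pow]
    refine SemidirectProduct.ext ?_ rfl
    show (Finset.range m).prod _ = _
    have hterm : ∀ k : ℕ,
        conjAut (u ^ k) (chi (cs.simple i) * conjAut (cs.simple i) (chi (cs.simple j)))
        = chi (u ^ (2 * k) * cs.simple i) * chi (u ^ (2 * k + 1) * cs.simple i) := by
      intro k
      rw [conjAut_chi, map_mul, conjAut_chi, conjAut_chi]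
      have e1 : u ^ k * cs.simple i * (u ^ k)⁻¹ = u ^ (2 * k) * cs.simple i := by
        rw [mul_assoc, hflip k, ← mul_assoc, ← pow_add, two_mul]
      have e2 : u ^ k * (cs.simple i * cs.simple j * (cs.simple i)⁻¹) * (u ^ k)⁻¹ =
          u ^ (2 * k + 1) * cs.simple i := by
        rw [inv_simple, ← hu]
        calc u ^ k * (u * cs.simple i) * (u ^ k)⁻¹
            = u ^ k * u * (cs.simple i * (u ^ k)⁻¹) := by group
          _ = u ^ k * u * (u ^ k * cs.simple i) := by rw [hflip k]
          _ = u ^ (2 * k + 1) * cs.simple i := by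
              rw [show u ^ k * u * (u ^ k * cs.simple i) = (u ^ k * u ^ k * u) * cs.simple i by
                group, ← pow_add, show k + k = 2 * k from (two_mul k).symm, pow_succ]
      rw [e1, e2]
    calc (Finset.range m).prod
          (fun k => conjAut (u ^ k) (chi (cs.simple i) * conjAut (cs.simple i) (chi (cs.simple j))))
        = (Finset.range m).prod
          (fun k => chi (u ^ (2 * k) * cs.simple i) * chi (u ^ (2 * k + 1) * cs.simple i)) :=
          Finset.prod_congr rfl (fun k _ => hterm k)
      _ = (Finset.range (2 * m)).prod (fun n => chi (u ^ n * cs.simple i)) := by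
          induction m with
          | zero => simp
          | succ m ihm =>
              rw [Finset.prod_range_succ, ihm,
                show 2 * (m + 1) = (2 * m + 1) + 1 by ring,
                Finset.prod_range_succ, Finset.prod_range_succ, mul_assoc]
  have hk := key (M.M i j)
  rw [hk, huM]
  refine SemidirectProduct.ext ?_ rfl
  show (Finset.range (2 * M.M i j)).prod (fun n => chi (u ^ n * cs.simple i)) = 1
  rw [two_mul, Finset.prod_range_add]
  have hshift : ∀ k ∈ Finset.range (M.M i j),
      chi (u ^ (M.M i j + k) * cs.simple i) = chi (u ^ k * cs.simple i) := by
    intro k _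
    rw [pow_add, huM, one_mul]
  rw [Finset.prod_congr rfl hshift]
  exact funsq _

end Phi

section NW

open CoxeterSystem List

variable {B : Type*} {W : Type*} [Group W] {M : CoxeterMatrix B} (cs : CoxeterSystem M W)

local prefix:100 "ℓ" => cs.length
local prefix:100 "π" => cs.wordProd

/-- The sign (reflection cocycle) homomorphism. -/
noncomputable def phi : W →* (W → Multiplicative (ZMod 2)) ⋊[conjAut] W :=
  cs.lift ⟨sgnGen cs, sgn_liftable cs⟩

lemma phi_simple (i : B) : phi cs (cs.simple i) = sgnGen cs i :=
  cs.lift_apply_simple (sgn_liftable cs) i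

lemma phi_right (w : W) : (phi cs w).right = w := by
  have : (SemidirectProduct.rightHom.comp (phi cs) : W →* W) = MonoidHom.id W := by
    apply cs.ext_simple
    intro i
    simp [phi_simple, sgnGen, SemidirectProduct.rightHom]
  calc (phi cs w).right = (SemidirectProduct.rightHom.comp (phi cs)) w := rfl
    _ = w := by rw [this]; rfl

/-- `nw cs w t` is the sign cocycle: it is `ofAdd 1` iff `t` is a left inversion of `w`. -/
noncomputable def nw (w : W) : W → Multiplicative (ZMod 2) := (phi cs w).left

lemma nw_mul (u v x : W) : nw cs (u * v) x = nw cs u x * nw cs v (u⁻¹ * x * u) := by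
  have h0 : phi cs (u * v) = phi cs u * phi cs v := map_mul _ _ _
  show (phi cs (u * v)).left x = _
  rw [h0, SemidirectProduct.mul_left]
  show (phi cs u).left x * (conjAut ((phi cs u).right) (phi cs v).left) x = _
  rw [phi_right]
  rfl

lemma nw_simple (i : B) : nw cs (cs.simple i) = chi (cs.simple i) := by
  show (phi cs (cs.simple i)).left = _
  rw [phi_simple]
  rfl

lemma nw_one (x : W) : nw cs 1 x = 1 := by
  show (phi cs 1).left x = 1
  rw [map_one]
  rfl

lemma nw_inv (u x : W) : nw cs u⁻¹ (u⁻¹ * x * u) = (nw cs u x)⁻¹ := by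
  have h := nw_mul cs u u⁻¹ x
  rw [mul_inv_cancel, nw_one] at h
  have h1 : nw cs u x * nw cs u⁻¹ (u⁻¹ * x * u) = 1 := h.symm
  calc nw cs u⁻¹ (u⁻¹ * x * u)
      = (nw cs u x)⁻¹ * (nw cs u x * nw cs u⁻¹ (u⁻¹ * x * u)) := by group
    _ = (nw cs u x)⁻¹ := by rw [h1, mul_one]

/-- `nw` of a word product is the product of `chi` over the left inversion sequence. -/
lemma nw_wordProd (ω : List B) : nw cs (π ω) = ((cs.leftInvSeq ω).map chi).prod := by
  induction ω with
  | nil => rw [wordProd_nil]; funext x; rw [nw_one]; simp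
  | cons i ω ih =>
      rw [wordProd_cons]
      funext x
      rw [nw_mul, nw_simple]
      show _ = ((cs.leftInvSeq (i :: ω)).map chi).prod x
      rw [leftInvSeq]
      show _ = (chi (cs.simple i) *
        (((cs.leftInvSeq ω).map (MulAut.conj (cs.simple i))).map chi).prod) x
      rw [List.map_map]
      have : chi ∘ (MulAut.conj (cs.simple i)) = (conjAut (cs.simple i)) ∘ chi := by
        funext r
        show chi (cs.simple i * r * (cs.simple i)⁻¹) = conjAut (cs.simple i) (chi r)
        rw [conjAut_chi]
      rw [this, ← List.map_map]
      have hml : ((cs.leftInvSeq ω).map chi).map (conjAut (cs.simple i)) =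
          ((cs.leftInvSeq ω).map chi).map ((conjAut (cs.simple i) : _ →* _) : _ → _) := rfl
      rw [hml, ← ((conjAut (cs.simple i) : (W → Multiplicative (ZMod 2)) ≃*
        (W → Multiplicative (ZMod 2))) : (W → Multiplicative (ZMod 2)) →*
        (W → Multiplicative (ZMod 2))).map_list_prod, ih]
      rfl

end NW

section Exchange

open CoxeterSystem List

variable {B : Type*} {W : Type*} [Group W] {M : CoxeterMatrix B} (cs : CoxeterSystem M W)

local prefix:100 "ℓ" => cs.length
local prefix:100 "π" => cs.wordProd

omit [Group W] in
lemma sgn_two_cases (a : Multiplicative (ZMod 2)) : a = 1 ∨ a = Multiplicative.ofAdd 1 := by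
  revert a; decide

lemma prod_map_chi_of_nodup {l : List W} (hn : l.Nodup) (x : W) :
    (x ∈ l ∧ ((l.map chi).prod) x = Multiplicative.ofAdd 1) ∨
      (x ∉ l ∧ ((l.map chi).prod) x = 1) := by
  induction l with
  | nil => right; simp
  | cons r l ih =>
      have hn' : l.Nodup := hn.of_cons
      have hr : r ∉ l := (List.nodup_cons.mp hn).1
      have hshow : ((((r :: l)).map chi).prod) x = chi r x * ((l.map chi).prod) x := rfl
      by_cases hx : x = r
      · left
        constructor
        · rw [hx]; exact List.mem_cons_self
        · rcases ih hn' with ⟨hmem, _⟩ | ⟨_, hval⟩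
          · exact absurd (hx ▸ hmem) hr
          · rw [hshow, hval, mul_one, chi, if_pos hx]
      · rcases ih hn' with ⟨hmem, hval⟩ | ⟨hmem, hval⟩
        · left
          exact ⟨List.mem_cons_of_mem r hmem, by rw [hshow, hval, chi, if_neg hx, one_mul]⟩
        · right
          constructor
          · intro hc
            rcases List.mem_cons.mp hc with hc | hc
            · exact hx hc
            · exact hmem hc
          · rw [hshow, hval, chi, if_neg hx, one_mul]

lemma mem_leftInvSeq_iff_nw {ω : List B} (hω : cs.IsReduced ω) (t : W) :
    t ∈ cs.leftInvSeq ω ↔ nw cs (π ω) t = Multiplicative.ofAdd 1 := by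
  rw [nw_wordProd]
  rcases prod_map_chi_of_nodup hω.nodup_leftInvSeq t with ⟨hmem, hval⟩ | ⟨hmem, hval⟩
  · simp [hmem, hval]
  · simp only [hmem, hval]
    constructor
    · intro h; exact absurd h (by simp [hmem])
    · intro h; exact absurd h.symm (by decide)

lemma nw_mul3 (a b c x : W) :
    nw cs (a * b * c) x =
      nw cs a x * nw cs b (a⁻¹ * x * a) * nw cs c ((a * b)⁻¹ * x * (a * b)) := by
  rw [nw_mul cs (a * b) c, nw_mul cs a b]

lemma nw_self_of_isReflection {t : W} (ht : cs.IsReflection t) :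
    nw cs t t = Multiplicative.ofAdd 1 := by
  obtain ⟨w, i, rfl⟩ := ht
  set t := w * cs.simple i * w⁻¹ with hts
  have harg1 : w⁻¹ * t * w = cs.simple i := by rw [hts]; group
  have harg2 : (w * cs.simple i)⁻¹ * t * (w * cs.simple i) = cs.simple i := by
    rw [hts, mul_inv_rev, inv_simple]
    calc cs.simple i * w⁻¹ * (w * cs.simple i * w⁻¹) * (w * cs.simple i)
        = cs.simple i * (cs.simple i * cs.simple i) := by group
      _ = cs.simple i := by rw [cs.simple_mul_simple_self i, mul_one]
  have h0 : nw cs t t = nw cs w t * nw cs (cs.simple i) (w⁻¹ * t * w) *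
      nw cs w⁻¹ ((w * cs.simple i)⁻¹ * t * (w * cs.simple i)) := nw_mul3 cs w _ _ t
  rw [h0, harg1, harg2, nw_simple]
  have h5 : chi (cs.simple i) (cs.simple i) = Multiplicative.ofAdd 1 := by
    rw [chi]; simp
  have h4 : nw cs w⁻¹ (cs.simple i) = (nw cs w t)⁻¹ := by
    have h6 := nw_inv cs w t
    rwa [harg1] at h6
  rw [h5, h4, mul_right_comm, mul_inv_cancel, one_mul]

lemma isLeftInversion_iff_nw {w t : W} (ht : cs.IsReflection t) :
    cs.IsLeftInversion w t ↔ nw cs w t = Multiplicative.ofAdd 1 := by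
  constructor
  · intro hinv
    rcases sgn_two_cases (nw cs w t) with h | h
    · exfalso
      have h6 : nw cs (t * w) t = Multiplicative.ofAdd 1 := by
        rw [nw_mul, nw_self_of_isReflection cs ht]
        have ht3 : t⁻¹ * t * t = t := by rw [inv_mul_cancel, one_mul]
        rw [ht3, h, mul_one]
      obtain ⟨ω, hred, hw⟩ := cs.exists_reduced_word' (t * w)
      rw [hw] at h6
      have h7 := cs.isLeftInversion_of_mem_leftInvSeq hred
        ((mem_leftInvSeq_iff_nw cs hred t).mpr h6)
      rw [← hw] at h7
      have h8 : t * (t * w) = w := by rw [← mul_assoc, ht.mul_self, one_mul]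
      have h9 := h7.2
      rw [h8] at h9
      exact Nat.lt_asymm hinv.2 h9
    · exact h
  · intro h
    obtain ⟨ω, hred, hw⟩ := cs.exists_reduced_word' w
    rw [hw] at h ⊢
    exact cs.isLeftInversion_of_mem_leftInvSeq hred ((mem_leftInvSeq_iff_nw cs hred t).mpr h)

lemma mem_leftInvSeq_of_isLeftInversion {ω : List B} (hω : cs.IsReduced ω) {t : W}
    (h : cs.IsLeftInversion (π ω) t) : t ∈ cs.leftInvSeq ω :=
  (mem_leftInvSeq_iff_nw cs hω t).mpr ((isLeftInversion_iff_nw cs h.1).mp h)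

lemma isRightInversion_iff_isLeftInversion_inv {w t : W} :
    cs.IsRightInversion w t ↔ cs.IsLeftInversion w⁻¹ t := cs.isLeftInversion_inv_iff.symm

lemma mem_rightInvSeq_of_isRightInversion {ω : List B} (hω : cs.IsReduced ω) {t : W}
    (h : cs.IsRightInversion (π ω) t) : t ∈ cs.rightInvSeq ω := by
  have h1 : cs.IsLeftInversion (π ω.reverse) t := by
    rw [cs.wordProd_reverse]
    exact (isRightInversion_iff_isLeftInversion_inv cs).mp h
  have h2 := mem_leftInvSeq_of_isLeftInversion cs ((cs.isReduced_reverse_iff ω).mpr hω) h1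
  rw [cs.leftInvSeq_reverse] at h2
  exact List.mem_reverse.mp h2

/-- Strong exchange property. -/
lemma strong_exchange {ω : List B} (hω : cs.IsReduced ω) {t : W}
    (h : cs.IsRightInversion (π ω) t) :
    ∃ j, j < ω.length ∧ π (ω.eraseIdx j) = π ω * t := by
  have hmem := mem_rightInvSeq_of_isRightInversion cs hω h
  obtain ⟨j, hj, hget⟩ := List.mem_iff_getElem.mp hmem
  rw [cs.length_rightInvSeq] at hj
  refine ⟨j, hj, ?_⟩
  rw [← cs.wordProd_mul_getD_rightInvSeq ω j]
  congr 1
  rw [List.getD_eq_getElem _ 1 (by rw [cs.length_rightInvSeq]; exact hj), hget]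

/-- The cocycle dichotomy: conjugating by a simple reflection. -/
lemma isRightInversion_mul_simple_iff {w t : W} (ht : cs.IsReflection t) (i : B)
    (hne : t ≠ cs.simple i) :
    cs.IsRightInversion (w * cs.simple i) t ↔
      cs.IsRightInversion w (cs.simple i * t * cs.simple i) := by
  have hconj : cs.IsReflection (cs.simple i * t * cs.simple i) := by
    have := ht.conj (cs.simple i)
    rwa [inv_simple] at this
  rw [isRightInversion_iff_isLeftInversion_inv, isRightInversion_iff_isLeftInversion_inv,
    isLeftInversion_iff_nw cs ht, isLeftInversion_iff_nw cs hconj, mul_inv_rev, inv_simple,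
    nw_mul, nw_simple]
  have hchi : chi (cs.simple i) t = 1 := by rw [chi, if_neg hne]
  rw [hchi, one_mul, inv_simple]

end Exchange

section ReducedSublist

open CoxeterSystem List
open scoped Classical

variable {B : Type*} {W : Type*} [Group W] {M : CoxeterMatrix B} (cs : CoxeterSystem M W)

local prefix:100 "ℓ" => cs.length
local prefix:100 "π" => cs.wordProd

lemma exists_reduced_sublist (ω : List B) :
    ∃ ω' : List B, ω' <+ ω ∧ cs.IsReduced ω' ∧ π ω' = π ω := by
  obtain ⟨n, hn⟩ : ∃ n, ω.length ≤ n := ⟨ω.length, le_refl _⟩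
  induction n generalizing ω with
  | zero =>
      have : ω = [] := List.eq_nil_of_length_eq_zero (Nat.le_zero.mp hn)
      subst this
      exact ⟨[], List.Sublist.refl _, by simp [CoxeterSystem.IsReduced], rfl⟩
  | succ n ih =>
      by_cases hred : cs.IsReduced ω
      · exact ⟨ω, List.Sublist.refl _, hred, rfl⟩
      · have hex : ∃ k, ¬ cs.IsReduced (ω.take (k + 1)) := by
          refine ⟨ω.length - 1, ?_⟩
          have hlen : 1 ≤ ω.length := by
            rcases Nat.eq_zero_or_pos ω.length with h0 | h0
            · exact absurd (by simp [List.eq_nil_of_length_eq_zero h0,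
                CoxeterSystem.IsReduced] : cs.IsReduced ω) hred
            · exact h0
          rwa [Nat.sub_add_cancel hlen, List.take_length]
        set k := Nat.find hex with hk
        have hkspec : ¬ cs.IsReduced (ω.take (k + 1)) := Nat.find_spec hex
        have hktake : cs.IsReduced (ω.take k) := by
          rcases Nat.eq_zero_or_pos k with h0 | h0
          · rw [h0]; simp [CoxeterSystem.IsReduced]
          · have := Nat.find_min hex (m := k - 1) (by omega)
            rw [not_not] at this
            rwa [show k - 1 + 1 = k by omega] at this
        have hklt : k < ω.length := by
          by_contra hge
          push_neg at hge
          rw [List.take_of_length_le (by omega : ω.length ≤ k + 1)] at hkspec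
          exact hkspec (by
            rcases Nat.lt_or_ge k ω.length with h | h
            · omega
            · rwa [List.take_of_length_le h] at hktake)
        -- ω.take (k+1) = ω.take k ++ [ω[k]]
        have htake1 : ω.take (k + 1) = ω.take k ++ [ω[k]] := by
          rw [List.take_succ, List.getElem?_eq_getElem hklt]
          rfl
        have hlentake : (ω.take k).length = k := by
          rw [List.length_take]; omega
        -- descent
        have hlen1 : ℓ (π ω.take k) = k := by rw [hktake]; exact hlentake
        have hne : ℓ (π ω.take (k+1)) ≠ k + 1 := by
          intro h
          apply hkspec
          rw [CoxeterSystem.IsReduced, h, List.length_take]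
          omega
        have hprod1 : π ω.take (k+1) = π ω.take k * cs.simple ω[k] := by
          rw [htake1, cs.wordProd_append, cs.wordProd_singleton]
        have hdesc : cs.IsRightInversion (π ω.take k) (cs.simple ω[k]) := by
          refine ⟨cs.isReflection_simple _, ?_⟩
          rcases cs.length_mul_simple (π ω.take k) ω[k] with h | h
          · exfalso; apply hne; rw [hprod1, h, hlen1]
          · omega
        obtain ⟨j, hj, hjprod⟩ := strong_exchange cs hktake hdesc
        rw [hlentake] at hj
        -- new word
        set ω'' := (ω.take k).eraseIdx j ++ ω.drop (k+1) with hw''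
        have hprod'' : π ω'' = π ω := by
          rw [hw'', cs.wordProd_append, hjprod, ← hprod1, ← cs.wordProd_append,
            List.take_append_drop]
        have hsub'' : ω'' <+ ω := by
          have h1 : (ω.take k).eraseIdx j <+ ω.take k ++ [ω[k]] :=
            ((ω.take k).eraseIdx_sublist j).trans (List.sublist_append_left _ _)
          have h2 : ω'' <+ (ω.take k ++ [ω[k]]) ++ ω.drop (k+1) :=
            List.Sublist.append h1 (List.Sublist.refl _)
          rwa [← htake1, List.take_append_drop] at h2
        have hlen'' : ω''.length ≤ n := by
          rw [hw'', List.length_append, List.length_eraseIdx]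
          simp only [hlentake, if_pos (by omega : j < k), List.length_drop]
          omega
        obtain ⟨ω', hsub', hred', hprod'⟩ := ih ω'' hlen''
        exact ⟨ω', hsub'.trans hsub'', hred', by rw [hprod', hprod'']⟩

end ReducedSublist



section BruhatSetup

variable {B : Type*} {W : Type*} [Group W] {M : CoxeterMatrix B}

open CoxeterSystem List

variable (cs : CoxeterSystem M W)

local prefix:100 "ℓ" => cs.length
local prefix:100 "π" => cs.wordProd

lemma bruhatLE_refl (v : W) : BruhatLE cs v v :=
  fun ω hred hprod => ⟨ω, List.Sublist.refl _, hred, hprod⟩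

lemma bruhatLE_trans {u v w : W} (h1 : BruhatLE cs u v) (h2 : BruhatLE cs v w) :
    BruhatLE cs u w := by
  intro ω hred hprod
  obtain ⟨ω1, hs1, hr1, hp1⟩ := h2 ω hred hprod
  obtain ⟨ω2, hs2, hr2, hp2⟩ := h1 ω1 hr1 hp1
  exact ⟨ω2, hs2.trans hs1, hr2, hp2⟩

lemma bruhatLE_of_isRightInversion {v t : W} (h : cs.IsRightInversion v t) :
    BruhatLE cs (v * t) v := by
  intro ω hred hprod
  subst hprod
  obtain ⟨j, _, hjprod⟩ := strong_exchange cs hred h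
  obtain ⟨ω', hsub, hred', hprod'⟩ := exists_reduced_sublist cs (ω.eraseIdx j)
  exact ⟨ω', hsub.trans (ω.eraseIdx_sublist j), hred', by rw [hprod', hjprod]⟩

lemma bruhatLE_length_le {u v : W} (h : BruhatLE cs u v) : ℓ u ≤ ℓ v := by
  obtain ⟨ω, hred, hprod⟩ := cs.exists_reduced_word' v
  obtain ⟨ω', hsub, hred', hprod'⟩ := h ω hred hprod.symm
  calc ℓ u = ω'.length := by rw [← hprod', hred']
    _ ≤ ω.length := hsub.length_le
    _ = ℓ v := by rw [hprod, hred]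

lemma bruhatLE_eq_of_length_ge {u v : W} (h : BruhatLE cs u v) (hl : ℓ v ≤ ℓ u) : u = v := by
  obtain ⟨ω, hred, hprod⟩ := cs.exists_reduced_word' v
  obtain ⟨ω', hsub, hred', hprod'⟩ := h ω hred hprod.symm
  have hlen : ω.length ≤ ω'.length := by
    calc ω.length = ℓ v := by rw [hprod, hred]
      _ ≤ ℓ u := hl
      _ = ω'.length := by rw [← hprod', hred']
  rw [hsub.eq_of_length_le hlen] at hprod'
  rw [← hprod', hprod]

-- parabolic subgroups and words
lemma wordProd_mem_parab {L : Set B} {ω : List B} (hω : ∀ i ∈ ω, i ∈ L) :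
    π ω ∈ parab cs L := by
  induction ω with
  | nil => rw [cs.wordProd_nil]; exact one_mem _
  | cons i ω ih =>
      rw [cs.wordProd_cons]
      exact mul_mem (Subgroup.subset_closure ⟨i, hω i (List.mem_cons_self), rfl⟩)
        (ih (fun j hj => hω j (List.mem_cons_of_mem i hj)))

lemma mem_parab_iff_word {L : Set B} (x : W) :
    x ∈ parab cs L ↔ ∃ ω : List B, (∀ i ∈ ω, i ∈ L) ∧ π ω = x := by
  constructor
  · intro hx
    induction hx using Subgroup.closure_induction with
    | mem y hy =>
        obtain ⟨i, hi, rfl⟩ := hy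
        exact ⟨[i], by simpa using hi, cs.wordProd_singleton i⟩
    | one => exact ⟨[], by simp, cs.wordProd_nil⟩
    | mul y z _ _ ihy ihz =>
        obtain ⟨ωy, hy1, hy2⟩ := ihy
        obtain ⟨ωz, hz1, hz2⟩ := ihz
        exact ⟨ωy ++ ωz, fun i hi => (List.mem_append.mp hi).elim (hy1 i) (hz1 i),
          by rw [cs.wordProd_append, hy2, hz2]⟩
    | inv y _ ihy =>
        obtain ⟨ωy, hy1, hy2⟩ := ihy
        exact ⟨ωy.reverse, fun i hi => hy1 i (List.mem_reverse.mp hi),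
          by rw [cs.wordProd_reverse, hy2]⟩
  · rintro ⟨ω, hsub, rfl⟩
    exact wordProd_mem_parab cs hsub

lemma exists_reduced_word_parab {L : Set B} {x : W} (hx : x ∈ parab cs L) :
    ∃ ω : List B, (∀ i ∈ ω, i ∈ L) ∧ cs.IsReduced ω ∧ π ω = x := by
  obtain ⟨ω, hsub, hprod⟩ := (mem_parab_iff_word cs x).mp hx
  obtain ⟨ω', hsub', hred', hprod'⟩ := exists_reduced_sublist cs ω
  exact ⟨ω', fun i hi => hsub i (hsub'.subset hi), hred', by rw [hprod', hprod]⟩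

lemma parab_mono {L₁ L₂ : Set B} (h : L₁ ⊆ L₂) : parab cs L₁ ≤ parab cs L₂ :=
  Subgroup.closure_mono (Set.image_mono h)

lemma commute_simple_word {A : Set B} {i : B} (hc : ∀ a ∈ A, Commute (cs.simple i) (cs.simple a))
    {ω : List B} (hsub : ∀ a ∈ ω, a ∈ A) : Commute (cs.simple i) (π ω) := by
  induction ω with
  | nil => rw [cs.wordProd_nil]; exact Commute.one_right _
  | cons a ω ih =>
      rw [cs.wordProd_cons]
      exact Commute.mul_right (hc a (hsub a (List.mem_cons_self)))
        (ih (fun j hj => hsub j (List.mem_cons_of_mem a hj)))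

lemma commute_simple_parab {A : Set B} {i : B} (hc : ∀ a ∈ A, Commute (cs.simple i) (cs.simple a))
    {y : W} (hy : y ∈ parab cs A) : Commute (cs.simple i) y := by
  obtain ⟨ω, hsub, _, rfl⟩ := exists_reduced_word_parab cs hy
  exact commute_simple_word cs hc hsub

lemma commute_parab_parab {A C : Set B} (hc : ∀ a ∈ A, ∀ c ∈ C, Commute (cs.simple a) (cs.simple c))
    {x y : W} (hx : x ∈ parab cs A) (hy : y ∈ parab cs C) : Commute x y := by
  obtain ⟨ω, hsub, -, rfl⟩ := exists_reduced_word_parab cs hx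
  clear hx
  induction ω with
  | nil => rw [cs.wordProd_nil]; exact Commute.one_left _
  | cons a ω ih =>
      rw [cs.wordProd_cons]
      exact Commute.mul_left
        (commute_simple_parab cs (fun c hcC => hc a (hsub a (List.mem_cons_self)) c hcC) hy)
        (ih (fun j hj => hsub j (List.mem_cons_of_mem a hj)))

/-- Structure of elements of the left inversion sequence of a word with letters in `L`. -/
lemma leftInvSeq_structure {L : Set B} {ω : List B} (hsub : ∀ i ∈ ω, i ∈ L) {t : W}
    (ht : t ∈ cs.leftInvSeq ω) :
    ∃ p ∈ parab cs L, ∃ i ∈ L, t = p * cs.simple i * p⁻¹ := by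
  obtain ⟨j, hj, hget⟩ := List.mem_iff_getElem.mp ht
  rw [cs.length_leftInvSeq] at hj
  have := cs.getD_leftInvSeq ω j
  rw [List.getD_eq_getElem _ 1 (by rw [cs.length_leftInvSeq]; exact hj), hget] at this
  refine ⟨π (ω.take j), wordProd_mem_parab cs (fun i hi => hsub i ((ω.take_sublist j).subset hi)),
    ω[j], hsub _ (ω.getElem_mem hj), ?_⟩
  rw [this]
  congr 1
  rw [List.getElem?_eq_getElem hj]
  rfl

lemma mem_parab_of_mem_leftInvSeq {L : Set B} {ω : List B} (hsub : ∀ i ∈ ω, i ∈ L) {t : W}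
    (ht : t ∈ cs.leftInvSeq ω) : t ∈ parab cs L := by
  obtain ⟨p, hp, i, hi, rfl⟩ := leftInvSeq_structure cs hsub ht
  exact mul_mem (mul_mem hp (Subgroup.subset_closure ⟨i, hi, rfl⟩)) (inv_mem hp)

lemma mem_parab_of_mem_rightInvSeq {L : Set B} {ω : List B} (hsub : ∀ i ∈ ω, i ∈ L) {t : W}
    (ht : t ∈ cs.rightInvSeq ω) : t ∈ parab cs L := by
  have h1 : t ∈ cs.leftInvSeq ω.reverse := by
    rw [cs.leftInvSeq_reverse]
    exact List.mem_reverse.mpr ht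
  exact mem_parab_of_mem_leftInvSeq cs (fun i hi => hsub i (List.mem_reverse.mp hi)) h1

/-- If lengths are not additive, there is a common inversion. -/
lemma exists_common_inversion : ∀ n (u v : W), ℓ v = n → ℓ (u * v) < ℓ u + ℓ v →
    ∃ t, cs.IsRightInversion u t ∧ cs.IsLeftInversion v t := by
  intro n
  induction n using Nat.strong_induction_on with
  | _ n ih =>
      intro u v hn hlt
      have hv1 : v ≠ 1 := by
        rintro rfl
        rw [mul_one, cs.length_one] at hlt
        omega
      obtain ⟨i, hdesc⟩ := cs.exists_leftDescent_of_ne_one hv1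
      set v' := cs.simple i * v with hv'
      have hvv : v = cs.simple i * v' := by
        rw [hv', ← mul_assoc, cs.simple_mul_simple_self i, one_mul]
      have hlv' : ℓ v' + 1 = ℓ v := by
        rcases cs.length_simple_mul v i with h | h
        · exfalso
          have : ℓ v' < ℓ v := hdesc
          rw [← hv'] at h
          omega
        · rw [← hv'] at h; omega
      by_cases hdu : ℓ (u * cs.simple i) < ℓ u
      · exact ⟨cs.simple i, ⟨cs.isReflection_simple i, hdu⟩,
          ⟨cs.isReflection_simple i, hdesc⟩⟩
      · have hus : ℓ (u * cs.simple i) = ℓ u + 1 := by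
          rcases cs.length_mul_simple u i with h | h
          · exact h
          · omega
        have hprod : u * cs.simple i * v' = u * v := by
          rw [hv', ← mul_assoc, mul_assoc u _ _, cs.simple_mul_simple_self i, mul_one]
        have hlt' : ℓ (u * cs.simple i * v') < ℓ (u * cs.simple i) + ℓ v' := by
          rw [hprod, hus]; omega
        obtain ⟨t', hr', hl'⟩ := ih (ℓ v') (by omega) (u * cs.simple i) v' rfl hlt'
        have hne : t' ≠ cs.simple i := by
          rintro rfl
          have h1 := hl'.2
          rw [← hvv] at h1
          omega
        refine ⟨cs.simple i * t' * cs.simple i,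
          (isRightInversion_mul_simple_iff cs hr'.1 i hne).mp hr', ?_⟩
        constructor
        · have := hl'.1.conj (cs.simple i)
          rwa [inv_simple] at this
        · have harg : cs.simple i * t' * cs.simple i * v = cs.simple i * (t' * v') := by
            rw [hvv, ← mul_assoc, mul_assoc (cs.simple i * t') _ _,
              cs.simple_mul_simple_self i, mul_one, mul_assoc]
          rw [harg]
          have h1 : ℓ (cs.simple i * (t' * v')) ≤ ℓ (t' * v') + 1 := by
            rcases cs.length_simple_mul (t' * v') i with h | h <;> omega
          have h2 : ℓ (t' * v') < ℓ v' := hl'.2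
          omega

lemma parab_mul_additive {A C : Set B} (htriv : ∀ g, g ∈ parab cs A → g ∈ parab cs C → g = 1)
    {y z : W} (hy : y ∈ parab cs A) (hz : z ∈ parab cs C) : ℓ (y * z) = ℓ y + ℓ z := by
  refine le_antisymm (cs.length_mul_le y z) ?_
  by_contra hlt
  push_neg at hlt
  obtain ⟨t, hrt, hlt'⟩ := exists_common_inversion cs (ℓ z) y z rfl hlt
  obtain ⟨α, hαsub, hαred, hαprod⟩ := exists_reduced_word_parab cs hy
  obtain ⟨β, hβsub, hβred, hβprod⟩ := exists_reduced_word_parab cs hz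
  have htA : t ∈ parab cs A := by
    rw [← hαprod] at hrt
    exact mem_parab_of_mem_rightInvSeq cs hαsub (mem_rightInvSeq_of_isRightInversion cs hαred hrt)
  have htC : t ∈ parab cs C := by
    rw [← hβprod] at hlt'
    exact mem_parab_of_mem_leftInvSeq cs hβsub (mem_leftInvSeq_of_isLeftInversion cs hβred hlt')
  have ht1 : t = 1 := htriv t htA htC
  have hodd := hrt.1.odd_length
  rw [ht1, cs.length_one] at hodd
  have := Nat.odd_iff.mp hodd
  omega

/-- Existence of a minimal length element in a coset `g * W_L`. -/
lemma exists_min_coset (L : Set B) (g : W) :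
    ∃ q₀ ∈ parab cs L, ∀ q ∈ parab cs L, ℓ (g * q₀) ≤ ℓ (g * q) := by
  set S : Set ℕ := {n | ∃ q ∈ parab cs L, ℓ (g * q) = n} with hS
  have hne : S.Nonempty := ⟨ℓ (g * 1), 1, one_mem _, rfl⟩
  obtain ⟨q₀, hq₀, hval⟩ := Nat.sInf_mem hne
  exact ⟨q₀, hq₀, fun q hq => hval ▸ Nat.sInf_le ⟨q, hq, rfl⟩⟩

lemma min_coset_additive {L : Set B} {d : W} (hmin : ∀ q ∈ parab cs L, ℓ d ≤ ℓ (d * q))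
    {z : W} (hz : z ∈ parab cs L) : ℓ (d * z) = ℓ d + ℓ z := by
  refine le_antisymm (cs.length_mul_le d z) ?_
  by_contra hlt
  push_neg at hlt
  obtain ⟨t, hrt, hlt'⟩ := exists_common_inversion cs (ℓ z) d z rfl hlt
  obtain ⟨β, hβsub, hβred, hβprod⟩ := exists_reduced_word_parab cs hz
  have htL : t ∈ parab cs L := by
    rw [← hβprod] at hlt'
    exact mem_parab_of_mem_leftInvSeq cs hβsub (mem_leftInvSeq_of_isLeftInversion cs hβred hlt')
  exact absurd (hmin t htL) (not_le.mpr hrt.2)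

lemma exists_parab_descent {L : Set B} {q : W} (hq : q ∈ parab cs L) (hne : q ≠ 1) :
    ∃ l ∈ L, ℓ (q * cs.simple l) < ℓ q := by
  obtain ⟨ω, hsub, hred, hprod⟩ := exists_reduced_word_parab cs hq
  have hωne : ω ≠ [] := by
    rintro rfl
    exact hne (by rw [← hprod, cs.wordProd_nil])
  refine ⟨ω.getLast hωne, hsub _ (List.getLast_mem hωne), ?_⟩
  have hsplit : ω = ω.dropLast ++ [ω.getLast hωne] := (List.dropLast_append_getLast hωne).symm
  have hprod2 : q * cs.simple (ω.getLast hωne) = π ω.dropLast := by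
    rw [← hprod]
    nth_rewrite 1 [hsplit]
    rw [cs.wordProd_append, cs.wordProd_singleton, mul_assoc,
      cs.simple_mul_simple_self, mul_one]
  have h1 : ℓ (q * cs.simple (ω.getLast hωne)) ≤ ω.dropLast.length :=
    hprod2 ▸ cs.length_wordProd_le _
  have h2 : ω.dropLast.length = ω.length - 1 := List.length_dropLast
  have h3 : ℓ q = ω.length := by rw [← hprod, hred]
  have h4 : 0 < ω.length := List.length_pos_iff.mpr hωne
  omega

lemma minReps_additive {L : Set B} {w : W} (hw : w ∈ minReps cs L) {q : W}
    (hq : q ∈ parab cs L) : ℓ (w * q) = ℓ w + ℓ q := by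
  obtain ⟨q₀, hq₀, hq₀min⟩ := exists_min_coset cs L w
  set d := w * q₀ with hd
  have hdmin : ∀ p ∈ parab cs L, ℓ d ≤ ℓ (d * p) := by
    intro p hp
    rw [hd, mul_assoc]
    exact hq₀min _ (mul_mem hq₀ hp)
  have hq₀inv : q₀⁻¹ ∈ parab cs L := inv_mem hq₀
  have hwq : w = d * q₀⁻¹ := by rw [hd, mul_assoc, mul_inv_cancel, mul_one]
  have hq₀eq : q₀ = 1 := by
    by_contra hq₀ne
    have hinvne : q₀⁻¹ ≠ 1 := fun h => hq₀ne (by rwa [inv_eq_one] at h)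
    obtain ⟨l, hl, hdescq⟩ := exists_parab_descent cs hq₀inv hinvne
    have h1 : ℓ (w * cs.simple l) = ℓ d + ℓ (q₀⁻¹ * cs.simple l) := by
      rw [hwq, mul_assoc]
      exact min_coset_additive cs hdmin
        (mul_mem hq₀inv (Subgroup.subset_closure ⟨l, hl, rfl⟩))
    have h2 : ℓ w = ℓ d + ℓ q₀⁻¹ := by
      rw [hwq]
      exact min_coset_additive cs hdmin hq₀inv
    have h3 := hw l hl
    omega
  rw [hq₀eq, mul_one] at hd
  have := min_coset_additive cs hdmin hq
  rwa [hd] at this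

lemma minReps_mul_simple {L : Set B} {w : W} (hw : w ∈ minReps cs L) {i : B}
    (hcomm : ∀ l ∈ L, Commute (cs.simple i) (cs.simple l))
    (hnel : ∀ l ∈ L, cs.simple i ≠ cs.simple l) :
    w * cs.simple i ∈ minReps cs L := by
  intro l hl
  have hwl : ℓ (w * cs.simple l) = ℓ w + 1 := by
    rcases cs.length_mul_simple w l with h | h
    · exact h
    · exfalso; have := hw l hl; omega
  rcases cs.length_mul_simple w i with hcase | hcase
  · -- ℓ(w s_i) = ℓ w + 1
    rw [hcase]
    by_contra hcon
    push_neg at hcon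
    have hwsil : ℓ (w * cs.simple i * cs.simple l) = ℓ w := by
      rcases cs.length_mul_simple (w * cs.simple i) l with h | h
      · omega
      · omega
    obtain ⟨ω, hωlen, hωprod⟩ := cs.exists_reduced_word w
    replace hωlen : ω.length = ℓ w := by rw [hωprod]; exact hωlen.symm
    have hredwl : cs.IsReduced (ω ++ [l]) := by
      rw [CoxeterSystem.IsReduced, cs.wordProd_append, cs.wordProd_singleton, ← hωprod,
        List.length_append, hωlen]
      simpa using hwl
    have hcommil : w * cs.simple l * cs.simple i = w * cs.simple i * cs.simple l := by
      rw [mul_assoc, mul_assoc, (hcomm l hl).eq]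
    have hinv : cs.IsRightInversion (π (ω ++ [l])) (cs.simple i) := by
      refine ⟨cs.isReflection_simple i, ?_⟩
      rw [cs.wordProd_append, cs.wordProd_singleton, ← hωprod, hcommil, hwsil, hwl]
      omega
    obtain ⟨j, hj, hjprod⟩ := strong_exchange cs hredwl hinv
    rw [List.length_append, hωlen] at hj
    rw [cs.wordProd_append, cs.wordProd_singleton, ← hωprod] at hjprod
    rcases Nat.lt_or_ge j ω.length with hjlt | hjge
    · have herase : (ω ++ [l]).eraseIdx j = ω.eraseIdx j ++ [l] :=
        List.eraseIdx_append_of_lt_length hjlt _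
      rw [herase, cs.wordProd_append, cs.wordProd_singleton, hcommil] at hjprod
      have h5 : π (ω.eraseIdx j) = w * cs.simple i := mul_right_cancel hjprod
      have h6 : ℓ (w * cs.simple i) ≤ (ω.eraseIdx j).length := h5 ▸ cs.length_wordProd_le _
      have h7 : (ω.eraseIdx j).length = ω.length - 1 := by
        rw [List.length_eraseIdx, if_pos hjlt]
      omega
    · have hjeq : j = ω.length := by simp at hj; omega
      have herase : (ω ++ [l]).eraseIdx j = ω := by
        rw [hjeq, List.eraseIdx_append_of_length_le (le_refl _), Nat.sub_self]
        simp
      rw [herase, ← hωprod] at hjprod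
      have h8 : cs.simple l * cs.simple i = 1 := by
        have := hjprod
        calc cs.simple l * cs.simple i = w⁻¹ * (w * cs.simple l * cs.simple i) := by group
          _ = w⁻¹ * w := by rw [← this]
          _ = 1 := inv_mul_cancel w
      have h9 : cs.simple i = cs.simple l := by
        calc cs.simple i = cs.simple l * (cs.simple l * cs.simple i) := by
              rw [← mul_assoc, cs.simple_mul_simple_self l, one_mul]
          _ = cs.simple l := by rw [h8, mul_one]
      exact hnel l hl h9
  · -- ℓ(w s_i) = ℓ w - 1
    have hcommil : w * cs.simple i * cs.simple l = w * cs.simple l * cs.simple i := by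
      rw [mul_assoc, mul_assoc, (hcomm l hl).eq]
    rw [hcommil]
    have h1 : ℓ (w * cs.simple l) ≤ ℓ (w * cs.simple l * cs.simple i) + 1 := by
      rcases cs.length_mul_simple (w * cs.simple l) i with h | h <;> omega
    omega

lemma minReps_mul_parab {L A : Set B} {w : W} (hw : w ∈ minReps cs L)
    (hcomm : ∀ a ∈ A, ∀ l ∈ L, Commute (cs.simple a) (cs.simple l))
    (hnel : ∀ a ∈ A, ∀ l ∈ L, cs.simple a ≠ cs.simple l)
    {x : W} (hx : x ∈ parab cs A) : w * x ∈ minReps cs L := by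
  obtain ⟨ω, hsub, -, rfl⟩ := exists_reduced_word_parab cs hx
  clear hx
  induction ω generalizing w with
  | nil => rw [cs.wordProd_nil, mul_one]; exact hw
  | cons a ω ih =>
      rw [cs.wordProd_cons, ← mul_assoc]
      have ha : a ∈ A := hsub a (List.mem_cons_self)
      exact ih (minReps_mul_simple cs hw (hcomm a ha) (hnel a ha))
        (fun j hj => hsub j (List.mem_cons_of_mem a hj))


section Sigma

variable {I J K : Set B} {σW : W → W} (h : GoodSetup cs I J K σW)

include h

lemma sg_one : σW 1 = 1 := by
  have h1 := h.mulSigma 1 (one_mem _) 1 (one_mem _)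
  rw [mul_one] at h1
  exact left_eq_mul.mp h1

lemma sg_word {ω : List B} (hsub : ∀ i ∈ ω, i ∈ I) :
    ∃ ω' : List B, (∀ j ∈ ω', j ∈ J ∧ ∃ i ∈ I, σW (cs.simple i) = cs.simple j) ∧
      ω'.length = ω.length ∧ σW (π ω) = π ω' := by
  induction ω with
  | nil =>
      exact ⟨[], by simp, rfl, by simp only [cs.wordProd_nil]; exact sg_one cs h⟩
  | cons i ω ih =>
      obtain ⟨ω', hω'1, hω'2, hω'3⟩ := ih (fun b hb => hsub b (List.mem_cons_of_mem i hb))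
      have hiI : i ∈ I := hsub i (List.mem_cons_self)
      obtain ⟨j, hjJ, hj⟩ := h.simpleSigma i hiI
      refine ⟨j :: ω', ?_, by simp [hω'2], ?_⟩
      · intro b hb
        rcases List.mem_cons.mp hb with hb | hb
        · exact hb ▸ ⟨hjJ, i, hiI, hj⟩
        · exact hω'1 b hb
      · rw [cs.wordProd_cons, cs.wordProd_cons,
          h.mulSigma _ (Subgroup.subset_closure ⟨i, hiI, rfl⟩) _
            (wordProd_mem_parab cs (fun b hb => hsub b (List.mem_cons_of_mem i hb))),
          hj, hω'3]

lemma sg_simple_surj {j : B} (hj : j ∈ J) : ∃ i ∈ I, σW (cs.simple i) = cs.simple j := by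
  have hsj : cs.simple j ∈ (parab cs J : Set W) := Subgroup.subset_closure ⟨j, hj, rfl⟩
  obtain ⟨y, hyI, hy⟩ := h.bijSigma.surjOn hsj
  obtain ⟨ω, hωsub, -, hωprod⟩ := exists_reduced_word_parab cs hyI
  obtain ⟨ω', hω'1, hω'2, hω'3⟩ := sg_word cs h hωsub
  rw [hωprod, hy] at hω'3
  obtain ⟨ω'', hsub'', hred'', hprod''⟩ := exists_reduced_sublist cs ω'
  rw [← hω'3] at hprod''
  have hlen'' : ω''.length = 1 := by
    rw [← hred'', hprod'', cs.length_simple]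
  obtain ⟨b, hb⟩ := List.length_eq_one_iff.mp hlen''
  have hbmem : b ∈ ω' := hsub''.subset (hb ▸ List.mem_singleton_self b)
  obtain ⟨-, i, hiI, hi⟩ := hω'1 b hbmem
  rw [hb, cs.wordProd_singleton] at hprod''
  exact ⟨i, hiI, by rw [hi, hprod'']⟩

lemma sg_word_rev {ω' : List B} (hsub : ∀ j ∈ ω', j ∈ J) :
    ∃ ω : List B, (∀ i ∈ ω, i ∈ I) ∧ ω.length = ω'.length ∧ σW (π ω) = π ω' := by
  induction ω' with
  | nil => exact ⟨[], by simp, rfl, by simp only [cs.wordProd_nil]; exact sg_one cs h⟩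
  | cons j ω' ih =>
      obtain ⟨ω, hω1, hω2, hω3⟩ := ih (fun b hb => hsub b (List.mem_cons_of_mem j hb))
      obtain ⟨i, hiI, hi⟩ := sg_simple_surj cs h (hsub j (List.mem_cons_self))
      refine ⟨i :: ω, ?_, by simp [hω2], ?_⟩
      · intro b hb
        rcases List.mem_cons.mp hb with hb | hb
        · exact hb ▸ hiI
        · exact hω1 b hb
      · rw [cs.wordProd_cons, cs.wordProd_cons,
          h.mulSigma _ (Subgroup.subset_closure ⟨i, hiI, rfl⟩) _
            (wordProd_mem_parab cs hω1), hi, hω3]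

lemma sg_len {x : W} (hx : x ∈ parab cs I) : ℓ (σW x) = ℓ x := by
  refine le_antisymm ?_ ?_
  · obtain ⟨ω, hωsub, hωred, hωprod⟩ := exists_reduced_word_parab cs hx
    obtain ⟨ω', hω'1, hω'2, hω'3⟩ := sg_word cs h hωsub
    rw [← hωprod, hω'3]
    calc ℓ (π ω') ≤ ω'.length := cs.length_wordProd_le _
      _ = ω.length := hω'2
      _ = ℓ (π ω) := hωred.symm
  · have hσx : σW x ∈ (parab cs J : Set W) := h.bijSigma.mapsTo hx
    obtain ⟨β, hβsub, hβred, hβprod⟩ := exists_reduced_word_parab cs hσx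
    obtain ⟨α, hα1, hα2, hα3⟩ := sg_word_rev cs h hβsub
    have hxeq : x = π α := by
      apply h.bijSigma.injOn hx (wordProd_mem_parab cs hα1)
      rw [hα3, hβprod]
    calc ℓ x = ℓ (π α) := by rw [← hxeq]
      _ ≤ α.length := cs.length_wordProd_le _
      _ = β.length := hα2
      _ = ℓ (σW x) := by rw [← hβred, hβprod]

lemma sg_inv {x : W} (hx : x ∈ parab cs I) : σW x⁻¹ = (σW x)⁻¹ := by
  have h1 := h.mulSigma x hx x⁻¹ (inv_mem hx)
  rw [mul_inv_cancel, sg_one cs h] at h1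
  exact (eq_inv_of_mul_eq_one_right h1.symm : _)

lemma sg_reflection {p : W} (hp : p ∈ parab cs I) {i : B} (hi : i ∈ I) :
    cs.IsReflection (σW (p * cs.simple i * p⁻¹)) := by
  have hsi : cs.simple i ∈ parab cs I := Subgroup.subset_closure ⟨i, hi, rfl⟩
  have h1 : σW (p * cs.simple i * p⁻¹) = σW p * σW (cs.simple i) * (σW p)⁻¹ := by
    rw [h.mulSigma _ (mul_mem hp hsi) _ (inv_mem hp),
      h.mulSigma _ hp _ hsi, sg_inv cs h hp]
  obtain ⟨j, -, hj⟩ := h.simpleSigma i hi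
  rw [h1, hj]
  exact (cs.isReflection_simple j).conj _

end Sigma


section Main

variable {I J K : Set B} {σW : W → W} (h : GoodSetup cs I J K σW) {w : W}
  (hw : w ∈ minReps cs (J ∪ K))

include h

lemma hIcommL : ∀ i ∈ I, ∀ l ∈ J ∪ K, Commute (cs.simple i) (cs.simple l) := by
  intro i hi l hl
  rcases hl with hl | hl
  · exact h.commIJ i hi l hl
  · exact h.commIK i hi l hl

omit h in
lemma simple_ne_one_aux (i : B) : cs.simple i ≠ 1 := by
  intro heq
  have h1 : ℓ (cs.simple i) = 1 := cs.length_simple i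
  rw [heq, cs.length_one] at h1
  omega

lemma hInelL : ∀ i ∈ I, ∀ l ∈ J ∪ K, cs.simple i ≠ cs.simple l := by
  intro i hi l hl heq
  have hsi : cs.simple i ∈ parab cs I := Subgroup.subset_closure ⟨i, hi, rfl⟩
  rcases hl with hl | hl
  · have hsl : (cs.simple l)⁻¹ ∈ parab cs J :=
      inv_mem (Subgroup.subset_closure ⟨l, hl, rfl⟩)
    have := (h.directProd _ hsi _ hsl 1 (one_mem _)
      (by rw [heq, mul_inv_cancel, one_mul])).1
    exact simple_ne_one_aux cs i this
  · have hsl : (cs.simple l)⁻¹ ∈ parab cs K :=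
      inv_mem (Subgroup.subset_closure ⟨l, hl, rfl⟩)
    have := (h.directProd _ hsi 1 (one_mem _) _ hsl
      (by rw [mul_one, heq, mul_inv_cancel])).1
    exact simple_ne_one_aux cs i this

lemma JK_triv : ∀ g, g ∈ parab cs J → g ∈ parab cs K → g = 1 := by
  intro g hgJ hgK
  exact (h.directProd 1 (one_mem _) g hgJ g⁻¹ (inv_mem hgK)
    (by rw [one_mul, mul_inv_cancel])).2.1

include hw

lemma waq_additive : ∀ x ∈ parab cs I, ∀ q ∈ parab cs (J ∪ K),
    ℓ (w * x * q) = ℓ (w * x) + ℓ q := by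
  intro x hx q hq
  exact minReps_additive cs
    (minReps_mul_parab cs hw (hIcommL cs h) (hInelL cs h) hx) hq

lemma coset_length : ∀ a ∈ parab cs K, ∀ x ∈ parab cs I,
    ℓ (w * a * (x * σW x)) = ℓ (w * x) + ℓ x + ℓ a := by
  intro a ha x hx
  have hσx : σW x ∈ parab cs J := h.bijSigma.mapsTo hx
  have hcom_ax : Commute a x := commute_parab_parab cs
    (fun k hk i hi => (h.commIK i hi k hk).symm) ha hx
  have hcom_aσx : Commute a (σW x) := commute_parab_parab cs
    (fun k hk j hj => (h.commJK j hj k hk).symm) ha hσx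
  have heq : w * a * (x * σW x) = w * x * (σW x * a) := by
    calc w * a * (x * σW x) = w * (a * x) * σW x := by group
      _ = w * (x * a) * σW x := by rw [hcom_ax.eq]
      _ = w * x * (a * σW x) := by group
      _ = w * x * (σW x * a) := by rw [hcom_aσx.eq]
  have hσxJK : σW x * a ∈ parab cs (J ∪ K) :=
    mul_mem (parab_mono cs Set.subset_union_left hσx)
      (parab_mono cs Set.subset_union_right ha)
  rw [heq, waq_additive cs h hw x hx _ hσxJK,
    parab_mul_additive cs (JK_triv cs h) hσx ha, sg_len cs h hx]
  ring

lemma coset_length_lb : ∀ a ∈ parab cs K, ∀ x ∈ parab cs I,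
    ℓ w ≤ ℓ (w * a * (x * σW x)) := by
  intro a ha x hx
  rw [coset_length cs h hw a ha x hx]
  have h1 : ℓ w ≤ ℓ (w * x) + ℓ x := by
    have h2 : w = (w * x) * x⁻¹ := by group
    calc ℓ w = ℓ ((w * x) * x⁻¹) := by rw [← h2]
      _ ≤ ℓ (w * x) + ℓ x⁻¹ := cs.length_mul_le _ _
      _ = ℓ (w * x) + ℓ x := by rw [cs.length_inv]
  omega

lemma minc_le : ∀ v, inCoset cs I K σW w v →
    ∃ u ∈ MinC cs I K σW w, BruhatLE cs u v := by
  suffices key : ∀ n, ∀ v, inCoset cs I K σW w v → ℓ v = n →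
      ∃ u ∈ MinC cs I K σW w, BruhatLE cs u v by
    intro v hv
    exact key (ℓ v) v hv rfl
  intro n
  induction n using Nat.strong_induction_on with
  | _ n ih =>
      rintro v ⟨a, ha, x, hx, rfl⟩ hn
      set v := w * a * (x * σW x) with hv
      have hlv : ℓ v = ℓ (w * x) + ℓ x + ℓ a := coset_length cs h hw a ha x hx
      have hlb : ℓ w ≤ ℓ v := coset_length_lb cs h hw a ha x hx
      by_cases hmin : ℓ v = ℓ w
      · exact ⟨v, ⟨⟨a, ha, x, hx, rfl⟩, hmin⟩, bruhatLE_refl cs v⟩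
      · have hgt : ℓ w < ℓ v := lt_of_le_of_ne hlb (fun hh => hmin hh.symm)
        by_cases ha1 : a = 1
        · -- strip from the W_I part
          subst ha1
          have hσx : σW x ∈ parab cs J := h.bijSigma.mapsTo hx
          have hx1 : x ≠ 1 := by
            rintro rfl
            rw [cs.length_one] at hlv
            have : v = w := by rw [hv, sg_one cs h]; group
            rw [this] at hgt
            omega
          have hadd : ℓ ((w * x) * x⁻¹) < ℓ (w * x) + ℓ x⁻¹ := by
            have : (w * x) * x⁻¹ = w := by group
            rw [this, cs.length_inv]
            rw [cs.length_one] at hlv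
            omega
          obtain ⟨t, hrt, hlt⟩ := exists_common_inversion cs (ℓ x⁻¹) (w * x) x⁻¹ rfl hadd
          obtain ⟨β, hβsub, hβred, hβprod⟩ := exists_reduced_word_parab cs (inv_mem hx)
          have htmem : t ∈ cs.leftInvSeq β := by
            apply mem_leftInvSeq_of_isLeftInversion cs hβred
            rwa [hβprod]
          obtain ⟨p, hp, i, hiI, hteq⟩ := leftInvSeq_structure cs hβsub htmem
          have htI : t ∈ parab cs I := mem_parab_of_mem_leftInvSeq cs hβsub htmem
          have ht_refl : cs.IsReflection t := hrt.1
          set x₁ := x * t with hx₁def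
          have hx₁ : x₁ ∈ parab cs I := mul_mem hx htI
          have hlenx₁ : ℓ x₁ < ℓ x := by
            have h1 : x₁⁻¹ = t * x⁻¹ := by
              rw [hx₁def, mul_inv_rev, ht_refl.inv]
            calc ℓ x₁ = ℓ x₁⁻¹ := (cs.length_inv _).symm
              _ = ℓ (t * x⁻¹) := by rw [h1]
              _ < ℓ x⁻¹ := hlt.2
              _ = ℓ x := cs.length_inv _
          have hσt_refl : cs.IsReflection (σW t) := by
            rw [hteq]; exact sg_reflection cs h hp hiI
          have hσx₁ : σW x₁ = σW x * σW t := h.mulSigma x hx t htI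
          have hσx₁J : σW x₁ ∈ parab cs J := h.bijSigma.mapsTo hx₁
          -- first step : m = v * σW t
          have hm_eq : v * σW t = w * x * σW x₁ := by
            rw [hv, hσx₁]; group
          have hlm : ℓ (v * σW t) = ℓ (w * x) + ℓ x₁ := by
            rw [hm_eq, waq_additive cs h hw x hx _
              (parab_mono cs Set.subset_union_left hσx₁J), sg_len cs h hx₁]
          have hlm_lt : ℓ (v * σW t) < ℓ v := by
            rw [hlm, hlv, cs.length_one]
            omega
          have step1 : BruhatLE cs (v * σW t) v :=
            bruhatLE_of_isRightInversion cs ⟨hσt_refl, hlm_lt⟩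
          -- second step: v₁ = (v * σW t) * t
          have hcom_tσx₁ : Commute t (σW x₁) := commute_parab_parab cs h.commIJ htI hσx₁J
          have hv₁_eq : (v * σW t) * t = w * x₁ * (x₁⁻¹ * (x₁ * σW x₁)) := by
            rw [hm_eq, hx₁def]
            calc w * x * σW x₁ * t = w * (x * (σW x₁ * t)) := by group
              _ = w * (x * (t * σW x₁)) := by rw [hcom_tσx₁.eq]
              _ = w * (x * t) * σW x₁ := by group
              _ = w * (x * t) * ((x * t)⁻¹ * ((x * t) * σW x₁)) := by group
          have hv₁_eq' : (v * σW t) * t = w * x₁ * σW x₁ := by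
            rw [hv₁_eq]; group
          have hlv₁ : ℓ ((v * σW t) * t) = ℓ (w * x₁) + ℓ x₁ := by
            have : w * x₁ * σW x₁ = w * x₁ * (σW x₁) := rfl
            rw [hv₁_eq', waq_additive cs h hw x₁ hx₁ _
              (parab_mono cs Set.subset_union_left hσx₁J), sg_len cs h hx₁]
          have hlwx₁ : ℓ (w * x₁) < ℓ (w * x) := by
            have : w * x₁ = (w * x) * t := by rw [hx₁def]; group
            rw [this]
            exact hrt.2
          have hlv₁_lt : ℓ ((v * σW t) * t) < ℓ (v * σW t) := by
            rw [hlv₁, hlm]; omega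
          have step2 : BruhatLE cs ((v * σW t) * t) (v * σW t) :=
            bruhatLE_of_isRightInversion cs ⟨ht_refl, hlv₁_lt⟩
          have hcoset₁ : inCoset cs I K σW w ((v * σW t) * t) :=
            ⟨1, one_mem _, x₁, hx₁, by rw [hv₁_eq', mul_one, mul_assoc]⟩
          obtain ⟨u, hu, hle⟩ := ih (ℓ ((v * σW t) * t)) (by omega) _ hcoset₁ rfl
          exact ⟨u, hu, bruhatLE_trans cs (bruhatLE_trans cs hle step2) step1⟩
        · -- strip a letter from the W_K part
          obtain ⟨l, hlK, hdesc⟩ := exists_parab_descent cs ha ha1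
          set a' := a * cs.simple l with ha'def
          have ha' : a' ∈ parab cs K := mul_mem ha (Subgroup.subset_closure ⟨l, hlK, rfl⟩)
          have hslK : cs.simple l ∈ parab cs K := Subgroup.subset_closure ⟨l, hlK, rfl⟩
          have hcom_lx : Commute (cs.simple l) x := commute_parab_parab cs
            (fun k hk i hi => (h.commIK i hi k hk).symm) hslK hx
          have hcom_lσx : Commute (cs.simple l) (σW x) := commute_parab_parab cs
            (fun k hk j hj => (h.commJK j hj k hk).symm) hslK (h.bijSigma.mapsTo hx)
          have hv'_eq : v * cs.simple l = w * a' * (x * σW x) := by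
            rw [hv, ha'def]
            calc w * a * (x * σW x) * cs.simple l
                = w * a * (x * (σW x * cs.simple l)) := by group
              _ = w * a * (x * (cs.simple l * σW x)) := by rw [hcom_lσx.eq]
              _ = w * a * ((x * cs.simple l) * σW x) := by group
              _ = w * a * ((cs.simple l * x) * σW x) := by rw [hcom_lx.eq]
              _ = w * (a * cs.simple l) * (x * σW x) := by group
          have hlv' : ℓ (v * cs.simple l) < ℓ v := by
            rw [hv'_eq, coset_length cs h hw a' ha' x hx, hlv]
            omega
          have step : BruhatLE cs (v * cs.simple l) v :=
            bruhatLE_of_isRightInversion cs ⟨cs.isReflection_simple l, hlv'⟩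
          obtain ⟨u, hu, hle⟩ := ih (ℓ (v * cs.simple l)) (by omega) _
            (by rw [hv'_eq]; exact ⟨a', ha', x, hx, rfl⟩) rfl
          exact ⟨u, hu, bruhatLE_trans cs hle step⟩

end Main


theorem statement_8 (cs : CoxeterSystem M W) (I J K : Set B) (σ : W → W)
    (h : GoodSetup cs I J K σ) (w : W) (hw : w ∈ minReps cs (J ∪ K)) :
    (∀ v, inCoset cs I K σ w v → ∃ u ∈ MinC cs I K σ w, BruhatLE cs u v) ∧
    MinC cs I K σ w =
      {v : W | inCoset cs I K σ w v ∧
        ∀ v', inCoset cs I K σ w v' → BruhatLE cs v' v → v' = v} := by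
  constructor
  · exact minc_le cs h hw
  · ext v
    simp only [Set.mem_setOf_eq, MinC]
    constructor
    · rintro ⟨hcos, hlen⟩
      refine ⟨hcos, ?_⟩
      intro v' hv' hle
      have hge : cs.length w ≤ cs.length v' := by
        obtain ⟨a, ha, x, hx, rfl⟩ := hv'
        exact coset_length_lb cs h hw a ha x hx
      exact bruhatLE_eq_of_length_ge cs hle (by rw [hlen]; exact hge)
    · rintro ⟨hcos, hmin⟩
      obtain ⟨u, hu, hle⟩ := minc_le cs h hw v hcos
      have heq := hmin u hu.1 hle
      rw [← heq]
      exact hu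

end BruhatSetup
end

section
/- With the setup of ≤_O, suppose additionally that W_I is finite with longest element w_{0,I}, and set L = I∪J∪K. Then the set of minimal-length coset elements intersected with W_L equals {u v* : u, v ∈ W_I, u ≤_R w_{0,I} v}, where ≤_R is the right weak order. -/
section BruhatSetup

variable {B : Type*} {W : Type*} [Group W] {M : CoxeterMatrix B}

section CoxAuxSection

namespace CoxAux

open CoxeterSystem List

variable [DecidableEq W]
variable (cs : CoxeterSystem M W)

local prefix:100 "s" => cs.simple
local prefix:100 "π" => cs.wordProd
local prefix:100 "ℓ" => cs.length

/-- The function underlying the basic involution of the reflection-permutation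
representation. -/
def etaFun (i : B) : W × ZMod 2 → W × ZMod 2 :=
  fun p => (s i * p.1 * s i, p.2 + if p.1 = s i then 1 else 0)

lemma etaFun_involutive (i : B) : Function.Involutive (etaFun cs i) := by
  intro p
  obtain ⟨t, e⟩ := p
  show (s i * (s i * t * s i) * s i,
      (e + if t = s i then 1 else 0) + if s i * t * s i = s i then 1 else 0) = (t, e)
  have hfst : s i * (s i * t * s i) * s i = t := by
    have h1 : s i * (s i * t * s i) * s i = (s i * s i) * t * (s i * s i) := by group
    rw [h1, cs.simple_mul_simple_self]
    group
  have hcond : (s i * t * s i = s i) ↔ (t = s i) := by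
    constructor
    · intro hc
      have := congrArg (fun z => s i * z * s i) hc
      rw [← hfst]
      rw [hc]
      simp
    · intro hc; rw [hc]; simp
  refine Prod.ext hfst ?_
  show ((e + if t = s i then 1 else 0) + if s i * t * s i = s i then 1 else 0) = e
  rw [if_congr hcond rfl rfl]
  by_cases h : t = s i
  · rw [if_pos h, add_assoc]
    have h11 : (1 : ZMod 2) + 1 = 0 := rfl
    rw [h11, add_zero]
  · rw [if_neg h, add_zero, add_zero]

/-- The basic involution in the reflection-permutation representation. -/
def eta (i : B) : Equiv.Perm (W × ZMod 2) := (etaFun_involutive cs i).toPerm _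

lemma eta_apply (i : B) (t : W) (e : ZMod 2) :
    eta cs i (t, e) = (s i * t * s i, e + if t = s i then 1 else 0) := rfl

lemma eta_pow (i j : B) (k : ℕ) (t : W) (e : ZMod 2) :
    ((eta cs i * eta cs j) ^ k) (t, e) =
      ((s i * s j) ^ k * t * ((s i * s j) ^ k)⁻¹,
        e + ∑ r ∈ Finset.range (2 * k), (if t = (s j * s i) ^ r * s j then 1 else 0)) := by
  induction k generalizing t e with
  | zero => simp
  | succ k ih =>
    rw [pow_succ, Equiv.Perm.mul_apply]
    have h1 : (eta cs i * eta cs j) (t, e) =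
        (s i * s j * t * (s i * s j)⁻¹,
          e + ((if t = (s j * s i) ^ 0 * s j then 1 else 0)
            + (if t = (s j * s i) ^ 1 * s j then 1 else 0))) := by
      rw [Equiv.Perm.mul_apply, eta_apply, eta_apply]
      have hc : (s j * t * s j = s i) ↔ (t = s j * s i * s j) := by
        constructor
        · intro h
          have := congrArg (fun z => s j * z * s j) h
          simpa [mul_assoc] using this
        · intro h; subst h; simp [mul_assoc]
      refine Prod.ext ?_ ?_
      · simp [mul_assoc]
      · simp only
        rw [if_congr hc rfl rfl]
        simp [add_assoc, mul_assoc]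
    rw [h1, ih]
    refine Prod.ext ?_ ?_
    · simp only
      rw [pow_succ]
      group
    · simp only
      rw [add_assoc]
      congr 1
      have e1 : ∀ r : ℕ, s i * s j * ((s j * s i) ^ (r + 2) * s j) * (s i * s j)⁻¹
          = (s j * s i) ^ r * s j := by
        intro r
        have hisj : s i * s j = ((s j : W) * s i)⁻¹ := by
          rw [mul_inv_rev, inv_simple, inv_simple]
        rw [hisj, inv_inv]
        have c1 : ((s j : W) * s i) ^ (r + 2) = (s j * s i) * (s j * s i) ^ (r + 1) :=
          pow_succ' _ _
        rw [c1, mul_assoc (s j * s i) _ (s j), inv_mul_cancel_left, pow_succ,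
          mul_assoc, mul_assoc]
        congr 1
        rw [simple_mul_simple_cancel_left, simple_mul_simple_cancel_right]
      have hshift : ∀ r : ℕ, ((s i * s j) * t * (s i * s j)⁻¹ = (s j * s i) ^ r * s j
          ↔ t = (s j * s i) ^ (r + 2) * s j) := by
        intro r
        constructor
        · intro h
          have h' := h.trans (e1 r).symm
          exact mul_left_cancel (mul_right_cancel h')
        · intro h
          rw [h]
          exact e1 r
      have hsum : ∑ r ∈ Finset.range (2 * k),
            (if (s i * s j) * t * (s i * s j)⁻¹ = (s j * s i) ^ r * s j then (1 : ZMod 2) else 0)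
          = ∑ r ∈ Finset.range (2 * k), (if t = (s j * s i) ^ (r + 2) * s j then 1 else 0) := by
        apply Finset.sum_congr rfl
        intro r _
        rw [if_congr (hshift r) rfl rfl]
      rw [hsum]
      have h2k : 2 * (k + 1) = (2 * k + 1) + 1 := by ring
      rw [h2k, Finset.sum_range_succ', Finset.sum_range_succ']
      simp [add_comm, add_assoc, add_left_comm]

lemma eta_liftable : M.IsLiftable (fun i => eta cs i) := by
  intro i j
  ext ⟨t, e⟩
  · rw [eta_pow]
    simp only [cs.simple_mul_simple_pow i j, one_mul, inv_one, mul_one, Equiv.Perm.one_apply]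
  · rw [eta_pow]
    simp only [Equiv.Perm.one_apply]
    have hx : ((s j : W) * s i) ^ M.M j i = 1 := cs.simple_mul_simple_pow j i
    have hMsymm : M.M i j = M.M j i := M.symmetric i j
    have hsum : ∑ r ∈ Finset.range (2 * M.M i j),
        (if t = (s j * s i) ^ r * s j then (1 : ZMod 2) else 0) = 0 := by
      have h2 : 2 * M.M i j = M.M i j + M.M i j := by ring
      rw [h2, Finset.sum_range_add]
      have hrepeat : ∀ r : ℕ, ((s j : W) * s i) ^ (M.M i j + r) = (s j * s i) ^ r := by
        intro r
        rw [pow_add, hMsymm, hx, one_mul]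
      have : ∑ r ∈ Finset.range (M.M i j),
          (if t = (s j * s i) ^ (M.M i j + r) * s j then (1 : ZMod 2) else 0)
          = ∑ r ∈ Finset.range (M.M i j),
            (if t = (s j * s i) ^ r * s j then (1 : ZMod 2) else 0) := by
        apply Finset.sum_congr rfl
        intro r _
        rw [hrepeat r]
      rw [this, CharTwo.add_self_eq_zero]
    rw [hsum, add_zero]

/-- The reflection-permutation representation of the Coxeter group. -/
noncomputable def permRep : W →* Equiv.Perm (W × ZMod 2) :=
  cs.lift ⟨fun i => eta cs i, eta_liftable cs⟩

lemma permRep_simple (i : B) : permRep cs (s i) = eta cs i := by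
  simp [permRep]

lemma permRep_wordProd (ω : List B) (t : W) (e : ZMod 2) :
    permRep cs (π ω) (t, e) =
      ((π ω) * t * (π ω)⁻¹, e + ((cs.rightInvSeq ω).count t : ZMod 2)) := by
  induction ω generalizing e with
  | nil => simp
  | cons i ω ih =>
    rw [cs.wordProd_cons, map_mul, Equiv.Perm.mul_apply, ih, permRep_simple, eta_apply]
    have hris : cs.rightInvSeq (i :: ω) = ((π ω)⁻¹ * s i * π ω) :: cs.rightInvSeq ω := rfl
    refine Prod.ext ?_ ?_
    · simp only
      simp only [mul_inv_rev, inv_simple]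
      group
    · simp only
      rw [hris, List.count_cons]
      have hcond : (π ω * t * (π ω)⁻¹ = s i) ↔ (t = (π ω)⁻¹ * s i * π ω) := by
        constructor
        · intro h
          rw [← h]
          group
        · intro h
          rw [h]
          group
      rw [if_congr hcond rfl rfl]
      have hbeq : ((((π ω)⁻¹ * s i * π ω) == t) = true) ↔ (t = (π ω)⁻¹ * s i * π ω) := by
        rw [beq_iff_eq, eq_comm]
      by_cases h : t = (π ω)⁻¹ * s i * π ω
      · rw [if_pos h, if_pos (hbeq.mpr h)]
        push_cast
        ring
      · rw [if_neg h, if_neg (fun hc => h (hbeq.mp hc))]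
        push_cast
        ring

/-- `nfun cs w t` is the parity of the number of "sign changes" of `t` under `w`. -/
noncomputable def nfun (w t : W) : ZMod 2 := (permRep cs w (t, 0)).2

lemma permRep_apply (w t : W) (e : ZMod 2) :
    permRep cs w (t, e) = (w * t * w⁻¹, e + nfun cs w t) := by
  obtain ⟨ω, rfl⟩ := cs.wordProd_surjective w
  rw [permRep_wordProd, nfun, permRep_wordProd]
  simp [add_comm]

lemma nfun_wordProd (ω : List B) (t : W) :
    nfun cs (π ω) t = ((cs.rightInvSeq ω).count t : ZMod 2) := by
  rw [nfun, permRep_wordProd]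
  simp

lemma nfun_mul (a b t : W) :
    nfun cs (a * b) t = nfun cs b t + nfun cs a (b * t * b⁻¹) := by
  have h1 : permRep cs (a * b) (t, 0) = permRep cs a (permRep cs b (t, 0)) := by
    rw [map_mul, Equiv.Perm.mul_apply]
  have h2 := h1
  rw [permRep_apply cs b, permRep_apply cs a] at h2
  have h3 := congrArg Prod.snd h2
  rw [permRep_apply cs (a*b)] at h3
  simp only at h3
  rw [zero_add, zero_add] at h3
  exact h3

lemma nfun_one (t : W) : nfun cs 1 t = 0 := by
  rw [nfun, map_one]
  rfl

lemma nfun_simple_self (i : B) : nfun cs (s i) (s i) = 1 := by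
  have : (s i : W) = π [i] := by simp
  rw [this, nfun_wordProd]
  simp

lemma nfun_reflection_self {t : W} (ht : cs.IsReflection t) : nfun cs t t = 1 := by
  obtain ⟨u, i, rfl⟩ := ht
  set X := u * s i * u⁻¹ with hX
  have hconj1 : (s i * u⁻¹) * X * (s i * u⁻¹)⁻¹ = s i := by
    rw [hX]
    simp only [mul_inv_rev, inv_simple, inv_inv]
    group
    simp [mul_assoc]
  have hconj2 : u⁻¹ * X * (u⁻¹)⁻¹ = s i := by
    rw [hX]
    group
  have k1 : nfun cs X X = nfun cs (s i * u⁻¹) X + nfun cs u (s i) := by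
    nth_rw 1 [hX]
    rw [mul_assoc, nfun_mul, hconj1]
  have k2 : nfun cs (s i * u⁻¹) X = nfun cs u⁻¹ X + 1 := by
    rw [nfun_mul, hconj2, nfun_simple_self]
  have k3 : nfun cs u⁻¹ X + nfun cs u (s i) = 0 := by
    have h0 : nfun cs (u * u⁻¹) X = 0 := by
      rw [mul_inv_cancel, nfun_one]
    rw [nfun_mul, hconj2] at h0
    exact h0
  rw [k1, k2]
  have : (nfun cs u⁻¹ X + 1) + nfun cs u (s i)
      = (nfun cs u⁻¹ X + nfun cs u (s i)) + 1 := by ring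
  rw [this, k3, zero_add]

/-- Strong exchange: converse direction. -/
lemma mem_rightInvSeq_of_isRightInversion {ω : List B} (hω : cs.IsReduced ω) {t : W}
    (ht : cs.IsRightInversion (π ω) t) : t ∈ cs.rightInvSeq ω := by
  by_contra hmem
  obtain ⟨υ, hυred, hυ⟩ := cs.exists_reduced_word' (π ω * t)
  have htυ : t ∉ cs.rightInvSeq υ := by
    intro hc
    have hinv := cs.isRightInversion_of_mem_rightInvSeq hυred hc
    rw [← hυ] at hinv
    have h1 : π ω * t * t = π ω := by
      rw [mul_assoc, ht.1.mul_self, mul_one]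
    have h2 := hinv.2
    rw [h1] at h2
    have h3 := ht.2
    omega
  have h0 : nfun cs (π ω * t) t = 0 := by
    rw [hυ, nfun_wordProd, List.count_eq_zero_of_not_mem htυ]
    rfl
  have h2 : nfun cs (π ω) t = 1 := by
    have hs : π ω = (π ω * t) * t := by
      rw [mul_assoc, ht.1.mul_self, mul_one]
    rw [hs, nfun_mul]
    have h3 : t * t * t⁻¹ = t := by
      rw [ht.1.mul_self, one_mul, ht.1.inv]
    rw [h3, nfun_reflection_self cs ht.1, h0, add_zero]
  rw [nfun_wordProd, List.count_eq_zero_of_not_mem hmem] at h2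
  exact absurd h2.symm one_ne_zero

lemma isRightInversion_iff_mem {ω : List B} (hω : cs.IsReduced ω) {t : W} :
    cs.IsRightInversion (π ω) t ↔ t ∈ cs.rightInvSeq ω :=
  ⟨mem_rightInvSeq_of_isRightInversion cs hω, cs.isRightInversion_of_mem_rightInvSeq hω⟩

/-- The deletion property. -/
lemma exists_delete {ω : List B} (h : ¬ cs.IsReduced ω) :
    ∃ ω', ω'.Sublist ω ∧ ω'.length + 2 = ω.length ∧ π ω' = π ω := by
  classical
  have hne : ω ≠ [] := by
    intro hc
    exact h (by simp [hc, CoxeterSystem.IsReduced])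
  have hlen1 : 1 ≤ ω.length := by
    cases ω with
    | nil => exact absurd rfl hne
    | cons a l => simp
  have hex : ∃ n, ¬ cs.IsReduced (ω.take (n+1)) := by
    refine ⟨ω.length - 1, ?_⟩
    rwa [show ω.length - 1 + 1 = ω.length by omega, List.take_length]
  let k := Nat.find hex
  have hk : ¬ cs.IsReduced (ω.take (k+1)) := Nat.find_spec hex
  have hmin : ∀ m, m < k → cs.IsReduced (ω.take (m+1)) := by
    intro m hm
    have := Nat.find_min hex hm
    exact not_not.mp this
  have hkle : k ≤ ω.length - 1 := Nat.find_le (by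
    rwa [show ω.length - 1 + 1 = ω.length by omega, List.take_length])
  have hklt : k < ω.length := by omega
  have htk_red : cs.IsReduced (ω.take k) := by
    rcases Nat.eq_zero_or_pos k with h0 | hpos
    · rw [h0]
      simp [CoxeterSystem.IsReduced]
    · have := hmin (k-1) (by omega)
      rwa [show k - 1 + 1 = k by omega] at this
  have htake : ω.take (k+1) = ω.take k ++ [ω.get ⟨k, hklt⟩] := by
    rw [List.take_succ]
    simp [List.getElem?_eq_getElem hklt]
  set i := ω.get ⟨k, hklt⟩ with hi
  have hprod : π (ω.take (k+1)) = π (ω.take k) * s i := by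
    rw [htake, cs.wordProd_append, cs.wordProd_singleton]
  set u := π (ω.take k) with hu
  have hlenu : ℓ u = k := by
    have := htk_red
    rw [CoxeterSystem.IsReduced] at this
    rwa [List.length_take, Nat.min_eq_left (le_of_lt hklt)] at this
  have hlt : ℓ (u * s i) < ℓ u := by
    have hne2 : ℓ (u * s i) ≠ k + 1 := by
      intro hc
      apply hk
      rw [CoxeterSystem.IsReduced, hprod, hc, List.length_take,
        Nat.min_eq_left (by omega)]
    rcases cs.length_mul_simple u i with hcase | hcase
    · rw [hlenu] at hcase; omega
    · omega
  have hinv : cs.IsRightInversion u (s i) := ⟨cs.isReflection_simple i, hlt⟩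
  have hmem : s i ∈ cs.rightInvSeq (ω.take k) :=
    mem_rightInvSeq_of_isRightInversion cs htk_red hinv
  obtain ⟨j, hj, hgetj⟩ := List.mem_iff_getElem.mp hmem
  rw [cs.length_rightInvSeq, List.length_take, Nat.min_eq_left (le_of_lt hklt)] at hj
  have hdel : u * s i = π ((ω.take k).eraseIdx j) := by
    have := cs.wordProd_mul_getD_rightInvSeq (ω.take k) j
    rw [List.getD_eq_getElem _ 1 (by rw [cs.length_rightInvSeq, List.length_take,
      Nat.min_eq_left (le_of_lt hklt)]; exact hj), hgetj] at this
    exact this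
  refine ⟨(ω.take k).eraseIdx j ++ ω.drop (k+1), ?_, ?_, ?_⟩
  · have h1 : (ω.take k).eraseIdx j <+ ω.take k := List.eraseIdx_sublist _ j
    have h2 : ω.take k <+ ω.take (k+1) := by
      have h4 := List.take_sublist k (ω.take (k+1))
      rwa [List.take_take, Nat.min_eq_left (by omega)] at h4
    have h3 : (ω.take k).eraseIdx j ++ ω.drop (k+1) <+ ω.take (k+1) ++ ω.drop (k+1) :=
      List.Sublist.append (h1.trans h2) (List.Sublist.refl _)
    rwa [List.take_append_drop] at h3
  · have hel : ((ω.take k).eraseIdx j).length + 1 = (ω.take k).length :=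
      List.length_eraseIdx_add_one (by
        rw [List.length_take, Nat.min_eq_left (le_of_lt hklt)]; exact hj)
    rw [List.length_append, List.length_drop]
    rw [List.length_take, Nat.min_eq_left (le_of_lt hklt)] at hel
    omega
  · rw [cs.wordProd_append, ← hdel, ← hprod, ← cs.wordProd_append, List.take_append_drop]

lemma simple_mem_parab {X : Set B} {i : B} (hi : i ∈ X) : s i ∈ parab cs X :=
  Subgroup.subset_closure ⟨i, hi, rfl⟩

lemma wordProd_mem_parab {X : Set B} {ω : List B} (hω : ∀ i ∈ ω, i ∈ X) :
    π ω ∈ parab cs X := by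
  induction ω with
  | nil => simp [Subgroup.one_mem]
  | cons i ω ih =>
    rw [cs.wordProd_cons]
    exact mul_mem (simple_mem_parab cs (hω i List.mem_cons_self))
      (ih fun j hj => hω j (List.mem_cons_of_mem i hj))

lemma mem_parab_iff_word {X : Set B} {w : W} :
    w ∈ parab cs X ↔ ∃ ω : List B, (∀ i ∈ ω, i ∈ X) ∧ π ω = w := by
  constructor
  · intro hw
    induction hw using Subgroup.closure_induction with
    | mem x hx =>
      obtain ⟨i, hi, rfl⟩ := hx
      exact ⟨[i], by simpa using hi, by simp⟩
    | one => exact ⟨[], by simp, by simp⟩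
    | mul x y _ _ hx hy =>
      obtain ⟨ω₁, hω₁, rfl⟩ := hx
      obtain ⟨ω₂, hω₂, rfl⟩ := hy
      exact ⟨ω₁ ++ ω₂, fun i hi => (List.mem_append.mp hi).elim (hω₁ i) (hω₂ i),
        by rw [cs.wordProd_append]⟩
    | inv x _ hx =>
      obtain ⟨ω, hω, rfl⟩ := hx
      exact ⟨ω.reverse, fun i hi => hω i (List.mem_reverse.mp hi), by simp⟩
  · rintro ⟨ω, hω, rfl⟩
    exact wordProd_mem_parab cs hω

/-- Every element of a standard parabolic subgroup has a reduced word with letters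
in the generating set. -/
lemma exists_reduced_word_parab {X : Set B} {w : W} (hw : w ∈ parab cs X) :
    ∃ ω : List B, (∀ i ∈ ω, i ∈ X) ∧ cs.IsReduced ω ∧ π ω = w := by
  obtain ⟨ω, hω, rfl⟩ := (mem_parab_iff_word cs).mp hw
  clear hw
  have main : ∀ (n : ℕ) (ω : List B), ω.length = n → (∀ i ∈ ω, i ∈ X) →
      ∃ υ : List B, (∀ i ∈ υ, i ∈ X) ∧ cs.IsReduced υ ∧ π υ = π ω := by
    intro n
    induction n using Nat.strong_induction_on with
    | _ n ih =>
      intro ω hn hωX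
      by_cases hred : cs.IsReduced ω
      · exact ⟨ω, hωX, hred, rfl⟩
      · obtain ⟨ω', hsub, hlen, hprod⟩ := exists_delete cs hred
        obtain ⟨υ, hυX, hυred, hυprod⟩ := ih ω'.length (by omega) ω' rfl
          (fun i hi => hωX i (hsub.subset hi))
        exact ⟨υ, hυX, hυred, by rw [hυprod, hprod]⟩
  exact main ω.length ω rfl hω

lemma rightInvSeq_mem_parab {X : Set B} {ω : List B} (hω : ∀ i ∈ ω, i ∈ X) {t : W}
    (ht : t ∈ cs.rightInvSeq ω) : t ∈ parab cs X := by
  obtain ⟨j, hj, rfl⟩ := List.mem_iff_getElem.mp ht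
  rw [cs.length_rightInvSeq] at hj
  rw [← List.getD_eq_getElem _ 1 (by rw [cs.length_rightInvSeq]; exact hj)]
  rw [cs.getD_rightInvSeq]
  have hdrop : π (ω.drop (j+1)) ∈ parab cs X :=
    wordProd_mem_parab cs (fun i hi => hω i (List.mem_of_mem_drop hi))
  have hget : (Option.map cs.simple ω[j]?).getD 1 ∈ parab cs X := by
    rw [List.getElem?_eq_getElem hj]
    exact simple_mem_parab cs (hω _ (List.getElem_mem hj))
  exact mul_mem (mul_mem (inv_mem hdrop) hget) hdrop

/-- The set of right inversions of `w`. -/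
def rInv (w : W) : Set W := {t | cs.IsRightInversion w t}

lemma rInv_eq_ris {ω : List B} (hω : cs.IsReduced ω) :
    rInv cs (π ω) = {t | t ∈ cs.rightInvSeq ω} := by
  ext t
  exact isRightInversion_iff_mem cs hω

lemma rInv_finite (w : W) : (rInv cs w).Finite := by
  obtain ⟨ω, hred, rfl⟩ := cs.exists_reduced_word' w
  rw [rInv_eq_ris cs hred]
  exact (cs.rightInvSeq ω).finite_toSet

lemma ncard_rInv (w : W) : (rInv cs w).ncard = ℓ w := by
  obtain ⟨ω, hred, rfl⟩ := cs.exists_reduced_word' w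
  rw [rInv_eq_ris cs hred]
  have h1 : {t | t ∈ cs.rightInvSeq ω} = ((cs.rightInvSeq ω).toFinset : Set W) := by
    ext t
    simp
  rw [h1, Set.ncard_coe_finset, List.toFinset_card_of_nodup hred.nodup_rightInvSeq,
    cs.length_rightInvSeq]
  exact hred.symm

lemma rInv_subset_parab {X : Set B} {w : W} (hw : w ∈ parab cs X) :
    rInv cs w ⊆ (parab cs X : Set W) := by
  obtain ⟨ω, hX, hred, rfl⟩ := exists_reduced_word_parab cs hw
  rw [rInv_eq_ris cs hred]
  intro t ht
  exact rightInvSeq_mem_parab cs hX ht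

lemma conj_conj (i : B) (t : W) : s i * (s i * t * s i) * s i = t := by
  have h1 : s i * (s i * t * s i) * s i = (s i * s i) * t * (s i * s i) := by group
  rw [h1, cs.simple_mul_simple_self]
  group

lemma conj_involutive (i : B) : Function.Involutive (fun t : W => s i * t * s i) :=
  fun t => conj_conj cs i t

/-- Descent in a parabolic subgroup. -/
lemma exists_right_descent_parab {X : Set B} {q : W} (hq : q ∈ parab cs X) (hne : q ≠ 1) :
    ∃ j ∈ X, q * s j ∈ parab cs X ∧ ℓ (q * s j) + 1 = ℓ q := by
  obtain ⟨ω, hX, hred, rfl⟩ := exists_reduced_word_parab cs hq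
  have hωne : ω ≠ [] := by
    intro hc
    exact hne (by rw [hc, cs.wordProd_nil])
  set j := ω.getLast hωne with hj
  refine ⟨j, hX j (List.getLast_mem hωne), ?_, ?_⟩
  all_goals {
    have hsplit : ω.dropLast ++ [j] = ω := List.dropLast_append_getLast hωne
    have hprod : π ω = π ω.dropLast * s j := by
      conv_lhs => rw [← hsplit]
      rw [cs.wordProd_append, cs.wordProd_singleton]
    have hcancel : π ω * s j = π ω.dropLast := by
      rw [hprod, mul_assoc, cs.simple_mul_simple_self, mul_one]
    have hdropred : cs.IsReduced ω.dropLast := by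
      rw [List.dropLast_eq_take]
      exact hred.take _
    first
    | · rw [hcancel]
        exact wordProd_mem_parab cs (fun i hi => hX i (List.mem_of_mem_dropLast hi))
    | · rw [hcancel]
        have h1 : ℓ (π ω.dropLast) = ω.dropLast.length := hdropred
        have h2 : ℓ (π ω) = ω.length := hred
        have h3 : ω.dropLast.length + 1 = ω.length := by
          rw [List.length_dropLast]
          have : 1 ≤ ω.length := by cases ω with | nil => exact absurd rfl hωne | cons _ _ => simp
          omega
        omega
  }

lemma rInv_one : rInv cs (1 : W) = ∅ := by
  ext t
  simp only [rInv, Set.mem_setOf_eq, Set.mem_empty_iff_false, iff_false]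
  intro ht
  have := ht.2
  simp at this

/-- Right inversions after ascending by a simple reflection. -/
lemma rInv_mul_simple_asc {w : W} {i : B} (h : ℓ (w * s i) = ℓ w + 1) :
    rInv cs (w * s i) = (fun t => s i * t * s i) '' rInv cs w ∪ {s i} := by
  obtain ⟨ω, hred, rfl⟩ := cs.exists_reduced_word' w
  have hred' : cs.IsReduced (ω.concat i) := by
    rw [CoxeterSystem.IsReduced, cs.wordProd_concat, List.length_concat, h, hred]
  have hprod : π ω * s i = π (ω.concat i) := (cs.wordProd_concat i ω).symm
  rw [hprod, rInv_eq_ris cs hred', rInv_eq_ris cs hred, cs.rightInvSeq_concat]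
  ext t
  simp only [List.concat_eq_append, List.mem_append, List.mem_map, List.mem_singleton,
    Set.mem_union, Set.mem_image, Set.mem_setOf_eq, Set.mem_singleton_iff]
  constructor
  · rintro (⟨u, hu, rfl⟩ | rfl)
    · exact Or.inl ⟨u, hu, by simp [MulAut.conj_apply]⟩
    · exact Or.inr rfl
  · rintro (⟨u, hu, rfl⟩ | rfl)
    · exact Or.inl ⟨u, hu, by simp [MulAut.conj_apply]⟩
    · exact Or.inr rfl

/-- Right inversions after descending by a simple reflection. -/
lemma rInv_mul_simple_desc {w : W} {i : B} (h : ℓ (w * s i) + 1 = ℓ w) :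
    rInv cs (w * s i) = (fun t => s i * t * s i) '' (rInv cs w \ {s i}) := by
  set w' := w * s i with hw'
  have hww' : w = w' * s i := by
    rw [hw', mul_assoc, cs.simple_mul_simple_self, mul_one]
  have hasc : ℓ (w' * s i) = ℓ w' + 1 := by
    rw [← hww']
    omega
  have hE : rInv cs w = (fun t => s i * t * s i) '' rInv cs w' ∪ {s i} := by
    rw [hww']
    exact rInv_mul_simple_asc cs hasc
  have hsi_not : s i ∉ rInv cs w' := by
    intro hc
    have := hc.2
    rw [← hww'] at this
    omega
  have hsi_not_img : s i ∉ (fun t : W => s i * t * s i) '' rInv cs w' := by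
    rintro ⟨u, hu, hui⟩
    have h2 := congrArg (fun z : W => s i * z * s i) hui
    simp only at h2
    rw [conj_conj cs i u, mul_assoc, cs.simple_mul_simple_self, mul_one] at h2
    exact hsi_not (h2 ▸ hu)
  have hdiff : rInv cs w \ {s i} = (fun t : W => s i * t * s i) '' rInv cs w' := by
    rw [hE, Set.union_diff_right, Set.diff_singleton_eq_self hsi_not_img]
  rw [hdiff, ← Set.image_comp]
  have : ((fun t : W => s i * t * s i) ∘ (fun t : W => s i * t * s i)) = id := by
    funext t
    exact conj_conj cs i _
  rw [this, Set.image_id]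

section W0

variable {I : Set B} {w0 : W}

/-- The set of reflections lying in the parabolic subgroup. -/
def TI (I : Set B) : Set W := {t | cs.IsReflection t ∧ t ∈ parab cs I}

lemma rInv_subset_TI {y : W} (hy : y ∈ parab cs I) : rInv cs y ⊆ TI cs I :=
  fun t ht => ⟨ht.1, rInv_subset_parab cs hy ht⟩

lemma rInv_w0_eq_TI (h0 : w0 ∈ parab cs I) (hmax : ∀ x ∈ parab cs I, ℓ x ≤ ℓ w0) :
    rInv cs w0 = TI cs I := by
  refine Set.Subset.antisymm (rInv_subset_TI cs h0) ?_
  rintro t ⟨htr, htp⟩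
  refine ⟨htr, ?_⟩
  have h1 : w0 * t ∈ parab cs I := mul_mem h0 htp
  have h2 : ℓ (w0 * t) ≤ ℓ w0 := hmax _ h1
  have h3 : ℓ (w0 * t) ≠ ℓ w0 := htr.length_mul_left_ne w0
  omega

lemma TI_finite (h0 : w0 ∈ parab cs I) (hmax : ∀ x ∈ parab cs I, ℓ x ≤ ℓ w0) :
    (TI cs I).Finite := by
  rw [← rInv_w0_eq_TI cs h0 hmax]
  exact rInv_finite cs w0

lemma conj_TI {i : B} (hi : i ∈ I) :
    (fun t : W => s i * t * s i) '' TI cs I = TI cs I := by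
  have hsub : ∀ t ∈ TI cs I, s i * t * s i ∈ TI cs I := by
    rintro t ⟨htr, htp⟩
    constructor
    · have := htr.conj (s i)
      rwa [inv_simple] at this
    · exact mul_mem (mul_mem (simple_mem_parab cs hi) htp) (simple_mem_parab cs hi)
  apply Set.Subset.antisymm
  · rintro t ⟨u, hu, rfl⟩
    exact hsub u hu
  · intro t ht
    exact ⟨s i * t * s i, hsub t ht, conj_conj cs i t⟩

lemma rInv_w0_mul (h0 : w0 ∈ parab cs I) (hmax : ∀ x ∈ parab cs I, ℓ x ≤ ℓ w0) :
    ∀ y ∈ parab cs I, rInv cs (w0 * y) = TI cs I \ rInv cs y := by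
  have main : ∀ (n : ℕ) (y : W), y ∈ parab cs I → ℓ y = n →
      rInv cs (w0 * y) = TI cs I \ rInv cs y := by
    intro n
    induction n using Nat.strong_induction_on with
    | _ n ih =>
      intro y hy hn
      by_cases hone : y = 1
      · rw [hone, mul_one, rInv_one, Set.diff_empty]
        exact rInv_w0_eq_TI cs h0 hmax
      · obtain ⟨j, hjI, hy', hdesc⟩ := exists_right_descent_parab cs hy hone
        set y' := y * s j with hy'def
        have hyy' : y = y' * s j := by
          rw [hy'def, mul_assoc, cs.simple_mul_simple_self, mul_one]
        have hIH : rInv cs (w0 * y') = TI cs I \ rInv cs y' :=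
          ih (ℓ y') (by omega) y' hy' rfl
        have hsj_not : s j ∉ rInv cs y' := by
          intro hc
          have := hc.2
          rw [← hyy'] at this
          omega
        have hsj_TI : s j ∈ TI cs I := ⟨cs.isReflection_simple j, simple_mem_parab cs hjI⟩
        have hsj_inv : s j ∈ rInv cs (w0 * y') := by
          rw [hIH]
          exact ⟨hsj_TI, hsj_not⟩
        have hdesc2 : ℓ (w0 * y' * s j) + 1 = ℓ (w0 * y') := by
          have h1 := hsj_inv.2
          rcases cs.length_mul_simple (w0 * y') j with hc | hc <;> omega
        have hasc2 : ℓ (y' * s j) = ℓ y' + 1 := by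
          rw [← hyy']
          omega
        have step1 : rInv cs (w0 * y) =
            (fun t : W => s j * t * s j) '' (rInv cs (w0 * y') \ {s j}) := by
          rw [hyy', ← mul_assoc]
          exact rInv_mul_simple_desc cs hdesc2
        have step2 : rInv cs y = (fun t : W => s j * t * s j) '' rInv cs y' ∪ {s j} := by
          rw [hyy']
          exact rInv_mul_simple_asc cs hasc2
        rw [step1, hIH, step2]
        have hinj : Function.Injective (fun t : W => s j * t * s j) :=
          (conj_involutive cs j).injective
        rw [Set.diff_diff, Set.image_diff hinj, conj_TI cs hjI, Set.image_union,
          Set.image_singleton]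
        have h7 : (s j * s j * s j : W) = s j := by
          rw [cs.simple_mul_simple_self, one_mul]
        rw [h7]
  intro y hy
  exact main (ℓ y) y hy rfl

/-- The key length formula for the longest element. -/
lemma length_w0_mul (h0 : w0 ∈ parab cs I) (hmax : ∀ x ∈ parab cs I, ℓ x ≤ ℓ w0)
    {y : W} (hy : y ∈ parab cs I) : ℓ (w0 * y) + ℓ y = ℓ w0 := by
  have h1 : rInv cs (w0 * y) = TI cs I \ rInv cs y := rInv_w0_mul cs h0 hmax y hy
  have h2 : (rInv cs (w0 * y)).ncard = ℓ (w0 * y) := ncard_rInv cs _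
  have h3 : (rInv cs y).ncard = ℓ y := ncard_rInv cs y
  have h4 : (rInv cs w0).ncard = ℓ w0 := ncard_rInv cs w0
  have hTIfin : (TI cs I).Finite := TI_finite cs h0 hmax
  have hsub : rInv cs y ⊆ TI cs I := rInv_subset_TI cs hy
  have h5 : (TI cs I \ rInv cs y).ncard + (rInv cs y).ncard = (TI cs I).ncard :=
    Set.ncard_diff_add_ncard_of_subset hsub hTIfin
  have h6 : (TI cs I).ncard = ℓ w0 := by
    rw [← rInv_w0_eq_TI cs h0 hmax, h4]
  rw [← h2, h1, ← h3, ← h6]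
  exact h5

end W0

section Pairs

lemma simple_commute_parab {X Y : Set B} (hcomm : ∀ i ∈ X, ∀ j ∈ Y, Commute (s i) (s j))
    {i : B} (hi : i ∈ X) {y : W} (hy : y ∈ parab cs Y) : Commute (s i) y := by
  induction hy using Subgroup.closure_induction with
  | mem b hb =>
    obtain ⟨j, hj, rfl⟩ := hb
    exact hcomm i hi j hj
  | one => exact Commute.one_right _
  | mul a b _ _ ha hb => exact ha.mul_right hb
  | inv a _ ha => exact ha.inv_right

lemma commute_parab {X Y : Set B} (hcomm : ∀ i ∈ X, ∀ j ∈ Y, Commute (s i) (s j))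
    {x y : W} (hx : x ∈ parab cs X) (hy : y ∈ parab cs Y) : Commute x y := by
  induction hx using Subgroup.closure_induction with
  | mem a ha =>
    obtain ⟨i, hi, rfl⟩ := ha
    exact simple_commute_parab cs hcomm hi hy
  | one => exact Commute.one_left _
  | mul a b _ _ ha hb => exact ha.mul_left hb
  | inv a _ ha => exact ha.inv_left

lemma parab_mono {X Y : Set B} (h : X ⊆ Y) : parab cs X ≤ parab cs Y :=
  Subgroup.closure_mono (fun _ ⟨x, hx, e⟩ => ⟨x, h hx, e⟩)

/-- Decomposition of the parabolic of a union as a product (given commutation). -/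
lemma parab_union_decomp {X Y : Set B} (hcomm : ∀ i ∈ X, ∀ j ∈ Y, Commute (s i) (s j))
    {w : W} (hw : w ∈ parab cs (X ∪ Y)) :
    ∃ p ∈ parab cs X, ∃ q ∈ parab cs Y, w = p * q := by
  induction hw using Subgroup.closure_induction with
  | mem a ha =>
    obtain ⟨i, hi, rfl⟩ := ha
    rcases hi with hi | hi
    · exact ⟨s i, simple_mem_parab cs hi, 1, one_mem _, by rw [mul_one]⟩
    · exact ⟨1, one_mem _, s i, simple_mem_parab cs hi, by rw [one_mul]⟩
  | one => exact ⟨1, one_mem _, 1, one_mem _, by rw [one_mul]⟩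
  | mul a b _ _ ha hb =>
    obtain ⟨p₁, hp₁, q₁, hq₁, rfl⟩ := ha
    obtain ⟨p₂, hp₂, q₂, hq₂, rfl⟩ := hb
    refine ⟨p₁ * p₂, mul_mem hp₁ hp₂, q₁ * q₂, mul_mem hq₁ hq₂, ?_⟩
    have hc : Commute q₁ p₂ := commute_parab cs (fun j hj i hi => (hcomm i hi j hj).symm) hq₁ hp₂
    rw [mul_assoc, ← mul_assoc q₁ p₂ q₂, hc.eq, mul_assoc, ← mul_assoc]
  | inv a _ ha =>
    obtain ⟨p, hp, q, hq, rfl⟩ := ha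
    refine ⟨p⁻¹, inv_mem hp, q⁻¹, inv_mem hq, ?_⟩
    have hc : Commute q⁻¹ p⁻¹ :=
      ((commute_parab cs hcomm hp hq).inv_right.inv_left).symm
    rw [mul_inv_rev, hc.eq]

/-- Length additivity for products over "independent" parabolics. -/
lemma length_parab_mul {X Y : Set B}
    (htriv : ∀ x ∈ parab cs X, ∀ y ∈ parab cs Y, x * y = 1 → x = 1)
    {p q : W} (hp : p ∈ parab cs X) (hq : q ∈ parab cs Y) :
    ℓ (p * q) = ℓ p + ℓ q := by
  obtain ⟨ω₁, hX1, hred1, hw1⟩ := exists_reduced_word_parab cs hp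
  obtain ⟨ω₂, hX2, hred2, hw2⟩ := exists_reduced_word_parab cs hq
  by_contra hne
  have hprodpq : π (ω₁ ++ ω₂) = p * q := by rw [cs.wordProd_append, hw1, hw2]
  have hlp : ℓ p = ω₁.length := by rw [← hw1]; exact hred1
  have hlq : ℓ q = ω₂.length := by rw [← hw2]; exact hred2
  have hnotred : ¬ cs.IsReduced (ω₁ ++ ω₂) := by
    intro hc
    apply hne
    rw [← hprodpq, hc, List.length_append, hlp, hlq]
  obtain ⟨ω', hsub, hlen, hprod⟩ := exists_delete cs hnotred
  obtain ⟨υ₁, υ₂, rfl, hsub1, hsub2⟩ := List.sublist_append_iff.mp hsub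
  have hp' : π υ₁ ∈ parab cs X :=
    wordProd_mem_parab cs (fun i hi => hX1 i (hsub1.subset hi))
  have hq' : π υ₂ ∈ parab cs Y :=
    wordProd_mem_parab cs (fun i hi => hX2 i (hsub2.subset hi))
  have hpq' : π υ₁ * π υ₂ = p * q := by
    rw [← cs.wordProd_append, hprod, hprodpq]
  have hx1 : p⁻¹ * π υ₁ ∈ parab cs X := mul_mem (inv_mem hp) hp'
  have hy1 : π υ₂ * q⁻¹ ∈ parab cs Y := mul_mem hq' (inv_mem hq)
  have hxy : (p⁻¹ * π υ₁) * (π υ₂ * q⁻¹) = 1 := by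
    have : p⁻¹ * (π υ₁ * π υ₂) * q⁻¹ = p⁻¹ * (p * q) * q⁻¹ := by rw [hpq']
    calc (p⁻¹ * π υ₁) * (π υ₂ * q⁻¹) = p⁻¹ * (π υ₁ * π υ₂) * q⁻¹ := by group
    _ = p⁻¹ * (p * q) * q⁻¹ := by rw [hpq']
    _ = 1 := by group
  have hx1one : p⁻¹ * π υ₁ = 1 := htriv _ hx1 _ hy1 hxy
  have hpeq : π υ₁ = p := by
    have := congrArg (fun z => p * z) hx1one
    simpa [← mul_assoc] using this
  have hy1one : π υ₂ * q⁻¹ = 1 := by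
    rw [hx1one, one_mul] at hxy
    exact hxy
  have hqeq : π υ₂ = q := by
    have := congrArg (fun z => z * q) hy1one
    simpa [mul_assoc] using this
  have hle1 : ℓ p ≤ υ₁.length := by rw [← hpeq]; exact cs.length_wordProd_le υ₁
  have hle2 : ℓ q ≤ υ₂.length := by rw [← hqeq]; exact cs.length_wordProd_le υ₂
  have hlentot : υ₁.length + υ₂.length + 2 = ω₁.length + ω₂.length := by
    rw [List.length_append, List.length_append] at hlen
    exact hlen
  omega

end Pairs

section Sigma

variable {I J : Set B} {σ : W → W}

lemma sigma_one (hσmul : ∀ x ∈ parab cs I, ∀ y ∈ parab cs I, σ (x * y) = σ x * σ y) :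
    σ 1 = 1 := by
  have h1 := hσmul 1 (one_mem _) 1 (one_mem _)
  rw [mul_one] at h1
  have h2 : σ 1 * 1 = σ 1 * σ 1 := by rw [mul_one]; exact h1
  exact (mul_left_cancel h2).symm

lemma sigma_word (hσmul : ∀ x ∈ parab cs I, ∀ y ∈ parab cs I, σ (x * y) = σ x * σ y)
    (hsimple : ∀ i ∈ I, ∃ j ∈ J, σ (cs.simple i) = cs.simple j) :
    ∀ ω : List B, (∀ i ∈ ω, i ∈ I) →
      ∃ υ : List B, (∀ j ∈ υ, j ∈ J ∧ ∃ i ∈ I, σ (cs.simple i) = cs.simple j) ∧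
        υ.length = ω.length ∧ σ (π ω) = π υ := by
  intro ω
  induction ω with
  | nil =>
    intro _
    exact ⟨[], by simp, by simp, by simp [sigma_one cs hσmul]⟩
  | cons i ω ih =>
    intro hI
    have hiI : i ∈ I := hI i List.mem_cons_self
    obtain ⟨υ, hυ, hlen, hprod⟩ := ih (fun a ha => hI a (List.mem_cons_of_mem i ha))
    obtain ⟨j, hjJ, hj⟩ := hsimple i hiI
    refine ⟨j :: υ, ?_, by simp [hlen], ?_⟩
    · intro a ha
      rcases List.mem_cons.mp ha with rfl | ha
      · exact ⟨hjJ, i, hiI, hj⟩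
      · exact hυ a ha
    · rw [cs.wordProd_cons, cs.wordProd_cons,
        hσmul (s i) (simple_mem_parab cs hiI) (π ω)
          (wordProd_mem_parab cs (fun a ha => hI a (List.mem_cons_of_mem i ha))),
        hj, hprod]

lemma sigma_simple_surj (hσmul : ∀ x ∈ parab cs I, ∀ y ∈ parab cs I, σ (x * y) = σ x * σ y)
    (hbij : Set.BijOn σ (parab cs I : Set W) (parab cs J : Set W))
    (hsimple : ∀ i ∈ I, ∃ j ∈ J, σ (cs.simple i) = cs.simple j) :
    ∀ j ∈ J, ∃ i ∈ I, σ (cs.simple i) = cs.simple j := by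
  intro j hjJ
  have hsj : (s j : W) ∈ parab cs J := simple_mem_parab cs hjJ
  obtain ⟨x, hxI, hx⟩ := hbij.surjOn hsj
  obtain ⟨ω, hωI, hred, rfl⟩ := exists_reduced_word_parab cs hxI
  obtain ⟨υ, hυ, hlen, hprod⟩ := sigma_word cs hσmul hsimple ω hωI
  set J' : Set B := {j' | j' ∈ J ∧ ∃ i ∈ I, σ (cs.simple i) = cs.simple j'} with hJ'
  have hυJ' : ∀ a ∈ υ, a ∈ J' := fun a ha => hυ a ha
  have hsjJ' : (s j : W) ∈ parab cs J' := by
    rw [← hx, hprod]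
    exact wordProd_mem_parab cs hυJ'
  obtain ⟨τ, hτJ', hτred, hτprod⟩ := exists_reduced_word_parab cs hsjJ'
  have hlen1 : τ.length = 1 := by
    have h1 : ℓ (π τ) = τ.length := hτred
    rw [hτprod, cs.length_simple] at h1
    omega
  obtain ⟨a, rfl⟩ : ∃ a, τ = [a] := by
    match τ, hlen1 with
    | [a], _ => exact ⟨a, rfl⟩
  have haJ' : a ∈ J' := hτJ' a (List.mem_singleton_self a)
  obtain ⟨-, i, hiI, hi⟩ := haJ'
  refine ⟨i, hiI, ?_⟩
  rw [hi, ← hτprod, cs.wordProd_singleton]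

lemma sigma_word_rev (hσmul : ∀ x ∈ parab cs I, ∀ y ∈ parab cs I, σ (x * y) = σ x * σ y)
    (hbij : Set.BijOn σ (parab cs I : Set W) (parab cs J : Set W))
    (hsimple : ∀ i ∈ I, ∃ j ∈ J, σ (cs.simple i) = cs.simple j) :
    ∀ υ : List B, (∀ j ∈ υ, j ∈ J) →
      ∃ ω : List B, (∀ i ∈ ω, i ∈ I) ∧ ω.length = υ.length ∧ σ (π ω) = π υ := by
  intro υ
  induction υ with
  | nil =>
    intro _
    exact ⟨[], by simp, by simp, by simp [sigma_one cs hσmul]⟩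
  | cons j υ ih =>
    intro hJ
    obtain ⟨ω, hωI, hlen, hprod⟩ := ih (fun a ha => hJ a (List.mem_cons_of_mem j ha))
    obtain ⟨i, hiI, hi⟩ := sigma_simple_surj cs hσmul hbij hsimple j (hJ j List.mem_cons_self)
    refine ⟨i :: ω, ?_, by simp [hlen], ?_⟩
    · intro a ha
      rcases List.mem_cons.mp ha with rfl | ha
      · exact hiI
      · exact hωI a ha
    · rw [cs.wordProd_cons, cs.wordProd_cons,
        hσmul (s i) (simple_mem_parab cs hiI) (π ω) (wordProd_mem_parab cs hωI),
        hi, hprod]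

/-- `σ` preserves length. -/
lemma sigma_length (hσmul : ∀ x ∈ parab cs I, ∀ y ∈ parab cs I, σ (x * y) = σ x * σ y)
    (hbij : Set.BijOn σ (parab cs I : Set W) (parab cs J : Set W))
    (hsimple : ∀ i ∈ I, ∃ j ∈ J, σ (cs.simple i) = cs.simple j)
    {x : W} (hx : x ∈ parab cs I) : ℓ (σ x) = ℓ x := by
  obtain ⟨ω, hωI, hred, rfl⟩ := exists_reduced_word_parab cs hx
  have hle : ℓ (σ (π ω)) ≤ ℓ (π ω) := by
    obtain ⟨υ, hυ, hlen, hprod⟩ := sigma_word cs hσmul hsimple ω hωI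
    rw [hprod]
    calc ℓ (π υ) ≤ υ.length := cs.length_wordProd_le υ
    _ = ω.length := hlen
    _ = ℓ (π ω) := hred.symm
  have hge : ℓ (π ω) ≤ ℓ (σ (π ω)) := by
    have hσx : σ (π ω) ∈ parab cs J := hbij.mapsTo hx
    obtain ⟨υ, hυJ, hυred, hυprod⟩ := exists_reduced_word_parab cs hσx
    obtain ⟨ω', hω'I, hω'len, hω'prod⟩ := sigma_word_rev cs hσmul hbij hsimple υ hυJ
    have hσeq : σ (π ω') = σ (π ω) := by rw [hω'prod, hυprod]
    have hx'I : π ω' ∈ parab cs I := wordProd_mem_parab cs hω'I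
    have heq : π ω' = π ω := hbij.injOn hx'I hx hσeq
    calc ℓ (π ω) = ℓ (π ω') := by rw [heq]
    _ ≤ ω'.length := cs.length_wordProd_le ω'
    _ = υ.length := hω'len
    _ = ℓ (π υ) := hυred.symm
    _ = ℓ (σ (π ω)) := by rw [hυprod]
  omega

end Sigma

end CoxAux

end CoxAuxSection


theorem statement_9 (cs : CoxeterSystem M W) (I J K : Set B) (σ : W → W)
    (h : GoodSetup cs I J K σ) (w0I : W)
    (hfin : (parab cs I : Set W).Finite) (h0 : w0I ∈ parab cs I)
    (hmax : ∀ x ∈ parab cs I, cs.length x ≤ cs.length w0I) :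
    Mset cs I J K σ ∩ (parab cs (I ∪ J ∪ K) : Set W) =
      {z : W | ∃ u ∈ parab cs I, ∃ v ∈ parab cs I,
        z = u * σ v ∧ leR cs u (w0I * v)} := by
  classical
  obtain ⟨hdisjIJ, hdisjIK, hdisjJK, hcommIJ, hcommIK, hcommJK, hdp, hσmul, hbij, hσsimple⟩ := h
  -- triviality of pairwise products
  have ht_IJ : ∀ x ∈ parab cs I, ∀ y ∈ parab cs J, x * y = 1 → x = 1 := by
    intro x hx y hy hxy
    exact (hdp x hx y hy 1 (one_mem _) (by rw [mul_one]; exact hxy)).1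
  have ht_JK : ∀ x ∈ parab cs J, ∀ y ∈ parab cs K, x * y = 1 → x = 1 := by
    intro x hx y hy hxy
    exact (hdp 1 (one_mem _) x hx y hy (by rw [one_mul]; exact hxy)).2.1
  have hcomm_IJ_K : ∀ i ∈ I ∪ J, ∀ k ∈ K, Commute (cs.simple i) (cs.simple k) := by
    intro i hi k hk
    rcases hi with hi | hi
    · exact hcommIK i hi k hk
    · exact hcommJK i hi k hk
  have hdecompIJ : ∀ w ∈ parab cs (I ∪ J), ∃ p ∈ parab cs I, ∃ q ∈ parab cs J, w = p * q :=
    fun w hw => CoxAux.parab_union_decomp cs hcommIJ hw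
  have ht_IJ_K : ∀ x ∈ parab cs (I ∪ J), ∀ y ∈ parab cs K, x * y = 1 → x = 1 := by
    intro x hx y hy hxy
    obtain ⟨p, hp, q, hq, rfl⟩ := hdecompIJ x hx
    obtain ⟨h1, h2, -⟩ := hdp p hp q hq y hy hxy
    rw [h1, h2, one_mul]
  -- length additivity
  have hlen2 : ∀ p ∈ parab cs I, ∀ q ∈ parab cs J, cs.length (p * q) = cs.length p + cs.length q :=
    fun p hp q hq => CoxAux.length_parab_mul cs ht_IJ hp hq
  have hmemIJ : ∀ p ∈ parab cs I, ∀ q ∈ parab cs J, p * q ∈ parab cs (I ∪ J) := by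
    intro p hp q hq
    exact mul_mem (CoxAux.parab_mono cs Set.subset_union_left hp)
      (CoxAux.parab_mono cs Set.subset_union_right hq)
  have hlen3 : ∀ p ∈ parab cs I, ∀ q ∈ parab cs J, ∀ r ∈ parab cs K,
      cs.length (p * q * r) = cs.length p + cs.length q + cs.length r := by
    intro p hp q hq r hr
    rw [CoxAux.length_parab_mul cs ht_IJ_K (hmemIJ p hp q hq) hr, hlen2 p hp q hq]
  -- sigma facts
  have hσmem : ∀ x ∈ parab cs I, σ x ∈ parab cs J := fun x hx => hbij.mapsTo hx
  have hσlen : ∀ x ∈ parab cs I, cs.length (σ x) = cs.length x :=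
    fun x hx => CoxAux.sigma_length cs hσmul hbij hσsimple hx
  -- simple reflections outside I are not in the parabolic of I
  have hsnotI : ∀ j ∈ J ∪ K, cs.simple j ∉ parab cs I := by
    intro j hj hsj
    have hone : cs.simple j = 1 := by
      rcases hj with hjJ | hjK
      · exact (hdp (cs.simple j) hsj (cs.simple j) (CoxAux.simple_mem_parab cs hjJ)
          1 (one_mem _) (by rw [mul_one, cs.simple_mul_simple_self])).1
      · exact (hdp (cs.simple j) hsj 1 (one_mem _) (cs.simple j)
          (CoxAux.simple_mem_parab cs hjK)
          (by rw [mul_one, cs.simple_mul_simple_self])).1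
    have h1 : cs.length (cs.simple j) = 1 := cs.length_simple j
    rw [hone, cs.length_one] at h1
    omega
  -- every element of the parabolic of I is a minimal coset representative
  have hminRep : ∀ p ∈ parab cs I, p ∈ minReps cs (J ∪ K) := by
    intro p hp j hj
    rcases cs.length_mul_simple p j with hc | hc
    · omega
    · exfalso
      have hne := cs.length_mul_simple_ne p j
      have hlt : cs.length (p * cs.simple j) < cs.length p := by
        rcases Nat.eq_zero_or_pos (cs.length p) with h0' | h0'
        · rw [h0'] at hc hne ⊢
          omega
        · omega
      have hinv : cs.IsRightInversion p (cs.simple j) := ⟨cs.isReflection_simple j, hlt⟩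
      exact hsnotI j hj (CoxAux.rInv_subset_parab cs hp hinv)
  -- the longest element length formula
  have hw0 : ∀ y ∈ parab cs I, cs.length (w0I * y) + cs.length y = cs.length w0I :=
    fun y hy => CoxAux.length_w0_mul cs h0 hmax hy
  have hIL : I ⊆ I ∪ J ∪ K := Set.subset_union_left.trans Set.subset_union_left
  have hJL : J ⊆ I ∪ J ∪ K := Set.subset_union_right.trans Set.subset_union_left
  have hKL : K ⊆ I ∪ J ∪ K := Set.subset_union_right
  ext z
  simp only [Set.mem_inter_iff, Set.mem_setOf_eq, SetLike.mem_coe]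
  constructor
  · -- forward direction
    rintro ⟨⟨w, hwmin, ⟨a, haK, x, hxI, hz_eq⟩, hlen_z⟩, hzL⟩
    -- w lies in the parabolic of I ∪ J ∪ K
    have hσxJ : σ x ∈ parab cs J := hσmem x hxI
    have hwL : w ∈ parab cs (I ∪ J ∪ K) := by
      have hw_eq : w = z * (x * σ x)⁻¹ * a⁻¹ := by rw [hz_eq]; group
      rw [hw_eq]
      exact mul_mem (mul_mem hzL (inv_mem (mul_mem (CoxAux.parab_mono cs hIL hxI)
        (CoxAux.parab_mono cs hJL hσxJ)))) (inv_mem (CoxAux.parab_mono cs hKL haK))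
    -- decompose w
    obtain ⟨pq, hpq, r, hrK, hw_dec⟩ := CoxAux.parab_union_decomp cs hcomm_IJ_K hwL
    obtain ⟨p, hpI, q, hqJ, rfl⟩ := hdecompIJ pq hpq
    -- q = 1
    have hq1 : q = 1 := by
      by_contra hq1
      obtain ⟨j, hjJ, hq', hqdesc⟩ := CoxAux.exists_right_descent_parab cs hqJ hq1
      have hcjr : Commute (cs.simple j) r :=
        CoxAux.commute_parab cs hcommJK (CoxAux.simple_mem_parab cs hjJ) hrK
      have hws : w * cs.simple j = p * (q * cs.simple j) * r := by
        rw [hw_dec, mul_assoc (p * q) r (cs.simple j), ← hcjr.eq, ← mul_assoc, mul_assoc p q]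
      have hl1 : cs.length w = cs.length p + cs.length q + cs.length r := by
        rw [hw_dec]
        exact hlen3 p hpI q hqJ r hrK
      have hl2 : cs.length (w * cs.simple j) =
          cs.length p + cs.length (q * cs.simple j) + cs.length r := by
        rw [hws]
        exact hlen3 p hpI _ hq' r hrK
      have := hwmin j (Set.mem_union_left K hjJ)
      omega
    -- r = 1
    have hr1 : r = 1 := by
      by_contra hr1
      obtain ⟨k, hkK, hr', hrdesc⟩ := CoxAux.exists_right_descent_parab cs hrK hr1
      have hws : w * cs.simple k = p * q * (r * cs.simple k) := by
        rw [hw_dec, mul_assoc]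
      have hl1 : cs.length w = cs.length p + cs.length q + cs.length r := by
        rw [hw_dec]
        exact hlen3 p hpI q hqJ r hrK
      have hl2 : cs.length (w * cs.simple k) =
          cs.length p + cs.length q + cs.length (r * cs.simple k) := by
        rw [hws]
        exact hlen3 p hpI q hqJ _ hr'
      have := hwmin k (Set.mem_union_right J hkK)
      omega
    have hw_p : w = p := by rw [hw_dec, hq1, hr1, mul_one, mul_one]
    have hwI : w ∈ parab cs I := by rw [hw_p]; exact hpI
    -- rearrange z
    have hca : Commute a x :=
      CoxAux.commute_parab cs (fun k hk i hi => (hcommIK i hi k hk).symm) haK hxI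
    have hcaσ : Commute a (σ x) :=
      CoxAux.commute_parab cs (fun k hk j hj => (hcommJK j hj k hk).symm) haK hσxJ
    have hz2 : z = (w * x) * σ x * a := by
      rw [hz_eq]
      calc w * a * (x * σ x) = w * (a * x * σ x) := by group
      _ = w * (x * a * σ x) := by rw [hca.eq]
      _ = w * (x * (σ x * a)) := by rw [mul_assoc x a (σ x), hcaσ.eq, ← mul_assoc x (σ x) a,
            mul_assoc]
      _ = (w * x) * σ x * a := by group
    have hwxI : w * x ∈ parab cs I := mul_mem hwI hxI
    have hlz : cs.length z = cs.length (w * x) + cs.length (σ x) + cs.length a := by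
      rw [hz2]
      exact hlen3 _ hwxI _ hσxJ a haK
    have hσxlen : cs.length (σ x) = cs.length x := hσlen x hxI
    have htri : cs.length w ≤ cs.length (w * x) + cs.length x := by
      have h1 := cs.length_mul_le (w * x) x⁻¹
      rw [mul_inv_cancel_right, cs.length_inv] at h1
      exact h1
    have ha0 : cs.length a = 0 := by omega
    have ha1 : a = 1 := cs.length_eq_zero_iff.mp ha0
    have hpx : cs.length w = cs.length (w * x) + cs.length x := by omega
    refine ⟨w * x, hwxI, x, hxI, ?_, ?_⟩
    · rw [hz2, ha1, mul_one]
    · show cs.length (w0I * x) = cs.length (w0I * x * (w * x)⁻¹) + cs.length (w * x)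
      have hrw : w0I * x * (w * x)⁻¹ = w0I * w⁻¹ := by group
      rw [hrw]
      have e1 := hw0 x hxI
      have e2 := hw0 w⁻¹ (inv_mem hwI)
      have e3 : cs.length w⁻¹ = cs.length w := cs.length_inv w
      omega
  · -- backward direction
    rintro ⟨u, huI, v, hvI, rfl, hleR⟩
    have hσvJ : σ v ∈ parab cs J := hσmem v hvI
    have hpI : u * v⁻¹ ∈ parab cs I := mul_mem huI (inv_mem hvI)
    have hleR' : cs.length (w0I * v) = cs.length (w0I * v * u⁻¹) + cs.length u := hleR
    have hrw : w0I * v * u⁻¹ = w0I * (u * v⁻¹)⁻¹ := by group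
    rw [hrw] at hleR'
    have e1 := hw0 v hvI
    have e2 := hw0 (u * v⁻¹)⁻¹ (inv_mem hpI)
    have e3 : cs.length (u * v⁻¹)⁻¹ = cs.length (u * v⁻¹) := cs.length_inv _
    have hplen : cs.length (u * v⁻¹) = cs.length u + cs.length v := by omega
    constructor
    · refine ⟨u * v⁻¹, hminRep _ hpI, ⟨1, one_mem _, v, hvI, by group⟩, ?_⟩
      have l1 := hlen2 u huI (σ v) hσvJ
      have l2 := hσlen v hvI
      omega
    · exact mul_mem (CoxAux.parab_mono cs hIL huI) (CoxAux.parab_mono cs hJL hσvJ)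

end BruhatSetup
end

section
/- With the setup of ≤_O and L = I∪J∪K: M ∩ W_L = {u v* : u, v ∈ W_I, ℓ(u v⁻¹) = ℓ(u) + ℓ(v)}, where M is the set of all elements that have minimal length in their coset modulo W_K W_{I,J}. -/
section BruhatSetup

variable {B : Type*} {W : Type*} [Group W] {M : CoxeterMatrix B}

namespace StmtAux

open CoxeterSystem List

variable (cs : CoxeterSystem M W)

local prefix:100 "s" => cs.simple
local prefix:100 "π" => cs.wordProd
local prefix:100 "ℓ" => cs.length
local prefix:100 "ris" => cs.rightInvSeq
local prefix:100 "lis" => cs.leftInvSeq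

open Classical in
/-- indicator of `x = t` in `ZMod 2`. -/
noncomputable def ind (x t : W) : ZMod 2 := if x = t then 1 else 0

theorem ind_pos {x t : W} (h : x = t) : ind x t = 1 := by simp [ind, h]

theorem ind_neg {x t : W} (h : x ≠ t) : ind x t = 0 := by simp [ind, h]

theorem ind_congr {x t y u : W} (h : x = t ↔ y = u) : ind x t = ind y u := by
  by_cases hx : x = t
  · rw [ind_pos hx, ind_pos (h.mp hx)]
  · rw [ind_neg hx, ind_neg (fun hy => hx (h.mpr hy))]

/-- mod-2 count of `t` in a list. -/
noncomputable def nu (t : W) : List W → ZMod 2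
  | [] => 0
  | x :: l => ind x t + nu t l

@[simp] theorem nu_nil (t : W) : nu t ([] : List W) = 0 := rfl

@[simp] theorem nu_cons (t x : W) (l : List W) : nu t (x :: l) = ind x t + nu t l := rfl

theorem nu_append (t : W) (l l' : List W) : nu t (l ++ l') = nu t l + nu t l' := by
  induction l with
  | nil => simp
  | cons x l ih => simp [nu_cons, ih, add_assoc]

theorem nu_reverse (t : W) (l : List W) : nu t l.reverse = nu t l := by
  induction l with
  | nil => simp
  | cons x l ih => rw [reverse_cons, nu_append, ih, nu_cons]; simp [nu, add_comm]

theorem nu_map_conj (g t : W) (l : List W) :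
    nu t (l.map (fun r => g⁻¹ * r * g)) = nu (g * t * g⁻¹) l := by
  induction l with
  | nil => simp
  | cons x l ih =>
    rw [map_cons, nu_cons, nu_cons, ih]
    congr 1
    apply ind_congr
    constructor
    · intro h; rw [← h]; group
    · intro h; rw [h]; group

theorem mem_of_nu_ne_zero {t : W} {l : List W} (h : nu t l ≠ 0) : t ∈ l := by
  induction l with
  | nil => exact absurd rfl h
  | cons x l ih =>
    by_cases hx : x = t
    · rw [hx]; exact mem_cons_self
    · rw [nu_cons, ind_neg hx, zero_add] at h
      exact mem_cons_of_mem _ (ih h)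

/-- The signed permutation attached to a simple reflection. -/
noncomputable def sp (i : B) : Equiv.Perm (W × ZMod 2) :=
  Function.Involutive.toPerm
    (fun p => (cs.simple i * p.1 * cs.simple i, p.2 + ind p.1 (cs.simple i)))
    (by
      intro p
      have hss := cs.simple_mul_simple_self i
      have h1 : cs.simple i * (cs.simple i * p.1 * cs.simple i) * cs.simple i = p.1 := by
        calc cs.simple i * (cs.simple i * p.1 * cs.simple i) * cs.simple i
            = (cs.simple i * cs.simple i) * p.1 * (cs.simple i * cs.simple i) := by group
          _ = p.1 := by rw [hss]; group
      have h2 : (cs.simple i * p.1 * cs.simple i = cs.simple i) ↔ p.1 = cs.simple i := by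
        constructor
        · intro h
          calc p.1 = cs.simple i * (cs.simple i * p.1 * cs.simple i) * cs.simple i := h1.symm
            _ = cs.simple i * cs.simple i * cs.simple i := by rw [h]
            _ = cs.simple i := by rw [hss, one_mul]
        · intro h; rw [h, hss, one_mul]
      have hz : ∀ a : ZMod 2, a + a = 0 := by decide
      refine Prod.ext h1 ?_
      show p.2 + ind p.1 (cs.simple i) + ind (cs.simple i * p.1 * cs.simple i) (cs.simple i) = p.2
      rw [ind_congr h2, add_assoc, hz, add_zero])

theorem sp_apply (i : B) (t : W) (e : ZMod 2) :
    sp cs i (t, e) = (cs.simple i * t * cs.simple i, e + ind t (cs.simple i)) := rfl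

theorem prod_sp_apply (om : List B) (t : W) (e : ZMod 2) :
    (om.map (sp cs)).prod (t, e) =
      (π om * t * (π om)⁻¹, e + nu t (ris om)) := by
  induction om generalizing t e with
  | nil => simp [nu]
  | cons x om ih =>
    rw [map_cons, prod_cons, Equiv.Perm.mul_apply, ih, sp_apply]
    have hris : ris (x :: om) = ((π om)⁻¹ * s x * π om) :: ris om := rfl
    rw [hris, nu_cons]
    refine Prod.ext ?_ ?_
    · show s x * (π om * t * (π om)⁻¹) * s x = π (x :: om) * t * (π (x :: om))⁻¹
      rw [cs.wordProd_cons, mul_inv_rev, cs.inv_simple]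
      group
    · show e + nu t (ris om) + ind (π om * t * (π om)⁻¹) (s x)
        = e + (ind ((π om)⁻¹ * s x * π om) t + nu t (ris om))
      have : ind (π om * t * (π om)⁻¹) (s x) = ind ((π om)⁻¹ * s x * π om) t := by
        apply ind_congr
        constructor
        · intro h; rw [← h]; group
        · intro h; rw [← h]; group
      rw [this]; ring

theorem prod_map_alt {G : Type*} [Monoid G] (f : B → G) (i i' : B) (m : ℕ) :
    ((CoxeterSystem.alternatingWord i i' (2 * m)).map f).prod = (f i * f i') ^ m := by
  induction m with
  | zero => simp [CoxeterSystem.alternatingWord]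
  | succ m ih =>
    have h1 : 2 * (m + 1) = (2 * m + 1) + 1 := by ring
    have h2 : ¬ Even (2 * m + 1) := by simp [Nat.even_add_one, parity_simps]
    have h3 : Even (2 * m) := even_two_mul m
    rw [h1, CoxeterSystem.alternatingWord_succ', if_neg h2,
      CoxeterSystem.alternatingWord_succ', if_pos h3]
    rw [map_cons, map_cons, prod_cons, prod_cons, ih, pow_succ']
    rw [mul_assoc]

theorem wordProd_alt_even (i i' : B) (m : ℕ) :
    π (CoxeterSystem.alternatingWord i i' (2 * m)) = (s i * s i') ^ m :=
  prod_map_alt cs.simple i i' m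

theorem wordProd_alt_period (i i' : B) (n : ℕ) :
    π (CoxeterSystem.alternatingWord i i' (n + 2 * M i i')) =
      π (CoxeterSystem.alternatingWord i i' n) := by
  rw [cs.prod_alternatingWord_eq_mul_pow, cs.prod_alternatingWord_eq_mul_pow]
  have he : Even (n + 2 * M i i') ↔ Even n := by simp [Nat.even_add]
  have hd : (n + 2 * M i i') / 2 = n / 2 + M i i' := by omega
  rw [hd, pow_add, cs.simple_mul_simple_pow, mul_one]
  by_cases h : Even n
  · rw [if_pos h, if_pos (he.mpr h)]
  · rw [if_neg h, if_neg (fun hh => h (he.mp hh))]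

theorem hpow_semiconj (i i' : B) (k : ℕ) :
    s i' * (s i * s i') ^ k = ((s i * s i') ^ k)⁻¹ * s i' := by
  have hsc : SemiconjBy (s i') (s i * s i') (s i * s i')⁻¹ := by
    unfold SemiconjBy
    rw [mul_inv_rev, cs.inv_simple, cs.inv_simple]
    group
  have h2 := hsc.pow_right k
  rw [SemiconjBy, inv_pow] at h2
  exact h2

theorem conj_iff (w a b : W) : a = w * b * w⁻¹ ↔ w⁻¹ * a * w = b := by
  constructor
  · intro h; rw [h]; group
  · intro h; rw [← h]; group

theorem wordProd_alt_odd_eq_conj (i i' : B) (n : ℕ) :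
    π (CoxeterSystem.alternatingWord i i' (2 * n + 1)) =
      (π (CoxeterSystem.alternatingWord i i' n))⁻¹ *
        s (if Even n then i' else i) * π (CoxeterSystem.alternatingWord i i' n) := by
  have hpow := hpow_semiconj cs i i'
  have hodd : ¬ Even (2 * n + 1) := by simp [Nat.even_add_one, parity_simps]
  have hdiv : (2 * n + 1) / 2 = n := by omega
  rw [cs.prod_alternatingWord_eq_mul_pow i i' (2 * n + 1), if_neg hodd, hdiv]
  rcases Nat.even_or_odd n with hn | hn
  · obtain ⟨q, hq⟩ := hn
    have hdiv2 : n / 2 = q := by omega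
    rw [cs.prod_alternatingWord_eq_mul_pow i i' n, if_pos ⟨q, hq⟩, if_pos ⟨q, hq⟩, one_mul, hdiv2]
    calc s i' * (s i * s i') ^ n
        = ((s i * s i') ^ n)⁻¹ * s i' := hpow n
      _ = ((s i * s i') ^ q)⁻¹ * (((s i * s i') ^ q)⁻¹ * s i') := by
          rw [hq, pow_add]; group
      _ = ((s i * s i') ^ q)⁻¹ * (s i' * (s i * s i') ^ q) := by rw [hpow q]
      _ = ((s i * s i') ^ q)⁻¹ * s i' * (s i * s i') ^ q := by group
  · obtain ⟨q, hq⟩ := hn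
    have hne : ¬ Even n := by rw [hq]; simp [Nat.even_add_one, parity_simps]
    have hdiv2 : n / 2 = q := by omega
    rw [cs.prod_alternatingWord_eq_mul_pow i i' n, if_neg hne, if_neg hne, hdiv2]
    symm
    calc (s i' * (s i * s i') ^ q)⁻¹ * s i * (s i' * (s i * s i') ^ q)
        = ((s i * s i') ^ q)⁻¹ * (s i' * ((s i * s i') * (s i * s i') ^ q)) := by
          rw [mul_inv_rev, cs.inv_simple]; simp only [mul_assoc]
      _ = ((s i * s i') ^ q)⁻¹ * (s i' * (s i * s i') ^ (q + 1)) := by rw [← pow_succ']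
      _ = ((s i * s i') ^ q)⁻¹ * (((s i * s i') ^ (q + 1))⁻¹ * s i') := by rw [hpow (q + 1)]
      _ = ((s i * s i') ^ (q + (q + 1)))⁻¹ * s i' := by rw [pow_add]; group
      _ = ((s i * s i') ^ n)⁻¹ * s i' := by rw [show q + (q + 1) = n by omega]
      _ = s i' * (s i * s i') ^ n := (hpow n).symm

theorem ris_alt (i i' : B) (n : ℕ) :
    ris (CoxeterSystem.alternatingWord i i' n) =
      ((List.range n).reverse).map
        (fun e => π (CoxeterSystem.alternatingWord i i' (2 * e + 1))) := by
  induction n with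
  | zero => simp [CoxeterSystem.alternatingWord]
  | succ n ih =>
    rw [CoxeterSystem.alternatingWord_succ']
    have hris : ris ((if Even n then i' else i) :: CoxeterSystem.alternatingWord i i' n)
        = ((π (CoxeterSystem.alternatingWord i i' n))⁻¹ * s (if Even n then i' else i) *
            π (CoxeterSystem.alternatingWord i i' n)) :: ris (CoxeterSystem.alternatingWord i i' n) := rfl
    rw [hris, ih, List.range_succ, List.reverse_append, List.reverse_singleton,
      List.singleton_append, List.map_cons, ← wordProd_alt_odd_eq_conj cs]

theorem map_range_shift {γ : Type*} (f : ℕ → γ) (n k : ℕ) :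
    (List.range (n + k)).map f = (List.range n).map f ++ (List.range k).map (fun e => f (n + e)) := by
  induction k with
  | zero => simp
  | succ k ih =>
    rw [show n + (k + 1) = (n + k) + 1 by omega, List.range_succ, List.map_append, ih,
      List.range_succ, List.map_append]
    simp

theorem nu_ris_alt (i i' : B) (t : W) :
    nu t (ris (CoxeterSystem.alternatingWord i i' (2 * M i i'))) = 0 := by
  rw [ris_alt]
  set f : ℕ → W := fun e => π (CoxeterSystem.alternatingWord i i' (2 * e + 1)) with hf
  rw [List.map_reverse, nu_reverse]
  have hsplit : List.range (2 * M i i') = List.range (M i i' + M i i') := by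
    rw [two_mul]
  rw [hsplit, map_range_shift]
  have hper : ∀ e, f (M i i' + e) = f e := by
    intro e
    show π (CoxeterSystem.alternatingWord i i' (2 * (M i i' + e) + 1))
      = π (CoxeterSystem.alternatingWord i i' (2 * e + 1))
    rw [show 2 * (M i i' + e) + 1 = (2 * e + 1) + 2 * M i i' by ring]
    exact wordProd_alt_period cs i i' (2 * e + 1)
  have hmap : (List.range (M i i')).map (fun e => f (M i i' + e))
      = (List.range (M i i')).map f := by
    apply List.map_congr_left
    intro e _
    exact hper e
  rw [hmap, nu_append]
  have hz : ∀ a : ZMod 2, a + a = 0 := by decide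
  exact hz _

theorem sp_liftable : M.IsLiftable (fun i => sp cs i) := by
  intro i i'
  have key : ((sp cs i) * (sp cs i')) ^ (M i i')
      = ((CoxeterSystem.alternatingWord i i' (2 * M i i')).map (sp cs)).prod :=
    (prod_map_alt (sp cs) i i' (M i i')).symm
  rw [key]
  apply Equiv.ext
  rintro ⟨t, e⟩
  rw [prod_sp_apply]
  have h1 : π (CoxeterSystem.alternatingWord i i' (2 * M i i')) = 1 := by
    rw [wordProd_alt_even cs, cs.simple_mul_simple_pow]
  rw [h1, nu_ris_alt cs, add_zero]
  simp

/-- The signed permutation representation. -/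
noncomputable def phi : W →* Equiv.Perm (W × ZMod 2) :=
  cs.lift ⟨fun i => sp cs i, sp_liftable cs⟩

theorem phi_simple (i : B) : phi cs (s i) = sp cs i :=
  cs.lift_apply_simple (sp_liftable cs) i

theorem phi_wordProd (om : List B) : phi cs (π om) = (om.map (sp cs)).prod := by
  unfold CoxeterSystem.wordProd
  rw [MonoidHom.map_list_prod, List.map_map]
  congr 1
  apply List.map_congr_left
  intro x _
  exact phi_simple cs x

/-- The reflection-parity invariant. -/
noncomputable def eta (w t : W) : ZMod 2 := ((phi cs w) (t, 0)).2

theorem eta_wordProd (om : List B) (t : W) : eta cs (π om) t = nu t (ris om) := by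
  unfold eta
  rw [phi_wordProd, prod_sp_apply, zero_add]

theorem phi_apply (w t : W) (e : ZMod 2) :
    phi cs w (t, e) = (w * t * w⁻¹, e + eta cs w t) := by
  obtain ⟨om, rfl⟩ := cs.wordProd_surjective w
  rw [phi_wordProd, prod_sp_apply, eta_wordProd]

theorem exists_erase_of_eta_one (om : List B) (t : W) (h : eta cs (π om) t = 1) :
    ∃ γ, γ.Sublist om ∧ γ.length + 1 = om.length ∧ π γ = π om * t := by
  rw [eta_wordProd] at h
  have ht : t ∈ ris om := mem_of_nu_ne_zero (by rw [h]; exact one_ne_zero)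
  obtain ⟨j, hj, hjt⟩ := List.mem_iff_getElem.mp ht
  rw [cs.length_rightInvSeq] at hj
  have hgetD : (ris om).getD j 1 = t := by
    rw [List.getD_eq_getElem _ _ (by rw [cs.length_rightInvSeq]; exact hj)]
    exact hjt
  refine ⟨om.eraseIdx j, List.eraseIdx_sublist om j, ?_, ?_⟩
  · exact List.length_eraseIdx_add_one hj
  · rw [← hgetD, cs.wordProd_mul_getD_rightInvSeq]

theorem ris_append (α γ : List B) :
    ris (α ++ γ) = (ris α).map (fun r => (π γ)⁻¹ * r * π γ) ++ ris γ := by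
  induction α with
  | nil => simp
  | cons x α ih =>
    have h1 : ris ((x :: α) ++ γ)
        = ((π (α ++ γ))⁻¹ * s x * π (α ++ γ)) :: ris (α ++ γ) := rfl
    have h2 : ris (x :: α) = ((π α)⁻¹ * s x * π α) :: ris α := rfl
    rw [h1, ih, h2, List.map_cons, List.cons_append]
    congr 1
    rw [cs.wordProd_append, mul_inv_rev]
    group

theorem nu_lis_eq_nu_ris (β : List B) (y : B) :
    nu (π β * s y * (π β)⁻¹) (lis β) = nu (s y) (ris β) := by
  induction β generalizing y with
  | nil => simp
  | cons x α ih =>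
    have h1 : lis (x :: α) = s x :: (lis α).map (MulAut.conj (s x)) := rfl
    have h2 : ris (x :: α) = ((π α)⁻¹ * s x * π α) :: ris α := rfl
    rw [h1, h2, nu_cons, nu_cons]
    have hconj : ((lis α).map (MulAut.conj (s x)))
        = (lis α).map (fun r => (s x)⁻¹ * r * (s x)) := by
      apply List.map_congr_left
      intro r _
      simp [MulAut.conj_apply, cs.inv_simple]
    rw [hconj, nu_map_conj]
    have harg : s x * (π (x :: α) * s y * (π (x :: α))⁻¹) * (s x)⁻¹
        = π α * s y * (π α)⁻¹ := by
      simp [cs.wordProd_cons, mul_inv_rev, cs.inv_simple, mul_assoc,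
        cs.simple_mul_simple_cancel_left, cs.simple_mul_simple_self]
    rw [harg, ih]
    congr 1
    have hw : (π (x :: α))⁻¹ * s x * π (x :: α) = (π α)⁻¹ * s x * π α := by
      simp [cs.wordProd_cons, mul_inv_rev, cs.inv_simple, mul_assoc,
        cs.simple_mul_simple_cancel_left, cs.simple_mul_simple_self]
    apply ind_congr
    rw [conj_iff (π (x :: α)) (s x) (s y), hw]

theorem eta_refl_self {t : W} (ht : cs.IsReflection t) : eta cs t t = 1 := by
  obtain ⟨u, y, rfl⟩ := ht
  obtain ⟨β, rfl⟩ := cs.wordProd_surjective u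
  set t := π β * s y * (π β)⁻¹ with hts
  have hτ : π (β ++ y :: β.reverse) = t := by
    rw [cs.wordProd_append, cs.wordProd_cons, cs.wordProd_reverse, hts]
    group
  have e1 : eta cs t t = nu t (ris (β ++ y :: β.reverse)) := by
    rw [← eta_wordProd, hτ]
  have h3 : ris (y :: β.reverse)
      = ((π β.reverse)⁻¹ * s y * π β.reverse) :: ris β.reverse := rfl
  have h4 : (π β.reverse)⁻¹ * s y * π β.reverse = t := by
    rw [cs.wordProd_reverse, hts]; group
  have h5 : nu t ((ris β).map (fun r => (π (y :: β.reverse))⁻¹ * r * π (y :: β.reverse)))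
      = nu (s y) (ris β) := by
    rw [nu_map_conj]
    congr 1
    rw [cs.wordProd_cons, cs.wordProd_reverse, hts]
    group
  have h6 : nu t (ris β.reverse) = nu (s y) (ris β) := by
    rw [cs.rightInvSeq_reverse, nu_reverse, hts]
    exact nu_lis_eq_nu_ris cs β y
  rw [e1, ris_append, h3, nu_append, nu_cons, h4, ind_pos rfl, h5, h6]
  have hz : ∀ a : ZMod 2, a + (1 + a) = 1 := by decide
  exact hz _

theorem eta_mul_refl {t : W} (ht : cs.IsReflection t) (w : W) :
    eta cs (w * t) t = eta cs w t + 1 := by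
  have h1' : phi cs t (t, (0 : ZMod 2)) = (t, (1 : ZMod 2)) := by
    rw [phi_apply, eta_refl_self cs ht, zero_add]
    have : t * t * t⁻¹ = t := by group
    rw [this]
  calc eta cs (w * t) t = ((phi cs (w * t)) (t, 0)).2 := rfl
    _ = ((phi cs w) ((phi cs t) (t, 0))).2 := by rw [map_mul, Equiv.Perm.mul_apply]
    _ = ((phi cs w) (t, 1)).2 := by rw [h1']
    _ = 1 + eta cs w t := by rw [phi_apply]
    _ = eta cs w t + 1 := add_comm _ _

theorem eta_eq_one_of_lt {w t : W} (ht : cs.IsReflection t)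
    (hlt : ℓ (w * t) < ℓ w) : eta cs w t = 1 := by
  by_contra h0
  have h1 : eta cs w t = 0 := by
    have : ∀ a : ZMod 2, a ≠ 1 → a = 0 := by decide
    exact this _ h0
  have h2 : eta cs (w * t) t = 1 := by
    rw [eta_mul_refl cs ht, h1, zero_add]
  obtain ⟨ψ, hψl, hψp⟩ := cs.exists_reduced_word (w * t)
  rw [hψp] at h2
  obtain ⟨γ, _, hγl, hγp⟩ := exists_erase_of_eta_one cs ψ t h2
  rw [← hψp] at hγp
  have h3 : w * t * t = w := by
    have := ht.mul_self
    calc w * t * t = w * (t * t) := by group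
      _ = w := by rw [this, mul_one]
  rw [h3] at hγp
  have h4 : ℓ w ≤ γ.length := hγp ▸ cs.length_wordProd_le γ
  have h5 : ℓ (w * t) = ψ.length := by rw [hψp]; exact hψl
  omega

theorem exists_erase_of_lt {w t : W} (om : List B) (hom : π om = w)
    (ht : cs.IsReflection t) (hlt : ℓ (w * t) < ℓ w) :
    ∃ γ, γ.Sublist om ∧ γ.length + 1 = om.length ∧ π γ = w * t := by
  have h1 : eta cs w t = 1 := eta_eq_one_of_lt cs ht hlt
  rw [← hom] at h1 ⊢
  exact exists_erase_of_eta_one cs om t h1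

theorem exch_left (α : List B) (x : B) (hlt : ℓ (s x * π α) < ℓ (π α)) :
    ∃ γ, γ.Sublist α ∧ π γ = s x * π α := by
  have href : cs.IsReflection (s x) := cs.isReflection_simple x
  have h1 : ℓ ((π α)⁻¹ * s x) < ℓ ((π α)⁻¹) := by
    have e1 : (π α)⁻¹ * s x = (s x * π α)⁻¹ := by
      rw [mul_inv_rev, cs.inv_simple]
    rw [e1, cs.length_inv, cs.length_inv]
    exact hlt
  obtain ⟨γ', hγ'sub, _, hγ'p⟩ :=
    exists_erase_of_lt cs (α.reverse) (cs.wordProd_reverse α) href h1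
  refine ⟨γ'.reverse, ?_, ?_⟩
  · have := hγ'sub.reverse
    rwa [List.reverse_reverse] at this
  · rw [cs.wordProd_reverse, hγ'p, mul_inv_rev, cs.inv_simple, inv_inv]

theorem delete_to_reduced : ∀ (n : ℕ) (om : List B), om.length ≤ n →
    ∃ om', om'.Sublist om ∧ cs.IsReduced om' ∧ π om' = π om := by
  intro n
  induction n with
  | zero =>
    intro om hom
    have : om = [] := List.eq_nil_of_length_eq_zero (Nat.le_zero.mp hom)
    subst this
    exact ⟨[], List.Sublist.refl _, by simp [CoxeterSystem.IsReduced], rfl⟩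
  | succ n ih =>
    intro om hom
    match om with
    | [] => exact ⟨[], List.Sublist.refl _, by simp [CoxeterSystem.IsReduced], rfl⟩
    | x :: α =>
      have hα : α.length ≤ n := by simpa using hom
      obtain ⟨α', hsub, hred, hprod⟩ := ih α hα
      by_cases hr : cs.IsReduced (x :: α')
      · exact ⟨x :: α', hsub.cons₂ x, hr,
          by rw [cs.wordProd_cons, cs.wordProd_cons, hprod]⟩
      · have hlt : ℓ (s x * π α') < ℓ (π α') := by
          have hle : ℓ (π (x :: α')) ≤ (x :: α').length := cs.length_wordProd_le _
          have hne : ℓ (π (x :: α')) ≠ (x :: α').length := hr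
          have h2 : ℓ (π (x :: α')) < α'.length + 1 := by
            simp only [List.length_cons] at hle hne; omega
          rw [cs.wordProd_cons] at h2
          have h3 : ℓ (π α') = α'.length := hred
          have h4 : ℓ (s x * π α') ≠ ℓ (π α') := cs.length_simple_mul_ne (π α') x
          omega
        obtain ⟨γ, hγsub, hγp⟩ := exch_left cs α' x hlt
        have hγlen : γ.length ≤ n := le_trans hγsub.length_le (le_trans hsub.length_le hα)
        obtain ⟨om', h1, h2', h3'⟩ := ih γ hγlen
        refine ⟨om', ?_, h2', ?_⟩
        · exact h1.trans (hγsub.trans (hsub.trans (List.sublist_cons_self x α)))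
        · rw [h3', hγp, cs.wordProd_cons, hprod]

theorem word_mem_parab {A : Set B} {om : List B} (hmem : ∀ b ∈ om, b ∈ A) :
    π om ∈ parab cs A := by
  induction om with
  | nil => rw [cs.wordProd_nil]; exact one_mem _
  | cons x om ih =>
    rw [cs.wordProd_cons]
    exact mul_mem (Subgroup.subset_closure ⟨x, hmem x (List.mem_cons_self), rfl⟩)
      (ih (fun b hb => hmem b (List.mem_cons_of_mem x hb)))

theorem parab_word {A : Set B} {w : W} (hw : w ∈ parab cs A) :
    ∃ om : List B, (∀ b ∈ om, b ∈ A) ∧ π om = w := by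
  induction hw using Subgroup.closure_induction with
  | mem x hx =>
    obtain ⟨i, hi, rfl⟩ := hx
    exact ⟨[i], by simpa using hi, cs.wordProd_singleton i⟩
  | one => exact ⟨[], by simp, cs.wordProd_nil⟩
  | mul x y hx hy ihx ihy =>
    obtain ⟨o1, h1, hp1⟩ := ihx
    obtain ⟨o2, h2, hp2⟩ := ihy
    refine ⟨o1 ++ o2, ?_, by rw [cs.wordProd_append, hp1, hp2]⟩
    intro b hb
    rcases List.mem_append.mp hb with hh | hh
    exacts [h1 b hh, h2 b hh]
  | inv x hx ihx =>
    obtain ⟨o1, h1, hp1⟩ := ihx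
    exact ⟨o1.reverse, fun b hb => h1 b (List.mem_reverse.mp hb),
      by rw [cs.wordProd_reverse, hp1]⟩

theorem parab_reduced_word {A : Set B} {w : W} (hw : w ∈ parab cs A) :
    ∃ om : List B, (∀ b ∈ om, b ∈ A) ∧ cs.IsReduced om ∧ π om = w := by
  obtain ⟨om, hmem, hp⟩ := parab_word cs hw
  obtain ⟨om', hsub, hred, hp'⟩ := delete_to_reduced cs om.length om le_rfl
  exact ⟨om', fun b hb => hmem b (hsub.subset hb), hred, by rw [hp', hp]⟩

theorem commute_parab {A A' : Set B}
    (hc : ∀ a ∈ A, ∀ b ∈ A', Commute (cs.simple a) (cs.simple b))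
    {x y : W} (hx : x ∈ parab cs A) (hy : y ∈ parab cs A') : Commute x y := by
  induction hx using Subgroup.closure_induction with
  | mem x hxm =>
    induction hy using Subgroup.closure_induction with
    | mem y hym =>
      obtain ⟨a, ha, rfl⟩ := hxm
      obtain ⟨b, hb, rfl⟩ := hym
      exact hc a ha b hb
    | one => exact Commute.one_right _
    | mul y z hy hz ihy ihz => exact Commute.mul_right ihy ihz
    | inv y hy ihy => exact Commute.inv_right ihy
  | one => exact Commute.one_left _
  | mul x1 x2 hh1 hh2 ih1 ih2 => exact Commute.mul_left ih1 ih2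
  | inv x1 hh1 ih1 => exact Commute.inv_left ih1

theorem parab_mono {A A' : Set B} (hAA : A ⊆ A') : parab cs A ≤ parab cs A' :=
  Subgroup.closure_mono (fun _ ⟨b, hb, e⟩ => ⟨b, hAA hb, e⟩)

theorem exists_right_descent_in {A : Set B} {w : W} (hw : w ∈ parab cs A) (hne : w ≠ 1) :
    ∃ j ∈ A, (ℓ (w * cs.simple j) < ℓ w ∧ w * cs.simple j ∈ parab cs A) := by
  obtain ⟨om, hmem, hred, hp⟩ := parab_reduced_word cs hw
  rcases List.eq_nil_or_concat om with rfl | ⟨o', j, rfl⟩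
  · rw [cs.wordProd_nil] at hp; exact absurd hp.symm hne
  · have hpj : w * cs.simple j = π o' := by
      rw [← hp, cs.wordProd_concat, cs.simple_mul_simple_cancel_right]
    refine ⟨j, hmem j (by simp), ?_, ?_⟩
    · have h1 : ℓ (π o') ≤ o'.length := cs.length_wordProd_le o'
      have h2 : ℓ w = o'.length + 1 := by
        rw [← hp]
        have h3 : ℓ (π (o'.concat j)) = (o'.concat j).length := hred
        rw [h3]
        simp
      rw [hpj]
      omega
    · rw [hpj]
      exact word_mem_parab cs (fun b hb => hmem b (by simp [hb]))

variable {I J K : Set B} {σ : W → W}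

theorem sort3 (h : GoodSetup cs I J K σ) {om : List B}
    (hom : ∀ b ∈ om, b ∈ I ∪ J ∪ K) :
    ∃ o1 o2 o3 : List B, (∀ b ∈ o1, b ∈ I) ∧ (∀ b ∈ o2, b ∈ J) ∧ (∀ b ∈ o3, b ∈ K) ∧
      π om = π o1 * π o2 * π o3 ∧ om.length = o1.length + o2.length + o3.length := by
  induction om with
  | nil => exact ⟨[], [], [], by simp, by simp, by simp, by simp, by simp⟩
  | cons x om ih =>
    obtain ⟨o1, o2, o3, m1, m2, m3, hp, hl⟩ := ih (fun b hb => hom b (List.mem_cons_of_mem x hb))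
    rcases hom x (List.mem_cons_self) with hx | hx
    · rcases hx with hx | hx
      · refine ⟨x :: o1, o2, o3, ?_, m2, m3, ?_, by simp [hl]; omega⟩
        · intro b hb
          rcases List.mem_cons.mp hb with rfl | hb
          exacts [hx, m1 b hb]
        · rw [cs.wordProd_cons, hp, cs.wordProd_cons]
          group
      · refine ⟨o1, x :: o2, o3, m1, ?_, m3, ?_, by simp [hl]; omega⟩
        · intro b hb
          rcases List.mem_cons.mp hb with rfl | hb
          exacts [hx, m2 b hb]
        · have hc : Commute (cs.simple x) (π o1) :=
            (commute_parab cs h.commIJ (word_mem_parab cs m1)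
              (Subgroup.subset_closure ⟨x, hx, rfl⟩)).symm
          calc π (x :: om) = s x * (π o1 * π o2 * π o3) := by rw [cs.wordProd_cons, hp]
            _ = (s x * π o1) * π o2 * π o3 := by group
            _ = (π o1 * s x) * π o2 * π o3 := by rw [hc.eq]
            _ = π o1 * (s x * π o2) * π o3 := by group
            _ = π o1 * π (x :: o2) * π o3 := by rw [cs.wordProd_cons]
    · refine ⟨o1, o2, x :: o3, m1, m2, ?_, ?_, by simp [hl]; omega⟩
      · intro b hb
        rcases List.mem_cons.mp hb with rfl | hb
        exacts [hx, m3 b hb]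
      · have hc1 : Commute (cs.simple x) (π o1) :=
          (commute_parab cs h.commIK (word_mem_parab cs m1)
            (Subgroup.subset_closure ⟨x, hx, rfl⟩)).symm
        have hc2 : Commute (cs.simple x) (π o2) :=
          (commute_parab cs h.commJK (word_mem_parab cs m2)
            (Subgroup.subset_closure ⟨x, hx, rfl⟩)).symm
        calc π (x :: om) = s x * (π o1 * π o2 * π o3) := by rw [cs.wordProd_cons, hp]
          _ = (s x * π o1) * π o2 * π o3 := by group
          _ = (π o1 * s x) * π o2 * π o3 := by rw [hc1.eq]
          _ = π o1 * (s x * π o2) * π o3 := by group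
          _ = π o1 * (π o2 * s x) * π o3 := by rw [hc2.eq]
          _ = π o1 * π o2 * (s x * π o3) := by group
          _ = π o1 * π o2 * π (x :: o3) := by rw [cs.wordProd_cons]

theorem decomp3 (h : GoodSetup cs I J K σ) {w : W} (hw : w ∈ parab cs (I ∪ J ∪ K)) :
    ∃ p q r : W, p ∈ parab cs I ∧ q ∈ parab cs J ∧ r ∈ parab cs K ∧ w = p * q * r := by
  obtain ⟨om, hmem, hp⟩ := parab_word cs hw
  obtain ⟨o1, o2, o3, m1, m2, m3, hprod, _⟩ := sort3 cs h hmem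
  exact ⟨π o1, π o2, π o3, word_mem_parab cs m1, word_mem_parab cs m2,
    word_mem_parab cs m3, by rw [← hp, hprod]⟩

theorem uniq3 (h : GoodSetup cs I J K σ) {p q r p' q' r' : W}
    (hp : p ∈ parab cs I) (hq : q ∈ parab cs J) (hr : r ∈ parab cs K)
    (hp' : p' ∈ parab cs I) (hq' : q' ∈ parab cs J) (hr' : r' ∈ parab cs K)
    (heq : p * q * r = p' * q' * r') : p = p' ∧ q = q' ∧ r = r' := by
  have hx : p⁻¹ * p' ∈ parab cs I := mul_mem (inv_mem hp) hp'
  have hy : q⁻¹ * q' ∈ parab cs J := mul_mem (inv_mem hq) hq'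
  have hz : r⁻¹ * r' ∈ parab cs K := mul_mem (inv_mem hr) hr'
  have c1 : Commute (p⁻¹ * p') q := commute_parab cs h.commIJ hx hq
  have c2 : Commute (p⁻¹ * p') r := commute_parab cs h.commIK hx hr
  have c3 : Commute (q⁻¹ * q') r := commute_parab cs h.commJK hy hr
  have key : (p * q * r) * ((p⁻¹ * p') * ((q⁻¹ * q') * (r⁻¹ * r'))) = p' * q' * r' := by
    calc (p * q * r) * ((p⁻¹ * p') * ((q⁻¹ * q') * (r⁻¹ * r')))
        = p * q * ((r * (p⁻¹ * p')) * ((q⁻¹ * q') * (r⁻¹ * r'))) := by group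
      _ = p * q * (((p⁻¹ * p') * r) * ((q⁻¹ * q') * (r⁻¹ * r'))) := by rw [c2.symm.eq]
      _ = p * ((q * (p⁻¹ * p')) * ((r * (q⁻¹ * q')) * (r⁻¹ * r'))) := by group
      _ = p * (((p⁻¹ * p') * q) * ((r * (q⁻¹ * q')) * (r⁻¹ * r'))) := by rw [c1.symm.eq]
      _ = p * (((p⁻¹ * p') * q) * (((q⁻¹ * q') * r) * (r⁻¹ * r'))) := by rw [c3.symm.eq]
      _ = (p * (p⁻¹ * p')) * ((q * (q⁻¹ * q')) * (r * (r⁻¹ * r'))) := by group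
      _ = p' * q' * r' := by group
  rw [heq] at key
  have hone : (p⁻¹ * p') * (q⁻¹ * q') * (r⁻¹ * r') = 1 := by
    have h2 := mul_left_cancel (a := p' * q' * r')
      (b := (p⁻¹ * p') * ((q⁻¹ * q') * (r⁻¹ * r'))) (c := 1) (by rw [key, mul_one])
    rw [mul_assoc]
    exact h2
  obtain ⟨e1, e2, e3⟩ := h.directProd (p⁻¹ * p') hx (q⁻¹ * q') hy (r⁻¹ * r') hz hone
  refine ⟨?_, ?_, ?_⟩
  · rw [← mul_one p, ← e1]; group
  · rw [← mul_one q, ← e2]; group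
  · rw [← mul_one r, ← e3]; group

theorem len3 (h : GoodSetup cs I J K σ) {p q r : W}
    (hp : p ∈ parab cs I) (hq : q ∈ parab cs J) (hr : r ∈ parab cs K) :
    ℓ (p * q * r) = ℓ p + ℓ q + ℓ r := by
  have hle : ℓ (p * q * r) ≤ ℓ p + ℓ q + ℓ r := by
    have h1 := cs.length_mul_le (p * q) r
    have h2 := cs.length_mul_le p q
    omega
  have hmem : p * q * r ∈ parab cs (I ∪ J ∪ K) := by
    refine mul_mem (mul_mem ?_ ?_) ?_
    · exact parab_mono cs (fun b hb => Or.inl (Or.inl hb)) hp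
    · exact parab_mono cs (fun b hb => Or.inl (Or.inr hb)) hq
    · exact parab_mono cs (fun b hb => Or.inr hb) hr
  obtain ⟨om, hmem', hred, hp'⟩ := parab_reduced_word cs hmem
  obtain ⟨o1, o2, o3, m1, m2, m3, hprod, hlen⟩ := sort3 cs h hmem'
  obtain ⟨e1, e2, e3⟩ := uniq3 cs h (word_mem_parab cs m1) (word_mem_parab cs m2)
    (word_mem_parab cs m3) hp hq hr (by rw [← hprod, hp'])
  have l1 : ℓ p ≤ o1.length := by rw [← e1]; exact cs.length_wordProd_le o1
  have l2 : ℓ q ≤ o2.length := by rw [← e2]; exact cs.length_wordProd_le o2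
  have l3 : ℓ r ≤ o3.length := by rw [← e3]; exact cs.length_wordProd_le o3
  have hit : ℓ (p * q * r) = om.length := by
    rw [← hp']; exact hred
  omega

theorem len2IJ (h : GoodSetup cs I J K σ) {p q : W}
    (hp : p ∈ parab cs I) (hq : q ∈ parab cs J) : ℓ (p * q) = ℓ p + ℓ q := by
  have hh := len3 cs h hp hq (one_mem (parab cs K))
  simpa using hh

theorem len2IK (h : GoodSetup cs I J K σ) {p r : W}
    (hp : p ∈ parab cs I) (hr : r ∈ parab cs K) : ℓ (p * r) = ℓ p + ℓ r := by
  have hh := len3 cs h hp (one_mem (parab cs J)) hr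
  simpa using hh

theorem sigma_one (h : GoodSetup cs I J K σ) : σ 1 = 1 := by
  have h1 := h.mulSigma 1 (one_mem _) 1 (one_mem _)
  rw [mul_one] at h1
  have h2 : σ 1 * σ 1 = σ 1 * 1 := by rw [mul_one, ← h1]
  exact mul_left_cancel h2

theorem sigma_wordProd (h : GoodSetup cs I J K σ) :
    ∀ om : List B, (∀ b ∈ om, b ∈ I) →
      ∃ ψ : List B, (∀ b ∈ ψ, b ∈ J) ∧ ψ.length = om.length ∧ σ (π om) = π ψ := by
  intro om
  induction om with
  | nil =>
    intro _
    exact ⟨[], by simp, by simp, by rw [cs.wordProd_nil, sigma_one cs h]⟩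
  | cons x om ih =>
    intro hom
    obtain ⟨ψ, hψ, hlen, hσ⟩ := ih (fun b hb => hom b (List.mem_cons_of_mem x hb))
    obtain ⟨j, hj, hsx⟩ := h.simpleSigma x (hom x (List.mem_cons_self))
    refine ⟨j :: ψ, ?_, by simp [hlen], ?_⟩
    · intro b hb
      rcases List.mem_cons.mp hb with rfl | hb
      exacts [hj, hψ b hb]
    · rw [cs.wordProd_cons, cs.wordProd_cons,
        h.mulSigma _ (Subgroup.subset_closure ⟨x, hom x (List.mem_cons_self), rfl⟩)
          _ (word_mem_parab cs (fun b hb => hom b (List.mem_cons_of_mem x hb))),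
        hsx, hσ]

theorem sigma_len_le (h : GoodSetup cs I J K σ) {x : W} (hx : x ∈ parab cs I) :
    ℓ (σ x) ≤ ℓ x := by
  obtain ⟨om, hmem, hred, hp⟩ := parab_reduced_word cs hx
  obtain ⟨ψ, _, hlen, hσ⟩ := sigma_wordProd cs h om hmem
  have h1 : ℓ (π ψ) ≤ ψ.length := cs.length_wordProd_le ψ
  have h2 : ℓ (π om) = om.length := hred
  rw [hp] at h2
  have hgoal : ℓ (σ x) = ℓ (π ψ) := by rw [← hp, hσ]
  omega

theorem sigma_simple_surj (h : GoodSetup cs I J K σ) :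
    ∀ j ∈ J, ∃ i ∈ I, σ (cs.simple i) = cs.simple j := by
  intro j hj
  have himg : ∀ om : List B, (∀ b ∈ om, b ∈ I) →
      σ (π om) ∈ parab cs {j' | j' ∈ J ∧ ∃ i ∈ I, σ (cs.simple i) = cs.simple j'} := by
    intro om
    induction om with
    | nil =>
      intro _
      rw [cs.wordProd_nil, sigma_one cs h]
      exact one_mem _
    | cons x om ih =>
      intro hom
      rw [cs.wordProd_cons,
        h.mulSigma _ (Subgroup.subset_closure ⟨x, hom x (List.mem_cons_self), rfl⟩)
          _ (word_mem_parab cs (fun b hb => hom b (List.mem_cons_of_mem x hb)))]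
      obtain ⟨j', hj', hsx⟩ := h.simpleSigma x (hom x (List.mem_cons_self))
      refine mul_mem ?_ (ih (fun b hb => hom b (List.mem_cons_of_mem x hb)))
      rw [hsx]
      exact Subgroup.subset_closure ⟨j', ⟨hj', x, hom x (List.mem_cons_self), hsx⟩, rfl⟩
  have hsj : cs.simple j ∈ parab cs {j' | j' ∈ J ∧ ∃ i ∈ I, σ (cs.simple i) = cs.simple j'} := by
    have hmem : cs.simple j ∈ (parab cs J : Set W) := Subgroup.subset_closure ⟨j, hj, rfl⟩
    obtain ⟨x, hx, hσx⟩ := h.bijSigma.surjOn hmem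
    obtain ⟨om, hom, hp⟩ := parab_word cs hx
    rw [← hσx, ← hp]
    exact himg om hom
  obtain ⟨om, hom, hred, hp⟩ := parab_reduced_word cs hsj
  have hlen : om.length = 1 := by
    have h2 : ℓ (π om) = om.length := hred
    rw [hp, cs.length_simple] at h2
    omega
  obtain ⟨t, rfl⟩ := List.length_eq_one_iff.mp hlen
  obtain ⟨ht1, i, hi, hσi⟩ := hom t (by simp)
  exact ⟨i, hi, by rw [hσi, ← cs.wordProd_singleton, hp]⟩

theorem sigma_len_ge (h : GoodSetup cs I J K σ) {x : W} (hx : x ∈ parab cs I) :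
    ℓ x ≤ ℓ (σ x) := by
  have hσx : σ x ∈ (parab cs J : Set W) := h.bijSigma.mapsTo hx
  obtain ⟨ψ, hψm, hred, hp⟩ := parab_reduced_word cs hσx
  have haux : ∀ ψ : List B, (∀ b ∈ ψ, b ∈ J) →
      ∃ om : List B, (∀ b ∈ om, b ∈ I) ∧ om.length = ψ.length ∧ σ (π om) = π ψ := by
    intro ψ
    induction ψ with
    | nil =>
      intro _
      exact ⟨[], by simp, by simp, by rw [cs.wordProd_nil, sigma_one cs h]⟩
    | cons y ψ ih =>
      intro hψ
      obtain ⟨om, hom, hlen, hσ⟩ := ih (fun b hb => hψ b (List.mem_cons_of_mem y hb))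
      obtain ⟨i, hi, hσi⟩ := sigma_simple_surj cs h y (hψ y (List.mem_cons_self))
      refine ⟨i :: om, ?_, by simp [hlen], ?_⟩
      · intro b hb
        rcases List.mem_cons.mp hb with rfl | hb
        exacts [hi, hom b hb]
      · rw [cs.wordProd_cons, cs.wordProd_cons,
          h.mulSigma _ (Subgroup.subset_closure ⟨i, hi, rfl⟩)
            _ (word_mem_parab cs hom), hσi, hσ]
  obtain ⟨om, hom, hlen, hσ⟩ := haux ψ hψm
  have hinj : π om = x := by
    have hm1 : (π om : W) ∈ (parab cs I : Set W) := word_mem_parab cs hom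
    exact h.bijSigma.injOn hm1 hx (by rw [hσ, hp])
  have h1 : ℓ x = ℓ (π om) := by rw [hinj]
  have h2 : ℓ (π om) ≤ om.length := cs.length_wordProd_le om
  have h3 : ℓ (σ x) = ψ.length := by
    have h4 : ℓ (π ψ) = ψ.length := hred
    rw [hp] at h4
    exact h4
  omega

theorem sigma_len (h : GoodSetup cs I J K σ) {x : W} (hx : x ∈ parab cs I) :
    ℓ (σ x) = ℓ x :=
  le_antisymm (sigma_len_le cs h hx) (sigma_len_ge cs h hx)


end StmtAux

theorem statement_10 (cs : CoxeterSystem M W) (I J K : Set B) (σ : W → W)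
    (h : GoodSetup cs I J K σ) :
    Mset cs I J K σ ∩ (parab cs (I ∪ J ∪ K) : Set W) =
      {z : W | ∃ u ∈ parab cs I, ∃ v ∈ parab cs I,
        z = u * σ v ∧ cs.length (u * v⁻¹) = cs.length u + cs.length v} := by
  have hIL : parab cs I ≤ parab cs (I ∪ J ∪ K) :=
    StmtAux.parab_mono cs (fun b hb => Or.inl (Or.inl hb))
  have hJL : parab cs J ≤ parab cs (I ∪ J ∪ K) :=
    StmtAux.parab_mono cs (fun b hb => Or.inl (Or.inr hb))
  have hKL : parab cs K ≤ parab cs (I ∪ J ∪ K) :=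
    StmtAux.parab_mono cs (fun b hb => Or.inr hb)
  ext z
  simp only [Set.mem_inter_iff, Set.mem_setOf_eq, SetLike.mem_coe]
  constructor
  · rintro ⟨⟨w, hwmin, ⟨a, haK, x, hxI, hz⟩, hlen⟩, hzL⟩
    have hσx : σ x ∈ parab cs J := h.bijSigma.mapsTo hxI
    have hwL : w ∈ parab cs (I ∪ J ∪ K) := by
      have hrw : w = z * (σ x)⁻¹ * x⁻¹ * a⁻¹ := by rw [hz]; group
      rw [hrw]
      exact mul_mem (mul_mem (mul_mem hzL (inv_mem (hJL hσx))) (inv_mem (hIL hxI)))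
        (inv_mem (hKL haK))
    obtain ⟨p, q, r, hpI, hqJ, hrK, hw⟩ := StmtAux.decomp3 cs h hwL
    have hq1 : q = 1 := by
      by_contra hq0
      obtain ⟨j, hjJ, hjlt, hjmem⟩ := StmtAux.exists_right_descent_in cs hqJ hq0
      have e1 : w * cs.simple j = p * (q * cs.simple j) * r := by
        have hc : Commute (cs.simple j) r :=
          StmtAux.commute_parab cs h.commJK (Subgroup.subset_closure ⟨j, hjJ, rfl⟩) hrK
        calc w * cs.simple j = p * q * (r * cs.simple j) := by rw [hw]; group
          _ = p * q * (cs.simple j * r) := by rw [← hc.eq]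
          _ = p * (q * cs.simple j) * r := by group
      have e2 := StmtAux.len3 cs h hpI hjmem hrK
      have e3 := StmtAux.len3 cs h hpI hqJ hrK
      have hmin := hwmin j (Or.inl hjJ)
      rw [e1, e2] at hmin
      rw [← hw] at e3
      omega
    have hr1 : r = 1 := by
      by_contra hr0
      obtain ⟨k, hkK, hklt, hkmem⟩ := StmtAux.exists_right_descent_in cs hrK hr0
      have e1 : w * cs.simple k = p * q * (r * cs.simple k) := by rw [hw]; group
      have e2 := StmtAux.len3 cs h hpI hqJ hkmem
      have e3 := StmtAux.len3 cs h hpI hqJ hrK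
      have hmin := hwmin k (Or.inr hkK)
      rw [e1, e2] at hmin
      rw [← hw] at e3
      omega
    rw [hq1, hr1, mul_one, mul_one] at hw
    have hzeq : z = (p * x) * (σ x) * a := by
      have c1 : Commute x a := StmtAux.commute_parab cs h.commIK hxI haK
      have c2 : Commute (σ x) a := StmtAux.commute_parab cs h.commJK hσx haK
      calc z = p * (a * x) * σ x := by rw [hz, hw]; group
        _ = p * (x * a) * σ x := by rw [← c1.eq]
        _ = p * x * (a * σ x) := by group
        _ = p * x * (σ x * a) := by rw [← c2.eq]
        _ = (p * x) * (σ x) * a := by group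
    have hpx : p * x ∈ parab cs I := mul_mem hpI hxI
    have hlz := StmtAux.len3 cs h hpx hσx haK
    rw [← hzeq] at hlz
    have hσlen : cs.length (σ x) = cs.length x := StmtAux.sigma_len cs h hxI
    have hwp : cs.length z = cs.length p := by rw [hlen, hw]
    have htri : cs.length p ≤ cs.length (p * x) + cs.length x := by
      have h1 := cs.length_mul_le (p * x) x⁻¹
      have h2 : p * x * x⁻¹ = p := by group
      rw [h2, cs.length_inv] at h1
      exact h1
    have ha0 : cs.length a = 0 := by omega
    have ha1 : a = 1 := cs.length_eq_zero_iff.mp ha0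
    refine ⟨p * x, hpx, x, hxI, ?_, ?_⟩
    · rw [hzeq, ha1, mul_one]
    · have hpp : p * x * x⁻¹ = p := by group
      rw [hpp]
      omega
  · rintro ⟨u, huI, v, hvI, rfl, hluv⟩
    have hσv : σ v ∈ parab cs J := h.bijSigma.mapsTo hvI
    constructor
    · have hwI : u * v⁻¹ ∈ parab cs I := mul_mem huI (inv_mem hvI)
      refine ⟨u * v⁻¹, ?_, ⟨1, one_mem _, v, hvI, ?_⟩, ?_⟩
      · intro j hj
        rcases hj with hjJ | hjK
        · have hh := StmtAux.len2IJ cs h hwI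
            (Subgroup.subset_closure ⟨j, hjJ, rfl⟩)
          rw [cs.length_simple] at hh
          omega
        · have hh := StmtAux.len2IK cs h hwI
            (Subgroup.subset_closure ⟨j, hjK, rfl⟩)
          rw [cs.length_simple] at hh
          omega
      · rw [mul_one]; group
      · have h1 := StmtAux.len2IJ cs h huI hσv
        rw [StmtAux.sigma_len cs h hvI] at h1
        rw [h1, hluv]
    · exact mul_mem (hIL huI) (hJL hσv)

end BruhatSetup
end
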